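/- arXiv:1901.04066 — 12 statements merged into one kernel-verified Lean document; each statement's English description precedes it below -/
import Mathlib

section
/- Let I ⊆ ℝ be an open interval and r : I → ℝ a twice differentiable function with r(t) > 0 for all t ∈ I, satisfying the catenoid ODE 4·r(t)·r''(t) − 4·r'(t)² + r(t)⁴ − 1 = 0 on I. Then the function t ↦ (1 − r(t)²)²/(4·r(t)²) + (r'(t)/r(t))² is constant on I. -/
/-- The expression `(1 - r²)²/(4r²) + (r'/r)²` is a first integral of the catenoid ODE
`4 r r'' - 4 (r')² + r⁴ - 1 = 0` for a positive, twice differentiable profile `r` on an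
open interval `I`. -/
theorem firstIntegral_of_catenoid_ode
    (I : Set ℝ) (hIopen : IsOpen I) (hIconv : Convex ℝ I)
    (r r' r'' : ℝ → ℝ)
    (hr : ∀ t ∈ I, HasDerivAt r (r' t) t)
    (hr' : ∀ t ∈ I, HasDerivAt r' (r'' t) t)
    (hpos : ∀ t ∈ I, 0 < r t)
    (hode : ∀ t ∈ I, 4 * r t * r'' t - 4 * (r' t) ^ 2 + (r t) ^ 4 - 1 = 0) :
    ∀ s ∈ I, ∀ t ∈ I,
      (1 - (r s) ^ 2) ^ 2 / (4 * (r s) ^ 2) + (r' s / r s) ^ 2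
        = (1 - (r t) ^ 2) ^ 2 / (4 * (r t) ^ 2) + (r' t / r t) ^ 2 := by
  set F : ℝ → ℝ := fun x => (1 - (r x) ^ 2) ^ 2 / (4 * (r x) ^ 2) + (r' x / r x) ^ 2 with hF
  have key : ∀ t ∈ I, HasDerivAt F 0 t := by
    intro t ht
    have hrt := hr t ht
    have hr't := hr' t ht
    have hne : r t ≠ 0 := ne_of_gt (hpos t ht)
    have h2 : HasDerivAt (fun x => r x ^ 2) (2 * r t * r' t) t := by
      simpa [mul_comm, mul_assoc] using hrt.fun_pow 2
    have h3 : HasDerivAt (fun x => (1 - r x ^ 2) ^ 2)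
        (2 * (1 - r t ^ 2) * (-(2 * r t * r' t))) t := by
      have := ((h2.const_sub 1).fun_pow 2)
      simpa [mul_comm, mul_assoc] using this
    have h4 : HasDerivAt (fun x => 4 * r x ^ 2) (4 * (2 * r t * r' t)) t :=
      h2.const_mul 4
    have hden : 4 * r t ^ 2 ≠ 0 := by positivity
    have h5 := h3.fun_div h4 hden
    have h6 := hr't.fun_div hrt hne
    have h7 := h6.fun_pow 2
    have h8 : HasDerivAt (fun i => (1 - r i ^ 2) ^ 2 / (4 * r i ^ 2) + (r' i / r i) ^ 2)
        ((2 * (1 - r t ^ 2) * -(2 * r t * r' t) * (4 * r t ^ 2) - (1 - r t ^ 2) ^ 2 * (4 * (2 * r t * r' t))) /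
          (4 * r t ^ 2) ^ 2 +
          ((2 : ℕ) : ℝ) * (r' t / r t) ^ (2 - 1) * ((r'' t * r t - r' t * r' t) / r t ^ 2)) t :=
      h5.fun_add h7
    have hodet := hode t ht
    convert h8 using 1
    norm_num only [pow_one]
    field_simp
    ring_nf
    linear_combination (-(2 * r' t)) * hodet
  intro s hs t ht
  have hdiff : DifferentiableOn ℝ F I := fun x hx =>
    (key x hx).differentiableAt.differentiableWithinAt
  have hzero : ∀ x ∈ I, fderivWithin ℝ F I x = 0 := by
    intro x hx
    have h := (key x hx).hasFDerivAt.hasFDerivWithinAt.fderivWithin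
      (hIopen.uniqueDiffOn x hx)
    rw [h]
    ext y
    simp
  exact hIconv.is_const_of_fderivWithin_eq_zero hdiff hzero hs ht
end

section
/- For every κ > 0 there exist T > 0 and a nonconstant, T-periodic, twice continuously differentiable function r : ℝ → ℝ with r(t) > 0 for all t, such that 4·r·r'' − 4·(r')² + r⁴ − 1 = 0 on ℝ, the first integral (1−r²)²/(4r²) + (r'/r)² is identically equal to κ², and the minimum value of r equals √(κ²+1) − κ while the maximum value of r equals √(κ²+1) + κ. -/
open Real Set Filter intervalIntegral

/-- Inverse of the primitive of a `C¹` function bounded below by a positive constant. -/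
lemma catenoid_inverse_of_integral (f : ℝ → ℝ) (c : ℝ) (hc : 0 < c)
    (hf : ContDiff ℝ 1 f) (hlb : ∀ x, c ≤ f x) :
    ∃ H : ℝ → ℝ, ContDiff ℝ 2 H ∧ (∀ x, HasDerivAt H (f (H x))⁻¹ x) ∧
      (∀ x, (∫ s in (0:ℝ)..(H x), f s) = x) ∧ (∀ y, H (∫ s in (0:ℝ)..y, f s) = y) := by
  have hfc : Continuous f := hf.continuous
  have hfpos : ∀ x, 0 < f x := fun x => lt_of_lt_of_le hc (hlb x)
  set G : ℝ → ℝ := fun x => ∫ s in (0:ℝ)..x, f s with hG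
  have hGderiv : ∀ x, HasDerivAt G (f x) x := fun x =>
    (hfc.integral_hasStrictDerivAt 0 x).hasDerivAt
  have hGcont : Continuous G := by
    have : Differentiable ℝ G := fun x => (hGderiv x).differentiableAt
    exact this.continuous
  have hint : ∀ x y : ℝ, IntervalIntegrable f MeasureTheory.volume x y := fun x y =>
    hfc.intervalIntegrable x y
  have hlow : ∀ x y : ℝ, x ≤ y → c * (y - x) ≤ ∫ s in x..y, f s := by
    intro x y hxy
    have h1 : (∫ s in x..y, (fun _ => c) s) ≤ ∫ s in x..y, f s :=
      intervalIntegral.integral_mono_on hxy (intervalIntegrable_const) (hint x y)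
        (fun s _ => hlb s)
    simpa [mul_comm] using h1
  have hGadd : ∀ x y : ℝ, G y = G x + ∫ s in x..y, f s := by
    intro x y
    rw [hG]
    exact (intervalIntegral.integral_add_adjacent_intervals (hint 0 x) (hint x y)).symm
  have hmono : StrictMono G := by
    intro x y hxy
    have := hlow x y hxy.le
    have hpos : 0 < c * (y - x) := mul_pos hc (by linarith)
    have := hGadd x y
    linarith
  have hsurj : Function.Surjective G := by
    have h0 : G 0 = 0 := by simp [hG]
    apply hGcont.surjective
    · apply tendsto_atTop_mono' atTop (f₁ := fun x => c * x)
      · filter_upwards [eventually_ge_atTop (0:ℝ)] with x hx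
        have h1 := hlow 0 x hx
        have h2 : G x = G 0 + ∫ s in (0:ℝ)..x, f s := hGadd 0 x
        rw [h0, zero_add] at h2
        rw [h2]; linarith
      · simpa using Tendsto.const_mul_atTop hc (tendsto_id (α := ℝ))
    · apply tendsto_atBot_mono' atBot (f₁ := fun x => c * x)
      · filter_upwards [eventually_le_atBot (0:ℝ)] with x hx
        have h1 := hlow x 0 hx
        have h2 : G 0 = G x + ∫ s in x..(0:ℝ), f s := hGadd x 0
        rw [h0] at h2
        show G x ≤ c * x
        linarith
      · simpa using Tendsto.const_mul_atBot hc (tendsto_id (α := ℝ))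
  set e := StrictMono.orderIsoOfSurjective G hmono hsurj with he
  have hecoe : (e : ℝ → ℝ) = G := StrictMono.coe_orderIsoOfSurjective G hmono hsurj
  set H : ℝ → ℝ := fun y => e.symm y with hH
  have hHcont : Continuous H := e.symm.continuous
  have hGH : ∀ x, G (H x) = x := by
    intro x
    have := e.apply_symm_apply x
    rwa [← hecoe]
  have hHG : ∀ y, H (G y) = y := by
    intro y
    have : e.symm (e y) = y := e.symm_apply_apply y
    rwa [hecoe] at this
  have hHderiv : ∀ x, HasDerivAt H (f (H x))⁻¹ x := fun x =>
    HasDerivAt.of_local_left_inverse hHcont.continuousAt (hGderiv (H x)) (hfpos _).ne'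
      (Eventually.of_forall hGH)
  have hHdiff : Differentiable ℝ H := fun x => (hHderiv x).differentiableAt
  have hderivH : deriv H = fun x => (f (H x))⁻¹ := funext fun x => (hHderiv x).deriv
  have hH1 : ContDiff ℝ 1 H := by
    rw [contDiff_one_iff_deriv]
    refine ⟨hHdiff, ?_⟩
    rw [hderivH]
    exact (hfc.comp hHcont).inv₀ fun x => (hfpos _).ne'
  have hH2 : ContDiff ℝ 2 H := by
    have h21 : (2 : WithTop ℕ∞) = 1 + 1 := by norm_num
    rw [h21, contDiff_succ_iff_deriv]
    refine ⟨hHdiff, by simp, ?_⟩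
    rw [hderivH]
    exact ((hf.comp hH1).inv fun x => (hfpos _).ne')
  exact ⟨H, hH2, hHderiv, hGH, hHG⟩


/-- For every `κ > 0` there is a positive period `T` and a nonconstant, `T`-periodic,
positive `C²` solution `r : ℝ → ℝ` of the catenoid ODE `4 r r'' - 4 (r')² + r⁴ - 1 = 0`
whose first integral `(1-r²)²/(4r²) + (r'/r)²` is identically `κ²`, and which oscillates
exactly between `√(κ²+1) - κ` and `√(κ²+1) + κ`. -/
theorem exists_periodic_catenoid_profile (κ : ℝ) (hκ : 0 < κ) :
    ∃ (T : ℝ) (r : ℝ → ℝ), 0 < T ∧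
      ContDiff ℝ 2 r ∧
      Function.Periodic r T ∧
      (∃ s t : ℝ, r s ≠ r t) ∧
      (∀ t, 0 < r t) ∧
      (∀ t, 4 * r t * deriv (deriv r) t - 4 * (deriv r t) ^ 2 + (r t) ^ 4 - 1 = 0) ∧
      (∀ t, (1 - (r t) ^ 2) ^ 2 / (4 * (r t) ^ 2) + (deriv r t / r t) ^ 2 = κ ^ 2) ∧
      (∀ t, Real.sqrt (κ ^ 2 + 1) - κ ≤ r t) ∧
      (∃ t, r t = Real.sqrt (κ ^ 2 + 1) - κ) ∧
      (∀ t, r t ≤ Real.sqrt (κ ^ 2 + 1) + κ) ∧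
      (∃ t, r t = Real.sqrt (κ ^ 2 + 1) + κ) := by
  have hL2 : Real.sqrt (κ ^ 2 + 1) ^ 2 = κ ^ 2 + 1 := Real.sq_sqrt (by positivity)
  have hLnn : 0 ≤ Real.sqrt (κ ^ 2 + 1) := Real.sqrt_nonneg _
  set L := Real.sqrt (κ ^ 2 + 1) with hLdef
  have hκL : κ < L := by nlinarith
  have hLpos : 0 < L := lt_of_le_of_lt hκ.le hκL
  have hapos : 0 < L - κ := by linarith
  have hbpos : 0 < L + κ := by linarith
  set w : ℝ → ℝ := fun θ => (L - κ) ^ 2 + ((L + κ) ^ 2 - (L - κ) ^ 2) * Real.sin θ ^ 2 with hw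
  have hDpos : 0 < (L + κ) ^ 2 - (L - κ) ^ 2 := by nlinarith
  have hwx : ∀ θ, w θ = (L - κ) ^ 2 + ((L + κ) ^ 2 - (L - κ) ^ 2) * Real.sin θ ^ 2 :=
    fun θ => by simp only [hw]
  have hwlb : ∀ θ, (L - κ) ^ 2 ≤ w θ := by
    intro θ; rw [hwx]; nlinarith [sq_nonneg (Real.sin θ)]
  have hwub : ∀ θ, w θ ≤ (L + κ) ^ 2 := by
    intro θ; rw [hwx]; nlinarith [Real.sin_sq_le_one θ]
  have hwpos : ∀ θ, 0 < w θ := fun θ => lt_of_lt_of_le (by positivity) (hwlb θ)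
  have hwC : ContDiff ℝ 2 w := by
    rw [hw]
    exact contDiff_const.add (contDiff_const.mul (Real.contDiff_sin.pow 2))
  have hsqwC : ContDiff ℝ 2 (fun θ => Real.sqrt (w θ)) := by
    rw [contDiff_iff_contDiffAt]
    intro θ
    exact (Real.contDiffAt_sqrt (hwpos θ).ne').comp θ hwC.contDiffAt
  set f : ℝ → ℝ := fun θ => 2 / Real.sqrt (w θ) with hfdef
  have hsqw : ∀ θ, 0 < Real.sqrt (w θ) := fun θ => Real.sqrt_pos.2 (hwpos θ)
  have hfC : ContDiff ℝ 1 f := by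
    rw [hfdef]
    exact contDiff_const.div (hsqwC.of_le (by norm_num)) (fun θ => (hsqw θ).ne')
  have hsqwub : ∀ θ, Real.sqrt (w θ) ≤ L + κ := by
    intro θ
    have := Real.sqrt_le_sqrt (hwub θ)
    rwa [Real.sqrt_sq hbpos.le] at this
  have hflb : ∀ θ, 2 / (L + κ) ≤ f θ := by
    intro θ
    simp only [hfdef]
    gcongr
    exact hsqwub θ
  obtain ⟨H, hH2, hHder, hGH, hHG⟩ :=
    catenoid_inverse_of_integral f (2 / (L + κ)) (by positivity) hfC hflb
  have hHd : ∀ t, HasDerivAt H (Real.sqrt (w (H t)) / 2) t := by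
    intro t
    have h := hHder t
    have : (f (H t))⁻¹ = Real.sqrt (w (H t)) / 2 := by simp only [hfdef]; rw [inv_div]
    rwa [this] at h
  set r : ℝ → ℝ := fun t => Real.sqrt (w (H t)) with hrdef
  have hrpos : ∀ t, 0 < r t := fun t => hsqw (H t)
  have hR2 : ∀ t, r t ^ 2 = (L - κ) ^ 2 + ((L + κ) ^ 2 - (L - κ) ^ 2) * Real.sin (H t) ^ 2 :=
    fun t => (Real.sq_sqrt (hwpos (H t)).le).trans (hwx (H t))
  -- derivative of w
  have hwd : ∀ θ, HasDerivAt w (((L + κ) ^ 2 - (L - κ) ^ 2) * (2 * Real.sin θ * Real.cos θ)) θ := by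
    intro θ
    have h1 : HasDerivAt (fun x => Real.sin x ^ 2) ((2 : ℕ) * Real.sin θ ^ 1 * Real.cos θ) θ :=
      (Real.hasDerivAt_sin θ).pow 2
    have h2 := (h1.const_mul ((L + κ) ^ 2 - (L - κ) ^ 2)).const_add ((L - κ) ^ 2)
    refine h2.congr_deriv ?_
    push_cast
    ring
  -- first derivative of r
  have hrd : ∀ t, HasDerivAt r
      (((L + κ) ^ 2 - (L - κ) ^ 2) / 2 * (Real.sin (H t) * Real.cos (H t))) t := by
    intro t
    have h1 : HasDerivAt (fun u => w (H u))
        ((((L + κ) ^ 2 - (L - κ) ^ 2) * (2 * Real.sin (H t) * Real.cos (H t)))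
          * (Real.sqrt (w (H t)) / 2)) t :=
      (hwd (H t)).comp t (hHd t)
    have h2 := (Real.hasDerivAt_sqrt (hwpos (H t)).ne').comp t h1
    refine h2.congr_deriv ?_
    have hs := (hsqw (H t)).ne'
    field_simp
  have hderivr : deriv r = fun t =>
      ((L + κ) ^ 2 - (L - κ) ^ 2) / 2 * (Real.sin (H t) * Real.cos (H t)) :=
    funext fun t => (hrd t).deriv
  -- second derivative of r
  have hrdd : ∀ t, HasDerivAt (deriv r)
      (((L + κ) ^ 2 - (L - κ) ^ 2) / 2 *
        ((Real.cos (H t) ^ 2 - Real.sin (H t) ^ 2) * (Real.sqrt (w (H t)) / 2))) t := by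
    intro t
    rw [hderivr]
    have h1 : HasDerivAt (fun u => Real.sin (H u)) (Real.cos (H t) * (Real.sqrt (w (H t)) / 2)) t :=
      (Real.hasDerivAt_sin (H t)).comp t (hHd t)
    have h2 : HasDerivAt (fun u => Real.cos (H u))
        (-Real.sin (H t) * (Real.sqrt (w (H t)) / 2)) t :=
      (Real.hasDerivAt_cos (H t)).comp t (hHd t)
    have h3 := (h1.mul h2).const_mul (((L + κ) ^ 2 - (L - κ) ^ 2) / 2)
    refine h3.congr_deriv ?_
    ring
  have hrC2 : ContDiff ℝ 2 r := by
    rw [hrdef, contDiff_iff_contDiffAt]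
    intro t
    exact (Real.contDiffAt_sqrt (hwpos (H t)).ne').comp t (hwC.contDiffAt.comp t hH2.contDiffAt)
  -- periodicity
  have hint : ∀ x y : ℝ, IntervalIntegrable f MeasureTheory.volume x y := fun x y =>
    hfC.continuous.intervalIntegrable x y
  set T : ℝ := ∫ s in (0:ℝ)..π, f s with hTdef
  have hTpos : 0 < T := by
    have h1 : (∫ s in (0:ℝ)..π, (fun _ => 2 / (L + κ)) s) ≤ ∫ s in (0:ℝ)..π, f s :=
      intervalIntegral.integral_mono_on Real.pi_pos.le intervalIntegrable_const (hint 0 π)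
        (fun s _ => hflb s)
    have h2 : (∫ s in (0:ℝ)..π, (fun _ => 2 / (L + κ)) s) = π * (2 / (L + κ)) := by simp; ring
    have h3 : 0 < π * (2 / (L + κ)) := by positivity
    rw [hTdef]
    linarith [h1, h2 ▸ h1]
  have hwper : ∀ θ, w (θ + π) = w θ := by
    intro θ
    rw [hwx, hwx, Real.sin_add_pi]
    ring
  have hfper : Function.Periodic f π := by
    intro θ
    simp only [hfdef]
    rw [hwper]
  have hHshift : ∀ t, H (t + T) = H t + π := by
    intro t
    have h2 : (∫ s in (H t)..(H t + π), f s) = ∫ s in (0:ℝ)..(0 + π), f s :=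
      hfper.intervalIntegral_add_eq (H t) 0
    have h1 : (∫ s in (0:ℝ)..(H t + π), f s) = t + T := by
      rw [← intervalIntegral.integral_add_adjacent_intervals (hint 0 (H t))
        (hint (H t) (H t + π)), hGH t, h2, zero_add, hTdef]
    calc H (t + T) = H (∫ s in (0:ℝ)..(H t + π), f s) := by rw [h1]
      _ = H t + π := hHG (H t + π)
  have hrper : Function.Periodic r T := by
    intro t
    simp only [hrdef]
    rw [hHshift t, hwper]
  -- special values
  have hH0 : H 0 = 0 := by
    have h0 : (∫ s in (0:ℝ)..(0:ℝ), f s) = 0 := intervalIntegral.integral_same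
    calc H 0 = H (∫ s in (0:ℝ)..(0:ℝ), f s) := by rw [h0]
      _ = 0 := hHG 0
  have hr0 : r 0 = L - κ := by
    simp only [hrdef]
    rw [hH0, hwx]
    simp only [Real.sin_zero]
    rw [show (L - κ) ^ 2 + ((L + κ) ^ 2 - (L - κ) ^ 2) * 0 ^ 2 = (L - κ) ^ 2 by ring]
    exact Real.sqrt_sq hapos.le
  have hrmax : r (∫ s in (0:ℝ)..(π/2), f s) = L + κ := by
    simp only [hrdef]
    rw [hHG (π/2), hwx]
    simp only [Real.sin_pi_div_two]
    rw [show (L - κ) ^ 2 + ((L + κ) ^ 2 - (L - κ) ^ 2) * 1 ^ 2 = (L + κ) ^ 2 by ring]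
    exact Real.sqrt_sq hbpos.le
  have hlb : ∀ t, L - κ ≤ r t := by
    intro t
    have := Real.sqrt_le_sqrt (hwlb (H t))
    rwa [Real.sqrt_sq hapos.le] at this
  have hub : ∀ t, r t ≤ L + κ := by
    intro t
    have := Real.sqrt_le_sqrt (hwub (H t))
    rwa [Real.sqrt_sq hbpos.le] at this
  refine ⟨T, r, hTpos, hrC2, hrper, ⟨0, ∫ s in (0:ℝ)..(π/2), f s, ?_⟩, hrpos, ?_, ?_, hlb,
    ⟨0, hr0⟩, hub, ⟨_, hrmax⟩⟩
  · rw [hr0, hrmax]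
    intro h
    nlinarith
  · -- ODE
    intro t
    have e1 : deriv r t = ((L + κ) ^ 2 - (L - κ) ^ 2) / 2 * (Real.sin (H t) * Real.cos (H t)) :=
      (hrd t).deriv
    have e2 := (hrdd t).deriv
    have hSC : Real.sin (H t) ^ 2 + Real.cos (H t) ^ 2 = 1 := Real.sin_sq_add_cos_sq (H t)
    have hRR : r t = Real.sqrt (w (H t)) := rfl
    rw [e1, e2, ← hRR]
    linear_combination (r t ^ 2 - ((L + κ) ^ 2 - (L - κ) ^ 2) * Real.sin (H t) ^ 2 + (L + κ) ^ 2)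
        * hR2 t
      + (((L + κ) ^ 2 - (L - κ) ^ 2) * r t ^ 2
          - ((L + κ) ^ 2 - (L - κ) ^ 2) ^ 2 * Real.sin (H t) ^ 2) * hSC
      + (L ^ 2 - κ ^ 2 + 1) * hL2
  · -- first integral
    intro t
    have e1 : deriv r t = ((L + κ) ^ 2 - (L - κ) ^ 2) / 2 * (Real.sin (H t) * Real.cos (H t)) :=
      (hrd t).deriv
    have hSC : Real.sin (H t) ^ 2 + Real.cos (H t) ^ 2 = 1 := Real.sin_sq_add_cos_sq (H t)
    have key : (1 - r t ^ 2) ^ 2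
        + 4 * (((L + κ) ^ 2 - (L - κ) ^ 2) / 2 * (Real.sin (H t) * Real.cos (H t))) ^ 2
        = 4 * κ ^ 2 * r t ^ 2 := by
      linear_combination (r t ^ 2 - (2 + 4 * κ ^ 2) + (L - κ) ^ 2
            + ((L + κ) ^ 2 - (L - κ) ^ 2) * Real.sin (H t) ^ 2) * hR2 t
        + (((L + κ) ^ 2 - (L - κ) ^ 2) ^ 2 * Real.sin (H t) ^ 2) * hSC
        + (2 * (L - κ) ^ 2 + 2 * ((L + κ) ^ 2 - (L - κ) ^ 2) * Real.sin (H t) ^ 2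
            - L ^ 2 + κ ^ 2 - 1) * hL2
    rw [e1]
    have hrne := (hrpos t).ne'
    have h1 : (1 - r t ^ 2) ^ 2 / (4 * r t ^ 2)
        + (((L + κ) ^ 2 - (L - κ) ^ 2) / 2 * (Real.sin (H t) * Real.cos (H t)) / r t) ^ 2
        = ((1 - r t ^ 2) ^ 2
            + 4 * (((L + κ) ^ 2 - (L - κ) ^ 2) / 2 * (Real.sin (H t) * Real.cos (H t))) ^ 2)
          / (4 * r t ^ 2) := by
      field_simp
    rw [h1, key]
    field_simp
end

section
/- Let κ > 0 and let r : I → (0,1) be a twice differentiable function on an open interval I satisfying (1−r(t)²)²/(4r(t)²) + (r'(t)/r(t))² = κ² on I. Define F : ℝ × I → ℂ by F(θ,t) = r(t)·e^{iκθ}. Then for all (θ,t) ∈ ℝ × I one has ∂²F/∂θ² + ∂²F/∂t² + (2·conj(F)/(1−|F|²))·((∂F/∂θ)² + (∂F/∂t)²) = e^{iκθ}·(4·r(t)·r''(t) − 4·r'(t)² + r(t)⁴ − 1)/(4·r(t)). In particular, F satisfies the harmonic map equation into the Poincaré disk (i.e., the left-hand side vanishes identically) if and only if 4 r r'' − 4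 (r')² + r⁴ − 1 = 0 on I. -/
open Complex

private lemma abs_exp_Imul (κ θ : ℝ) :
    ‖Complex.exp (Complex.I * (κ:ℂ) * (θ:ℂ))‖ = 1 := by
  rw [Complex.norm_exp]
  norm_num [Complex.mul_re, Complex.mul_im]

private lemma dtheta (c : ℂ) (κ θ : ℝ) :
    HasDerivAt (fun b : ℝ => c * Complex.exp (Complex.I * (κ:ℂ) * (b:ℂ)))
      (c * (Complex.I * κ) * Complex.exp (Complex.I * (κ:ℂ) * (θ:ℂ))) θ := by
  have h1 : HasDerivAt (fun b : ℝ => Complex.I * (κ:ℂ) * (b:ℂ)) (Complex.I * κ) θ := by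
    simpa using (Complex.ofRealCLM.hasDerivAt (x := θ)).const_mul (Complex.I * (κ:ℂ))
  have := (h1.cexp).const_mul c
  exact this.congr_deriv (by ring)

private lemma key_real (R R' R'' κ : ℝ) (h0 : 0 < R) (h1 : R < 1)
    (hfi : (1 - R ^ 2) ^ 2 / (4 * R ^ 2) + (R' / R) ^ 2 = κ ^ 2) :
    R * (-κ ^ 2) + R'' + 2 * R * (R' ^ 2 - κ ^ 2 * R ^ 2) / (1 - R ^ 2)
      = (4 * R * R'' - 4 * R' ^ 2 + R ^ 4 - 1) / (4 * R) := by
  have hR : R ≠ 0 := ne_of_gt h0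
  have hR2 : 1 - R ^ 2 ≠ 0 := by nlinarith
  rw [← hfi]
  field_simp
  ring

/-- For `F(θ,t) = r(t) e^{iκθ}` with `0 < r < 1` satisfying the first-integral relation
`(1-r²)²/(4r²) + (r'/r)² = κ²`, the harmonic-map expression
`F_{θθ} + F_{tt} + (2 conj F/(1-|F|²))((F_θ)² + (F_t)²)` equals
`e^{iκθ} (4 r r'' - 4 (r')² + r⁴ - 1)/(4r)`; in particular `F` is a harmonic map into the
Poincaré disk iff `r` satisfies the catenoid ODE. -/
theorem harmonic_map_equation_of_catenoid
    (κ : ℝ) (hκ : 0 < κ) (I : Set ℝ) (hIopen : IsOpen I)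
    (r r' r'' : ℝ → ℝ)
    (hr01 : ∀ t ∈ I, r t ∈ Set.Ioo (0 : ℝ) 1)
    (hr : ∀ t ∈ I, HasDerivAt r (r' t) t)
    (hr' : ∀ t ∈ I, HasDerivAt r' (r'' t) t)
    (hfi : ∀ t ∈ I,
      (1 - (r t) ^ 2) ^ 2 / (4 * (r t) ^ 2) + (r' t / r t) ^ 2 = κ ^ 2)
    (F : ℝ → ℝ → ℂ)
    (hF : ∀ θ t, F θ t = (r t : ℂ) * Complex.exp (Complex.I * (κ : ℂ) * (θ : ℂ))) :
    (∀ θ : ℝ, ∀ t ∈ I,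
      deriv (fun a => deriv (fun b => F b t) a) θ
        + deriv (fun a => deriv (fun b => F θ b) a) t
        + (2 * (starRingEnd ℂ) (F θ t) / (1 - ((‖F θ t‖ : ℝ) : ℂ) ^ 2)) *
            ((deriv (fun b => F b t) θ) ^ 2 + (deriv (fun b => F θ b) t) ^ 2)
      = Complex.exp (Complex.I * (κ : ℂ) * (θ : ℂ)) *
          (((4 * r t * r'' t - 4 * (r' t) ^ 2 + (r t) ^ 4 - 1) / (4 * r t) : ℝ) : ℂ)) ∧
    ((∀ θ : ℝ, ∀ t ∈ I,
      deriv (fun a => deriv (fun b => F b t) a) θ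
        + deriv (fun a => deriv (fun b => F θ b) a) t
        + (2 * (starRingEnd ℂ) (F θ t) / (1 - ((‖F θ t‖ : ℝ) : ℂ) ^ 2)) *
            ((deriv (fun b => F b t) θ) ^ 2 + (deriv (fun b => F θ b) t) ^ 2) = 0)
      ↔ (∀ t ∈ I, 4 * r t * r'' t - 4 * (r' t) ^ 2 + (r t) ^ 4 - 1 = 0)) := by
  have key : ∀ θ : ℝ, ∀ t ∈ I,
      deriv (fun a => deriv (fun b => F b t) a) θ
        + deriv (fun a => deriv (fun b => F θ b) a) t
        + (2 * (starRingEnd ℂ) (F θ t) / (1 - ((‖F θ t‖ : ℝ) : ℂ) ^ 2)) *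
            ((deriv (fun b => F b t) θ) ^ 2 + (deriv (fun b => F θ b) t) ^ 2)
      = Complex.exp (Complex.I * (κ : ℂ) * (θ : ℂ)) *
          (((4 * r t * r'' t - 4 * (r' t) ^ 2 + (r t) ^ 4 - 1) / (4 * r t) : ℝ) : ℂ) := by
    intro θ t ht
    obtain ⟨h0, h1⟩ := hr01 t ht
    set e := Complex.exp (Complex.I * (κ:ℂ) * (θ:ℂ)) with he
    -- θ-derivatives
    have hfθ : (fun b => F b t) = fun b : ℝ => (r t : ℂ) * Complex.exp (Complex.I * (κ:ℂ) * (b:ℂ)) :=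
      funext fun b => hF b t
    have hDθ : ∀ a : ℝ, deriv (fun b => F b t) a
        = (r t : ℂ) * (Complex.I * κ) * Complex.exp (Complex.I * (κ:ℂ) * (a:ℂ)) := by
      intro a; rw [hfθ]; exact (dtheta _ κ a).deriv
    have hDθθ : deriv (fun a => deriv (fun b => F b t) a) θ
        = (r t : ℂ) * (Complex.I * κ) * (Complex.I * κ) * e := by
      have : (fun a => deriv (fun b => F b t) a)
          = fun a : ℝ => ((r t : ℂ) * (Complex.I * κ)) * Complex.exp (Complex.I * (κ:ℂ) * (a:ℂ)) :=
        funext hDθ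
      rw [this]
      rw [(dtheta ((r t : ℂ) * (Complex.I * κ)) κ θ).deriv]
    -- t-derivatives
    have hDt : ∀ a ∈ I, deriv (fun b => F θ b) a = (r' a : ℂ) * e := by
      intro a ha
      have : HasDerivAt (fun b => F θ b) ((r' a : ℂ) * e) a := by
        have h2 : HasDerivAt (fun b : ℝ => ((r b : ℝ) : ℂ) * e) ((r' a : ℂ) * e) a :=
          ((hr a ha).ofReal_comp).mul_const e
        have : (fun b => F θ b) = fun b : ℝ => ((r b : ℝ) : ℂ) * e :=
          funext fun b => hF θ b
        rw [this]; exact h2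
      exact this.deriv
    have hDtt : deriv (fun a => deriv (fun b => F θ b) a) t = (r'' t : ℂ) * e := by
      have hev : (fun a => deriv (fun b => F θ b) a) =ᶠ[nhds t] fun a : ℝ => (r' a : ℂ) * e := by
        filter_upwards [hIopen.mem_nhds ht] with a ha using hDt a ha
      rw [hev.deriv_eq]
      exact (((hr' t ht).ofReal_comp).mul_const e).deriv
    -- abs and conj
    have habs : ‖F θ t‖ = r t := by
      rw [hF θ t, norm_mul, Complex.norm_real, ← he, abs_exp_Imul, mul_one, Real.norm_eq_abs, abs_of_pos h0]
    have hc : (starRingEnd ℂ) e * e ^ 2 = e := by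
      have h1 : (starRingEnd ℂ) e * e = 1 := by
        rw [mul_comm, Complex.mul_conj, Complex.normSq_eq_norm_sq, he, abs_exp_Imul]
        norm_num
      calc (starRingEnd ℂ) e * e ^ 2 = ((starRingEnd ℂ) e * e) * e := by ring
        _ = e := by rw [h1, one_mul]
    rw [hDθθ, hDtt, hDt t ht, hDθ θ, ← he, habs, hF θ t, ← he, map_mul, Complex.conj_ofReal]
    have hkr := key_real (r t) (r' t) (r'' t) κ h0 h1 (hfi t ht)
    rw [← hkr]
    push_cast
    linear_combination (2 * ((r t : ℝ) : ℂ) / (1 - ((r t : ℝ) : ℂ) ^ 2) *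
        ((((r t : ℝ) : ℂ) * (Complex.I * (κ : ℂ))) ^ 2 + ((r' t : ℝ) : ℂ) ^ 2)) * hc
      + (e * ((r t : ℝ) : ℂ) * ((κ : ℝ) : ℂ) ^ 2 *
          (1 + 2 * ((r t : ℝ) : ℂ) ^ 2 / (1 - ((r t : ℝ) : ℂ) ^ 2))) * Complex.I_sq
  refine ⟨key, ?_, ?_⟩
  · intro h t ht
    have := key 0 t ht
    rw [h 0 t ht] at this
    have he : Complex.exp (Complex.I * (κ:ℂ) * ((0:ℝ):ℂ)) ≠ 0 := Complex.exp_ne_zero _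
    have h2 : (((4 * r t * r'' t - 4 * (r' t) ^ 2 + (r t) ^ 4 - 1) / (4 * r t) : ℝ) : ℂ) = 0 := by
      rcases mul_eq_zero.mp this.symm with h' | h'
      · exact absurd h' he
      · exact h'
    have h3 : (4 * r t * r'' t - 4 * (r' t) ^ 2 + (r t) ^ 4 - 1) / (4 * r t) = 0 := by
      exact_mod_cast h2
    have h0 := (hr01 t ht).1
    have : (4 : ℝ) * r t ≠ 0 := by positivity
    field_simp at h3
    linarith [h3]
  · intro h θ t ht
    rw [key θ t ht, h t ht]
    simp
end

section
/- For κ > 0 let r₀(κ) = √(κ²+1) − κ and H(κ) = ∫_{r₀(κ)}^{1} 2/√(4κ²u² − (1−u²)²) du. Then for every κ > 0 the integrand is well defined and positive on (r₀(κ),1) and the integral converges; the function H is strictly decreasing on (0,∞); H(κ) → π/2 as κ → 0⁺; and H(κ) → 0 as κ → ∞. (Consequently the height h(κ) = 2H(κ) of the catenoid 𝒞_κ decreases monotonically from π to 0 as κ increases from 0 to ∞.) -/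
open MeasureTheory Filter Set Real Topology

namespace CatenoidAux

noncomputable def A (κ t : ℝ) : ℝ := Real.sqrt (κ ^ 2 + Real.cosh t ^ 2)
noncomputable def φ (κ t : ℝ) : ℝ := Real.cosh t / (κ + A κ t)
noncomputable def φ' (κ t : ℝ) : ℝ := Real.sinh t * κ / (A κ t * (κ + A κ t))

variable {κ t : ℝ}

lemma inner_pos (κ t : ℝ) : 0 < κ ^ 2 + Real.cosh t ^ 2 :=
  add_pos_of_nonneg_of_pos (sq_nonneg _) (pow_pos (Real.cosh_pos t) 2)

lemma A_pos (κ t : ℝ) : 0 < A κ t := Real.sqrt_pos.2 (inner_pos κ t)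

lemma A_sq (κ t : ℝ) : A κ t ^ 2 = κ ^ 2 + Real.cosh t ^ 2 :=
  Real.sq_sqrt (inner_pos κ t).le

lemma cosh_le_A (κ t : ℝ) : Real.cosh t ≤ A κ t := by
  have : Real.cosh t = Real.sqrt (Real.cosh t ^ 2) := (Real.sqrt_sq (Real.cosh_pos t).le).symm
  rw [this, A]
  exact Real.sqrt_le_sqrt (by nlinarith [sq_nonneg κ])

lemma denom_pos (hκ : 0 < κ) (t : ℝ) : 0 < κ + A κ t := by
  have := A_pos κ t; linarith

lemma A_cont (κ : ℝ) : Continuous (A κ) :=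
  (continuous_const.add (Real.continuous_cosh.pow 2)).sqrt

lemma φ_cont (hκ : 0 < κ) : Continuous (φ κ) :=
  Real.continuous_cosh.div (continuous_const.add (A_cont κ))
    (fun t => (denom_pos hκ t).ne')

lemma A_hasDeriv (κ t : ℝ) :
    HasDerivAt (A κ) (Real.cosh t * Real.sinh t / A κ t) t := by
  have h1 : HasDerivAt (fun t => κ ^ 2 + Real.cosh t ^ 2)
      (2 * Real.cosh t ^ 1 * Real.sinh t) t :=
    (((Real.hasDerivAt_cosh t).pow 2)).const_add (κ ^ 2)
  have h2 : HasDerivAt (A κ) (2 * Real.cosh t ^ 1 * Real.sinh t / (2 * A κ t)) t :=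
    h1.sqrt (ne_of_gt (inner_pos κ t))
  convert h2 using 1
  have hA := (A_pos κ t).ne'
  rw [div_eq_div_iff hA (mul_ne_zero two_ne_zero hA)]
  ring

lemma φ_hasDeriv (hκ : 0 < κ) (t : ℝ) : HasDerivAt (φ κ) (φ' κ t) t := by
  have h : HasDerivAt (φ κ) _ t := ((Real.hasDerivAt_cosh t).div
    ((A_hasDeriv κ t).const_add κ) (denom_pos hκ t).ne')
  convert h using 1
  have hA := A_pos κ t
  have hA2 := A_sq κ t
  have hd := denom_pos hκ t
  rw [φ']
  field_simp
  linear_combination (-(Real.sinh t)) * hA2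

lemma φ_lt_one (hκ : 0 < κ) (t : ℝ) : φ κ t < 1 := by
  rw [φ, div_lt_one (denom_pos hκ t)]
  have := cosh_le_A κ t
  linarith

lemma φ_zero (hκ : 0 < κ) : φ κ 0 = Real.sqrt (κ ^ 2 + 1) - κ := by
  have hS : Real.sqrt (κ ^ 2 + 1) ^ 2 = κ ^ 2 + 1 := Real.sq_sqrt (by positivity)
  have hS0 : 0 < Real.sqrt (κ ^ 2 + 1) := Real.sqrt_pos.2 (by positivity)
  have hA0 : A κ 0 = Real.sqrt (κ ^ 2 + 1) := by simp [A]
  rw [φ, hA0, Real.cosh_zero]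
  rw [div_eq_iff (by positivity)]
  nlinarith

lemma cosh_tendsto_atTop : Tendsto Real.cosh atTop atTop := by
  apply tendsto_atTop_mono (fun t => ?_)
    ((Real.tendsto_exp_atTop.atTop_div_const (by norm_num : (0:ℝ) < 2)))
  rw [Real.cosh_eq]
  have := (Real.exp_pos (-t)).le
  linarith

lemma sinh_tendsto_atTop : Tendsto Real.sinh atTop atTop := by
  apply tendsto_atTop_mono' atTop ?_ (tendsto_atTop_add_const_right atTop (-1)
    cosh_tendsto_atTop)
  filter_upwards [eventually_ge_atTop (0:ℝ)] with t ht
  rw [Real.sinh_eq, Real.cosh_eq]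
  have h1 : Real.exp (-t) ≤ 1 := Real.exp_le_one_iff.2 (by linarith)
  linarith

lemma φ_tendsto_one (hκ : 0 < κ) : Tendsto (φ κ) atTop (𝓝 1) := by
  have hrw : ∀ t : ℝ, φ κ t = (κ / Real.cosh t + Real.sqrt (κ ^ 2 / Real.cosh t ^ 2 + 1))⁻¹ := by
    intro t
    have hc := Real.cosh_pos t
    have : Real.sqrt (κ ^ 2 / Real.cosh t ^ 2 + 1) = A κ t / Real.cosh t := by
      rw [eq_div_iff hc.ne', ← Real.sqrt_sq hc.le, A, ← Real.sqrt_mul (by positivity)]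
      congr 1
      field_simp
      rw [Real.sq_sqrt (by positivity)]
    rw [this, φ]
    have hd := denom_pos hκ t
    field_simp
  have h1 : Tendsto (fun t => κ / Real.cosh t) atTop (𝓝 0) :=
    Tendsto.div_atTop tendsto_const_nhds cosh_tendsto_atTop
  have h2 : Tendsto (fun t => κ ^ 2 / Real.cosh t ^ 2 + 1) atTop (𝓝 1) := by
    have : Tendsto (fun t => κ ^ 2 / Real.cosh t ^ 2) atTop (𝓝 0) := by
      have h := h1.pow 2
      simpa [div_pow] using h
    simpa using this.add tendsto_const_nhds
  have h3 : Tendsto (fun t => Real.sqrt (κ ^ 2 / Real.cosh t ^ 2 + 1)) atTop (𝓝 1) := by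
    have := h2.sqrt
    simpa using this
  have hT := (h1.add h3).inv₀ (by norm_num)
  rw [show ((0:ℝ) + 1)⁻¹ = 1 by norm_num] at hT
  exact hT.congr (fun t => (hrw t).symm)

lemma φ_strictMono (hκ : 0 < κ) : StrictMonoOn (φ κ) (Ici 0) := by
  apply strictMonoOn_of_deriv_pos (convex_Ici 0) (φ_cont hκ).continuousOn
  intro x hx
  rw [interior_Ici] at hx
  rw [(φ_hasDeriv hκ x).deriv]
  exact div_pos (mul_pos (Real.sinh_pos_iff.2 hx) hκ)
    (mul_pos (A_pos κ x) (denom_pos hκ x))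

lemma φ_image (hκ : 0 < κ) :
    φ κ '' Ioi 0 = Ioo (Real.sqrt (κ ^ 2 + 1) - κ) 1 := by
  apply Subset.antisymm
  · rintro _ ⟨t, ht, rfl⟩
    refine ⟨?_, φ_lt_one hκ t⟩
    rw [← φ_zero hκ]
    exact φ_strictMono hκ self_mem_Ici (mem_Ici.2 (le_of_lt ht)) ht
  · have h0 : Tendsto (φ κ) (nhdsWithin 0 (Ioi 0)) (𝓝 (Real.sqrt (κ ^ 2 + 1) - κ)) := by
      rw [← φ_zero hκ]
      exact ((φ_cont hκ).tendsto 0).mono_left nhdsWithin_le_nhds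
    have h1 : Tendsto (φ κ) atTop (𝓝 1) := φ_tendsto_one hκ
    exact isPreconnected_Ioi.intermediate_value_Ioo
      (le_principal_iff.2 self_mem_nhdsWithin) (le_principal_iff.2 (Ioi_mem_atTop 0))
      (φ_cont hκ).continuousOn h0 h1

lemma key_identity (hκ : 0 < κ) (ht : 0 < t) :
    |φ' κ t| • (2 / Real.sqrt (4 * κ ^ 2 * (φ κ t) ^ 2 - (1 - (φ κ t) ^ 2) ^ 2))
      = (Real.sqrt (κ ^ 2 + Real.cosh t ^ 2))⁻¹ := by
  have hA := A_pos κ t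
  have hA2 := A_sq κ t
  have hd := denom_pos hκ t
  have hs := Real.sinh_pos_iff.2 ht
  have hsh := Real.sinh_sq (x := t)
  have e1 : 1 - φ κ t ^ 2 = 2 * κ / (κ + A κ t) := by
    rw [φ]
    field_simp
    linear_combination hA2
  have hsq : 4 * κ ^ 2 * (φ κ t) ^ 2 - (1 - (φ κ t) ^ 2) ^ 2
      = (2 * κ * Real.sinh t / (κ + A κ t)) ^ 2 := by
    rw [e1, φ]
    field_simp
    linear_combination (-4) * hsh
  rw [hsq, Real.sqrt_sq (by positivity)]
  have hφ'pos : 0 < φ' κ t := by rw [φ']; positivity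
  rw [abs_of_pos hφ'pos, smul_eq_mul, φ']
  rw [show Real.sqrt (κ ^ 2 + Real.cosh t ^ 2) = A κ t from rfl]
  field_simp

/-- The basic integrable dominating function: `sech`. -/
lemma sech_integrable : IntegrableOn (fun t => (Real.cosh t)⁻¹) (Ioi (0:ℝ)) := by
  have hderiv : ∀ x ∈ Ioi (0:ℝ),
      HasDerivAt (fun t => Real.arctan (Real.sinh t)) (Real.cosh x)⁻¹ x := by
    intro x _
    have h := (Real.hasDerivAt_arctan (Real.sinh x)).comp x (Real.hasDerivAt_sinh x)
    refine h.congr_deriv ?_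
    have hc := Real.cosh_pos x
    rw [← Real.cosh_sq']
    field_simp
  exact integrableOn_Ioi_deriv_of_nonneg
    ((Real.continuous_arctan.comp Real.continuous_sinh).continuousWithinAt)
    hderiv (fun x _ => by positivity)
    ((Real.tendsto_arctan_atTop.mono_right nhdsWithin_le_nhds).comp sinh_tendsto_atTop)

lemma sech_integral : ∫ t in Ioi (0:ℝ), (Real.cosh t)⁻¹ = Real.pi / 2 := by
  have hderiv : ∀ x ∈ Ioi (0:ℝ),
      HasDerivAt (fun t => Real.arctan (Real.sinh t)) (Real.cosh x)⁻¹ x := by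
    intro x _
    have h := (Real.hasDerivAt_arctan (Real.sinh x)).comp x (Real.hasDerivAt_sinh x)
    refine h.congr_deriv ?_
    have hc := Real.cosh_pos x
    rw [← Real.cosh_sq']
    field_simp
  have := integral_Ioi_of_hasDerivAt_of_tendsto
    ((Real.continuous_arctan.comp Real.continuous_sinh).continuousWithinAt)
    hderiv sech_integrable
    ((Real.tendsto_arctan_atTop.mono_right nhdsWithin_le_nhds).comp sinh_tendsto_atTop)
  simpa using this

lemma G_cont (κ : ℝ) : Continuous (fun t => (Real.sqrt (κ ^ 2 + Real.cosh t ^ 2))⁻¹) :=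
  ((continuous_const.add (Real.continuous_cosh.pow 2)).sqrt).inv₀
    (fun t => (A_pos κ t).ne')

lemma G_bound (κ t : ℝ) :
    ‖(Real.sqrt (κ ^ 2 + Real.cosh t ^ 2))⁻¹‖ ≤ (Real.cosh t)⁻¹ := by
  rw [Real.norm_eq_abs, abs_of_nonneg (by positivity)]
  exact inv_anti₀ (Real.cosh_pos t) (cosh_le_A κ t)

lemma G_integrable (κ : ℝ) :
    IntegrableOn (fun t => (Real.sqrt (κ ^ 2 + Real.cosh t ^ 2))⁻¹) (Ioi (0:ℝ)) := by
  apply sech_integrable.mono' ((G_cont κ).aestronglyMeasurable.restrict)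
  exact ae_of_all _ (fun t => G_bound κ t)

end CatenoidAux

open CatenoidAux

/-- Properties of the half-height `H(κ) = ∫_{√(κ²+1)-κ}^{1} 2/√(4κ²u² - (1-u²)²) du`
of the catenoid `𝒞_κ`: the integrand is well defined and positive, the integral
converges, `H` is strictly decreasing on `(0,∞)`, `H(κ) → π/2` as `κ → 0⁺`, and
`H(κ) → 0` as `κ → ∞`. -/
theorem catenoid_height_properties (H : ℝ → ℝ)
    (hH : ∀ κ : ℝ, H κ = ∫ u in Set.Ioo (Real.sqrt (κ ^ 2 + 1) - κ) 1,
        2 / Real.sqrt (4 * κ ^ 2 * u ^ 2 - (1 - u ^ 2) ^ 2)) :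
    (∀ κ : ℝ, 0 < κ →
      (∀ u ∈ Set.Ioo (Real.sqrt (κ ^ 2 + 1) - κ) 1,
        0 < 4 * κ ^ 2 * u ^ 2 - (1 - u ^ 2) ^ 2 ∧
        0 < 2 / Real.sqrt (4 * κ ^ 2 * u ^ 2 - (1 - u ^ 2) ^ 2)) ∧
      IntegrableOn (fun u => 2 / Real.sqrt (4 * κ ^ 2 * u ^ 2 - (1 - u ^ 2) ^ 2))
        (Set.Ioo (Real.sqrt (κ ^ 2 + 1) - κ) 1)) ∧
    StrictAntiOn H (Set.Ioi 0) ∧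
    Tendsto H (nhdsWithin 0 (Set.Ioi 0)) (nhds (Real.pi / 2)) ∧
    Tendsto H atTop (nhds 0) := by
  -- positivity of the radicand
  have hpos : ∀ κ : ℝ, 0 < κ → ∀ u ∈ Set.Ioo (Real.sqrt (κ ^ 2 + 1) - κ) 1,
      0 < 4 * κ ^ 2 * u ^ 2 - (1 - u ^ 2) ^ 2 := by
    intro κ hκ u hu
    obtain ⟨h1, h2⟩ := hu
    have hS : Real.sqrt (κ ^ 2 + 1) ^ 2 = κ ^ 2 + 1 := Real.sq_sqrt (by positivity)
    have hS0 : 0 ≤ Real.sqrt (κ ^ 2 + 1) := Real.sqrt_nonneg _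
    have hu0 : 0 < u := by nlinarith
    have f1 : 0 < u ^ 2 + 2 * κ * u - 1 := by nlinarith
    have f2 : 0 < 1 + 2 * κ * u - u ^ 2 := by nlinarith
    nlinarith [mul_pos f1 f2]
  -- change of variables: H κ = ∫_{(0,∞)} (κ² + cosh²t)^{-1/2}
  have hchange : ∀ κ : ℝ, 0 < κ →
      H κ = ∫ t in Set.Ioi (0:ℝ), (Real.sqrt (κ ^ 2 + Real.cosh t ^ 2))⁻¹ := by
    intro κ hκ
    rw [hH κ, ← φ_image hκ]
    rw [integral_image_eq_integral_abs_deriv_smul measurableSet_Ioi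
      (fun x _ => (φ_hasDeriv hκ x).hasDerivWithinAt)
      ((φ_strictMono hκ).injOn.mono (Set.Ioi_subset_Ici le_rfl))
      (fun u => 2 / Real.sqrt (4 * κ ^ 2 * u ^ 2 - (1 - u ^ 2) ^ 2))]
    apply setIntegral_congr_fun measurableSet_Ioi
    intro t ht
    exact key_identity hκ ht
  -- integrability of the original integrand
  have hinteg : ∀ κ : ℝ, 0 < κ →
      IntegrableOn (fun u => 2 / Real.sqrt (4 * κ ^ 2 * u ^ 2 - (1 - u ^ 2) ^ 2))
        (Set.Ioo (Real.sqrt (κ ^ 2 + 1) - κ) 1) := by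
    intro κ hκ
    rw [← φ_image hκ]
    rw [integrableOn_image_iff_integrableOn_abs_deriv_smul measurableSet_Ioi
      (fun x _ => (φ_hasDeriv hκ x).hasDerivWithinAt)
      ((φ_strictMono hκ).injOn.mono (Set.Ioi_subset_Ici le_rfl))]
    apply (G_integrable κ).congr_fun _ measurableSet_Ioi
    intro t ht
    exact (key_identity hκ ht).symm
  refine ⟨fun κ hκ => ⟨fun u hu => ⟨hpos κ hκ u hu,
      div_pos two_pos (Real.sqrt_pos.2 (hpos κ hκ u hu))⟩, hinteg κ hκ⟩, ?_, ?_, ?_⟩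
  · -- strict antitonicity
    intro κ₁ h₁ κ₂ h₂ h12
    rw [Set.mem_Ioi] at h₁ h₂
    rw [hchange κ₁ h₁, hchange κ₂ h₂]
    have hlt : 0 < ∫ t in Set.Ioi (0:ℝ),
        ((Real.sqrt (κ₁ ^ 2 + Real.cosh t ^ 2))⁻¹
          - (Real.sqrt (κ₂ ^ 2 + Real.cosh t ^ 2))⁻¹) := by
      have hptpos : ∀ t : ℝ, 0 < (Real.sqrt (κ₁ ^ 2 + Real.cosh t ^ 2))⁻¹
          - (Real.sqrt (κ₂ ^ 2 + Real.cosh t ^ 2))⁻¹ := by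
        intro t
        have h1 : Real.sqrt (κ₁ ^ 2 + Real.cosh t ^ 2)
            < Real.sqrt (κ₂ ^ 2 + Real.cosh t ^ 2) := by
          apply Real.sqrt_lt_sqrt (inner_pos κ₁ t).le
          nlinarith
        have := A_pos κ₁ t
        rw [sub_pos]
        exact inv_strictAnti₀ (by exact this) h1
      rw [setIntegral_pos_iff_support_of_nonneg_ae
        (ae_of_all _ (fun t => (hptpos t).le))
        ((G_integrable κ₁).sub (G_integrable κ₂))]
      have hsupp : Set.Ioi (0:ℝ) ⊆ Function.support (fun t =>
          (Real.sqrt (κ₁ ^ 2 + Real.cosh t ^ 2))⁻¹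
            - (Real.sqrt (κ₂ ^ 2 + Real.cosh t ^ 2))⁻¹) :=
        fun t _ => (hptpos t).ne'
      apply lt_of_lt_of_le (b := volume (Set.Ioi (0:ℝ)))
      · rw [Real.volume_Ioi]
        exact ENNReal.zero_lt_top
      · exact measure_mono (fun t ht => ⟨hsupp ht, ht⟩)
    rw [integral_sub (G_integrable κ₁) (G_integrable κ₂)] at hlt
    linarith
  · -- limit as κ → 0⁺
    have hG : Tendsto (fun κ => ∫ t in Set.Ioi (0:ℝ),
        (Real.sqrt (κ ^ 2 + Real.cosh t ^ 2))⁻¹) (nhdsWithin 0 (Set.Ioi 0))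
        (nhds (Real.pi / 2)) := by
      rw [← sech_integral]
      apply tendsto_integral_filter_of_dominated_convergence (fun t => (Real.cosh t)⁻¹)
      · exact Eventually.of_forall (fun κ => (G_cont κ).aestronglyMeasurable.restrict)
      · exact Eventually.of_forall (fun κ => ae_of_all _ (fun t => G_bound κ t))
      · exact sech_integrable
      · apply ae_of_all
        intro t
        have hc : Tendsto (fun κ : ℝ => Real.sqrt (κ ^ 2 + Real.cosh t ^ 2))
            (𝓝 0) (𝓝 (Real.cosh t)) := by
          have h1 : Tendsto (fun κ : ℝ => κ ^ 2 + Real.cosh t ^ 2) (𝓝 0)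
              (𝓝 (0 ^ 2 + Real.cosh t ^ 2)) :=
            ((continuous_pow 2).add continuous_const).tendsto 0
          have h2 : Tendsto (fun κ : ℝ => Real.sqrt (κ ^ 2 + Real.cosh t ^ 2)) (𝓝 0)
              (𝓝 (Real.sqrt (0 ^ 2 + Real.cosh t ^ 2))) := h1.sqrt
          simpa [Real.sqrt_sq (Real.cosh_pos t).le] using h2
        exact (hc.mono_left nhdsWithin_le_nhds).inv₀ (Real.cosh_pos t).ne'
    apply hG.congr'
    filter_upwards [self_mem_nhdsWithin] with κ hκ
    exact (hchange κ hκ).symm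
  · -- limit as κ → ∞
    have hG : Tendsto (fun κ => ∫ t in Set.Ioi (0:ℝ),
        (Real.sqrt (κ ^ 2 + Real.cosh t ^ 2))⁻¹) atTop (nhds 0) := by
      have key := tendsto_integral_filter_of_dominated_convergence
        (μ := volume.restrict (Set.Ioi (0:ℝ))) (l := atTop)
        (F := fun (κ : ℝ) (t : ℝ) => (Real.sqrt (κ ^ 2 + Real.cosh t ^ 2))⁻¹)
        (f := fun _ => (0:ℝ)) (fun t => (Real.cosh t)⁻¹)
      simp only [integral_zero] at key
      apply key
      · exact Eventually.of_forall (fun κ => (G_cont κ).aestronglyMeasurable.restrict)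
      · exact Eventually.of_forall (fun κ => ae_of_all _ (fun t => G_bound κ t))
      · exact sech_integrable
      · apply ae_of_all
        intro t
        have hbig : Tendsto (fun κ : ℝ => Real.sqrt (κ ^ 2 + Real.cosh t ^ 2)) atTop atTop := by
          apply tendsto_atTop_mono' _ _ tendsto_id
          filter_upwards [eventually_ge_atTop (0:ℝ)] with κ hκ
          have : κ = Real.sqrt (κ ^ 2) := (Real.sqrt_sq hκ).symm
          rw [this]
          exact Real.sqrt_le_sqrt (by nlinarith [sq_nonneg (Real.cosh t)])
        exact hbig.inv_tendsto_atTop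
    apply hG.congr'
    filter_upwards [eventually_gt_atTop (0:ℝ)] with κ hκ
    exact (hchange κ hκ).symm
end

section
/- Let λ > 0 and define F : ℝ × (0,π) → ℂ by F(x,t) = λx + iλ·sin t. Then F takes values in the upper half-plane (Im F > 0) and satisfies, at every point, the harmonic map equation into the hyperbolic upper half-plane: ∂²F/∂x² + ∂²F/∂t² + (i/Im F)·((∂F/∂x)² + (∂F/∂t)²) = 0. -/
/-- The map `F(x,t) = λx + iλ sin t` on `ℝ × (0,π)` takes values in the upper half-plane
and satisfies the harmonic map equation
`F_{xx} + F_{tt} + (i / Im F)((F_x)² + (F_t)²) = 0` into hyperbolic space. -/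
theorem parabolic_catenoid_harmonic_map (lam : ℝ) (hlam : 0 < lam)
    (F : ℝ → ℝ → ℂ)
    (hF : ∀ x t : ℝ,
      F x t = (lam : ℂ) * (x : ℂ) + Complex.I * (lam : ℂ) * ((Real.sin t : ℝ) : ℂ)) :
    ∀ x : ℝ, ∀ t ∈ Set.Ioo (0 : ℝ) Real.pi,
      0 < (F x t).im ∧
      deriv (fun a => deriv (fun b => F b t) a) x
        + deriv (fun a => deriv (fun b => F x b) a) t
        + (Complex.I / (((F x t).im : ℝ) : ℂ)) *
            ((deriv (fun b => F b t) x) ^ 2 + (deriv (fun b => F x b) t) ^ 2) = 0 := by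
  intro x t ht
  have hsin : 0 < Real.sin t := Real.sin_pos_of_pos_of_lt_pi ht.1 ht.2
  have him : (F x t).im = lam * Real.sin t := by
    rw [hF]
    simp only [Complex.add_im, Complex.mul_im, Complex.mul_re, Complex.I_re, Complex.I_im,
      Complex.ofReal_re, Complex.ofReal_im]
    ring
  -- x-derivatives
  have h1 : (fun b : ℝ => F b t)
      = fun b : ℝ => (lam : ℂ) * (b : ℂ) + Complex.I * lam * (Real.sin t : ℝ) :=
    funext fun b => hF b t
  have hdx : ∀ a : ℝ, HasDerivAt (fun b : ℝ => F b t) (lam : ℂ) a := by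
    intro a
    rw [h1]
    have : HasDerivAt (fun b : ℝ => (b : ℂ)) 1 a := by
      simpa using (hasDerivAt_id' a).ofReal_comp
    simpa using (this.const_mul (lam : ℂ)).add_const (Complex.I * lam * (Real.sin t : ℝ))
  have hdx1 : deriv (fun b : ℝ => F b t) x = (lam : ℂ) := (hdx x).deriv
  have hdx2 : deriv (fun a : ℝ => deriv (fun b : ℝ => F b t) a) x = 0 := by
    have : (fun a : ℝ => deriv (fun b : ℝ => F b t) a) = fun _ : ℝ => (lam : ℂ) :=
      funext fun a => (hdx a).deriv
    rw [this, deriv_const]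
  -- t-derivatives
  have h2 : (fun b : ℝ => F x b)
      = fun b : ℝ => (lam : ℂ) * (x : ℂ) + Complex.I * lam * ((Real.sin b : ℝ) : ℂ) :=
    funext fun b => hF x b
  have hdt : ∀ a : ℝ, HasDerivAt (fun b : ℝ => F x b)
      (Complex.I * lam * (Real.cos a : ℝ)) a := by
    intro a
    rw [h2]
    exact (((Real.hasDerivAt_sin a).ofReal_comp).const_mul
      (Complex.I * lam)).const_add ((lam : ℂ) * x)
  have hdt1 : deriv (fun b : ℝ => F x b) t = Complex.I * lam * (Real.cos t : ℝ) :=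
    (hdt t).deriv
  have hdt2 : deriv (fun a : ℝ => deriv (fun b : ℝ => F x b) a) t
      = Complex.I * lam * (-(Real.sin t : ℝ)) := by
    have heq : (fun a : ℝ => deriv (fun b : ℝ => F x b) a)
        = fun a : ℝ => Complex.I * lam * ((Real.cos a : ℝ) : ℂ) :=
      funext fun a => (hdt a).deriv
    rw [heq]
    simpa using (((Real.hasDerivAt_cos t).ofReal_comp).const_mul (Complex.I * lam)).deriv
  refine ⟨by rw [him]; positivity, ?_⟩
  rw [hdx1, hdx2, hdt1, hdt2, him]
  have hs : ((Real.sin t : ℝ) : ℂ) ≠ 0 := by exact_mod_cast hsin.ne'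
  have hl : ((lam : ℝ) : ℂ) ≠ 0 := by exact_mod_cast hlam.ne'
  have hpyth : ((Real.cos t : ℝ) : ℂ) ^ 2 = 1 - ((Real.sin t : ℝ) : ℂ) ^ 2 := by
    have := Real.sin_sq_add_cos_sq t
    have : (Real.cos t) ^ 2 = 1 - (Real.sin t) ^ 2 := by nlinarith [Real.sin_sq_add_cos_sq t]
    exact_mod_cast congrArg (Complex.ofReal) this
  rw [Complex.ofReal_mul]
  set S : ℂ := ((Real.sin t : ℝ) : ℂ) with hS
  set C : ℂ := ((Real.cos t : ℝ) : ℂ) with hC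
  set L : ℂ := ((lam : ℝ) : ℂ) with hL
  clear_value S C L
  field_simp
  linear_combination (Complex.I * L * C ^ 2) * Complex.I_sq
    + (-(Complex.I) * L) * hpyth
end

section
/- For d ∈ (0,1) let d₁ = √((1−d)/(1+d)) and Λ(d) = ∫_{d₁}^{1} 2/√(d²(1+v²)² − (1−v²)²) dv. Then for every d ∈ (0,1): the expression d²(1+v²)² − (1−v²)² is positive for v ∈ (d₁,1) and the integral converges; Λ(d) > π/2; Λ is strictly increasing on (0,1); Λ(d) → π/2 as d → 0⁺; and Λ(d) → ∞ as d → 1⁻. (Consequently the height h_d = 2Λ(d) of the tall rectangle Σ_d is always greater than π, increases monotonically in d, tends to π as d → 0 and to ∞ as d → 1.) -/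
open MeasureTheory Filter

namespace TallRect

open Real Set

/-- The complete elliptic integral of the first kind, as a set integral. -/
noncomputable def F (d : ℝ) : ℝ :=
  ∫ φ in Set.Ioo 0 (π / 2), 1 / Real.sqrt (1 - d ^ 2 * Real.sin φ ^ 2)

lemma measure_Ioo_pi : (volume (Set.Ioo (0:ℝ) (π/2))).toReal = π / 2 := by
  rw [Real.volume_Ioo, sub_zero, ENNReal.toReal_ofReal (by positivity)]

lemma contOn_integrand {d : ℝ} (hd0 : 0 < d) (hd1 : d < 1) :
    ContinuousOn (fun φ => 1 / Real.sqrt (1 - d ^ 2 * Real.sin φ ^ 2)) (Set.Icc 0 (π/2)) := by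
  apply ContinuousOn.div continuousOn_const
  · exact (Real.continuous_sqrt.comp (by continuity)).continuousOn
  · intro x _
    have h1 : Real.sin x ^ 2 ≤ 1 := by
      have := Real.neg_one_le_sin x
      have := Real.sin_le_one x
      nlinarith
    have : 0 < 1 - d ^ 2 * Real.sin x ^ 2 := by nlinarith
    positivity

lemma integrableF {d : ℝ} (hd0 : 0 < d) (hd1 : d < 1) :
    IntegrableOn (fun φ => 1 / Real.sqrt (1 - d ^ 2 * Real.sin φ ^ 2)) (Set.Ioo 0 (π/2)) :=
  ((contOn_integrand hd0 hd1).integrableOn_Icc).mono_set Set.Ioo_subset_Icc_self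

lemma setIntegral_lt_of_lt {a b : ℝ} (hab : a < b) {f g : ℝ → ℝ}
    (hf : IntegrableOn f (Set.Ioo a b)) (hg : IntegrableOn g (Set.Ioo a b))
    (h : ∀ x ∈ Set.Ioo a b, f x < g x) :
    (∫ x in Set.Ioo a b, f x) < ∫ x in Set.Ioo a b, g x := by
  have hae : 0 ≤ᶠ[ae (volume.restrict (Set.Ioo a b))] fun x => g x - f x := by
    filter_upwards [ae_restrict_mem measurableSet_Ioo] with x hx
    exact sub_nonneg.2 (h x hx).le
  have hsub : (0:ℝ) < ∫ x in Set.Ioo a b, (g x - f x) := by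
    rw [setIntegral_pos_iff_support_of_nonneg_ae hae (hg.sub hf)]
    have hsubset : Set.Ioo a b ⊆ Function.support (fun x => g x - f x) ∩ Set.Ioo a b := by
      intro x hx
      exact ⟨by simp [sub_ne_zero.2 (h x hx).ne'], hx⟩
    calc (0:ENNReal) < volume (Set.Ioo a b) := by
            rw [Real.volume_Ioo]; simp [sub_pos.2 hab]
      _ ≤ volume (Function.support (fun x => g x - f x) ∩ Set.Ioo a b) :=
            measure_mono hsubset
  rw [integral_sub hg hf] at hsub
  linarith

/-- positivity of the expression under the root -/
lemma pos_under_root {d : ℝ} (hd0 : 0 < d) (hd1 : d < 1) {v : ℝ}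
    (hv : v ∈ Set.Ioo (Real.sqrt ((1 - d) / (1 + d))) 1) :
    0 < d ^ 2 * (1 + v ^ 2) ^ 2 - (1 - v ^ 2) ^ 2 := by
  obtain ⟨hv1, hv2⟩ := hv
  have hv0 : 0 < v := lt_of_le_of_lt (Real.sqrt_nonneg _) hv1
  have hsq : (1 - d) / (1 + d) < v ^ 2 := by
    have := (Real.sqrt_lt' hv0).mp hv1
    nlinarith [this]
  have hd' : (0:ℝ) < 1 + d := by linarith
  have h1 : 1 - d < v ^ 2 * (1 + d) := by
    rw [div_lt_iff₀ hd'] at hsq; linarith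
  have hx1 : (0:ℝ) < 1 - v ^ 2 := by nlinarith
  have h2 : 0 < d * (1 + v ^ 2) - (1 - v ^ 2) := by nlinarith
  have h3 : 0 < d * (1 + v ^ 2) + (1 - v ^ 2) := by nlinarith
  nlinarith [mul_pos h2 h3]

set_option maxHeartbeats 1000000 in
/-- change of variables: the Λ-integral equals the elliptic integral, and integrability -/
lemma key_cov {d : ℝ} (hd0 : 0 < d) (hd1 : d < 1) :
    (∫ v in Set.Ioo (Real.sqrt ((1 - d) / (1 + d))) 1,
        2 / Real.sqrt (d ^ 2 * (1 + v ^ 2) ^ 2 - (1 - v ^ 2) ^ 2)) = F d ∧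
    IntegrableOn (fun v => 2 / Real.sqrt (d ^ 2 * (1 + v ^ 2) ^ 2 - (1 - v ^ 2) ^ 2))
        (Set.Ioo (Real.sqrt ((1 - d) / (1 + d))) 1) := by
  set f : ℝ → ℝ := fun φ => Real.sqrt ((1 - d * Real.sin φ) / (1 + d * Real.sin φ)) with hf_def
  set f' : ℝ → ℝ := fun φ =>
    -(d * Real.cos φ) / ((1 + d * Real.sin φ) ^ 2 * f φ) with hf'_def
  set G : ℝ → ℝ := fun v => 2 / Real.sqrt (d ^ 2 * (1 + v ^ 2) ^ 2 - (1 - v ^ 2) ^ 2) with hG_def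
  have hπ : (0:ℝ) < π / 2 := by positivity
  -- basic facts on the interval
  have basic : ∀ φ ∈ Set.Ioo (0:ℝ) (π/2), 0 < Real.sin φ ∧ Real.sin φ < 1 ∧ 0 < Real.cos φ := by
    intro φ hφ
    obtain ⟨h1, h2⟩ := hφ
    have hcos : 0 < Real.cos φ := Real.cos_pos_of_mem_Ioo ⟨by linarith [Real.pi_pos], h2⟩
    have hsin : 0 < Real.sin φ := Real.sin_pos_of_pos_of_lt_pi h1 (by linarith [Real.pi_pos])
    refine ⟨hsin, ?_, hcos⟩
    nlinarith [Real.sin_sq_add_cos_sq φ]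
  -- derivative
  have hderiv : ∀ φ ∈ Set.Ioo (0:ℝ) (π/2), HasDerivWithinAt f (f' φ) (Set.Ioo 0 (π/2)) φ := by
    intro φ hφ
    obtain ⟨hs0, hs1, hc0⟩ := basic φ hφ
    have hden : (0:ℝ) < 1 + d * Real.sin φ := by nlinarith
    have hnum : (0:ℝ) < 1 - d * Real.sin φ := by nlinarith
    have hu' : (0:ℝ) < (1 - d * Real.sin φ) / (1 + d * Real.sin φ) := by positivity
    have hu : HasDerivAt (fun t => (1 - d * Real.sin t) / (1 + d * Real.sin t))
        ((-(d * Real.cos φ) * (1 + d * Real.sin φ) - (1 - d * Real.sin φ) * (d * Real.cos φ)) /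
          (1 + d * Real.sin φ) ^ 2) φ := by
      have h1 : HasDerivAt (fun t => 1 - d * Real.sin t) (-(d * Real.cos φ)) φ := by
        simpa using ((Real.hasDerivAt_sin φ).const_mul d).const_sub 1
      have h2 : HasDerivAt (fun t => 1 + d * Real.sin t) (d * Real.cos φ) φ := by
        simpa using ((Real.hasDerivAt_sin φ).const_mul d).const_add 1
      exact h1.div h2 (by positivity)
    have hfpos : 0 < f φ := Real.sqrt_pos.2 hu'
    have hsq : HasDerivAt f
        (((-(d * Real.cos φ) * (1 + d * Real.sin φ) - (1 - d * Real.sin φ) * (d * Real.cos φ)) /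
          (1 + d * Real.sin φ) ^ 2) / (2 * Real.sqrt ((1 - d * Real.sin φ) / (1 + d * Real.sin φ)))) φ :=
      hu.sqrt (ne_of_gt hu')
    have heq : ((-(d * Real.cos φ) * (1 + d * Real.sin φ) - (1 - d * Real.sin φ) * (d * Real.cos φ)) /
          (1 + d * Real.sin φ) ^ 2) / (2 * Real.sqrt ((1 - d * Real.sin φ) / (1 + d * Real.sin φ)))
        = f' φ := by
      rw [hf'_def]
      have : f φ = Real.sqrt ((1 - d * Real.sin φ) / (1 + d * Real.sin φ)) := rfl
      rw [← this]
      field_simp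
      ring
    rw [heq] at hsq
    exact hsq.hasDerivWithinAt
  -- strict antitonicity
  have hanti : StrictAntiOn f (Set.Icc 0 (π/2)) := by
    intro x hx y hy hxy
    have hsx : Real.sin x < Real.sin y := by
      apply Real.strictMonoOn_sin ⟨by linarith [hx.1, Real.pi_pos], by linarith [hx.2]⟩
        ⟨by linarith [hy.1, Real.pi_pos], by linarith [hy.2]⟩ hxy
    have hsx0 : 0 ≤ Real.sin x := Real.sin_nonneg_of_nonneg_of_le_pi hx.1
      (by linarith [hx.2, Real.pi_pos])
    have hsy1 : Real.sin y ≤ 1 := Real.sin_le_one y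
    have hdx : (0:ℝ) < 1 + d * Real.sin x := by nlinarith
    have hdy : (0:ℝ) < 1 + d * Real.sin y := by nlinarith
    have hny : (0:ℝ) ≤ 1 - d * Real.sin y := by nlinarith
    have hult : (1 - d * Real.sin y) / (1 + d * Real.sin y)
        < (1 - d * Real.sin x) / (1 + d * Real.sin x) := by
      rw [div_lt_div_iff₀ hdy hdx]
      nlinarith
    exact Real.sqrt_lt_sqrt (by positivity) hult
  have hinj : Set.InjOn f (Set.Ioo 0 (π/2)) :=
    (hanti.injOn).mono Set.Ioo_subset_Icc_self
  -- endpoint values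
  have hf0 : f 0 = 1 := by simp [hf_def]
  have hfπ : f (π/2) = Real.sqrt ((1 - d) / (1 + d)) := by simp [hf_def]
  -- image
  have himg : f '' Set.Ioo 0 (π/2) = Set.Ioo (Real.sqrt ((1 - d) / (1 + d))) 1 := by
    ext y
    constructor
    · rintro ⟨φ, hφ, rfl⟩
      have h1 : f φ < f 0 := hanti ⟨le_refl 0, by positivity⟩
        ⟨hφ.1.le, hφ.2.le⟩ hφ.1
      have h2 : f (π/2) < f φ := hanti ⟨hφ.1.le, hφ.2.le⟩
        ⟨by positivity, le_refl _⟩ hφ.2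
      rw [hf0] at h1; rw [hfπ] at h2
      exact ⟨h2, h1⟩
    · rintro ⟨hy1, hy2⟩
      have hy0 : 0 < y := lt_of_le_of_lt (Real.sqrt_nonneg _) hy1
      have hyy : (0:ℝ) < 1 + y ^ 2 := by positivity
      have hysq : (1 - d) / (1 + d) < y ^ 2 := by
        have := (Real.sqrt_lt' hy0).mp hy1
        nlinarith
      have hd' : (0:ℝ) < 1 + d := by linarith
      have hsq' : 1 - d < y ^ 2 * (1 + d) := by
        rw [div_lt_iff₀ hd'] at hysq; linarith
      set x : ℝ := (1 - y ^ 2) / (d * (1 + y ^ 2)) with hx_def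
      have hx0 : 0 < x := by
        apply div_pos (by nlinarith) (by positivity)
      have hx1 : x < 1 := by
        rw [hx_def, div_lt_one (by positivity)]
        nlinarith
      refine ⟨Real.arcsin x, ⟨Real.arcsin_pos.2 hx0, ?_⟩, ?_⟩
      · exact Real.arcsin_lt_pi_div_two.2 hx1
      · have hsin : Real.sin (Real.arcsin x) = x :=
          Real.sin_arcsin (by linarith) (by linarith)
        rw [hf_def]
        simp only [hsin]
        have hdx : d * x = (1 - y ^ 2) / (1 + y ^ 2) := by
          rw [hx_def]; field_simp
        rw [hdx]
        have h1 : 1 - (1 - y ^ 2) / (1 + y ^ 2) = 2 * y ^ 2 / (1 + y ^ 2) := by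
          field_simp; ring
        have h2 : 1 + (1 - y ^ 2) / (1 + y ^ 2) = 2 / (1 + y ^ 2) := by
          field_simp; ring
        rw [h1, h2]
        rw [show 2 * y ^ 2 / (1 + y ^ 2) / (2 / (1 + y ^ 2)) = y ^ 2 by
          rw [div_div_eq_mul_div, div_mul_eq_mul_div, div_div]
          rw [div_eq_iff (by positivity)]
          ring]
        exact Real.sqrt_sq hy0.le
  -- the key pointwise identity
  have hident : ∀ φ ∈ Set.Ioo (0:ℝ) (π/2),
      |f' φ| • G (f φ) = 1 / Real.sqrt (1 - d ^ 2 * Real.sin φ ^ 2) := by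
    intro φ hφ
    obtain ⟨hs0, hs1, hc0⟩ := basic φ hφ
    have hden : (0:ℝ) < 1 + d * Real.sin φ := by nlinarith
    have hnum : (0:ℝ) < 1 - d * Real.sin φ := by nlinarith
    have hu' : (0:ℝ) < (1 - d * Real.sin φ) / (1 + d * Real.sin φ) := by positivity
    have hfpos : 0 < f φ := Real.sqrt_pos.2 hu'
    have hv2 : f φ ^ 2 = (1 - d * Real.sin φ) / (1 + d * Real.sin φ) :=
      Real.sq_sqrt hu'.le
    have hsc : Real.sin φ ^ 2 + Real.cos φ ^ 2 = 1 := Real.sin_sq_add_cos_sq φ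
    have hne : (1 + d * Real.sin φ) ≠ 0 := hden.ne'
    have h1 : 1 + f φ ^ 2 = 2 / (1 + d * Real.sin φ) := by
      rw [hv2]; field_simp; ring
    have h2 : 1 - f φ ^ 2 = 2 * (d * Real.sin φ) / (1 + d * Real.sin φ) := by
      rw [hv2]; field_simp; ring
    have hE : d ^ 2 * (1 + f φ ^ 2) ^ 2 - (1 - f φ ^ 2) ^ 2
        = (2 * d * Real.cos φ / (1 + d * Real.sin φ)) ^ 2 := by
      rw [h1, h2]
      rw [div_pow, div_pow, div_pow, mul_div_assoc', ← sub_div]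
      congr 1
      linear_combination (-(4*d^2)) * hsc
    have hsqrtE : Real.sqrt (d ^ 2 * (1 + f φ ^ 2) ^ 2 - (1 - f φ ^ 2) ^ 2)
        = 2 * d * Real.cos φ / (1 + d * Real.sin φ) := by
      rw [hE, Real.sqrt_sq (by positivity)]
    have hG : G (f φ) = (1 + d * Real.sin φ) / (d * Real.cos φ) := by
      rw [hG_def]
      simp only
      rw [hsqrtE]
      rw [div_div_eq_mul_div, div_eq_div_iff (by positivity) (by positivity)]
      ring
    have habs : |f' φ| = d * Real.cos φ / ((1 + d * Real.sin φ) ^ 2 * f φ) := by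
      rw [hf'_def]
      simp only
      rw [neg_div, abs_neg, abs_of_pos (by positivity)]
    have hsqrt2 : Real.sqrt (1 - d ^ 2 * Real.sin φ ^ 2) = (1 + d * Real.sin φ) * f φ := by
      have : 1 - d ^ 2 * Real.sin φ ^ 2 = ((1 + d * Real.sin φ) * f φ) ^ 2 := by
        rw [mul_pow, hv2]; field_simp; ring
      rw [this, Real.sqrt_sq (by positivity)]
    rw [smul_eq_mul, habs, hG, hsqrt2]
    field_simp [hden.ne', hfpos.ne', hc0.ne', hd0.ne']
  -- assemble
  have hmeas : MeasurableSet (Set.Ioo (0:ℝ) (π/2)) := measurableSet_Ioo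
  constructor
  · rw [← himg, integral_image_eq_integral_abs_deriv_smul hmeas hderiv hinj]
    rw [F]
    exact setIntegral_congr_fun hmeas (fun φ hφ => hident φ hφ)
  · rw [← himg, integrableOn_image_iff_integrableOn_abs_deriv_smul hmeas hderiv hinj]
    exact (integrableF hd0 hd1).congr_fun (fun φ hφ => (hident φ hφ).symm) hmeas

lemma intConst {c : ℝ} : IntegrableOn (fun _ : ℝ => c) (Set.Ioo 0 (π/2)) := by
  refine integrableOn_const ?_
  rw [Real.volume_Ioo]; exact ENNReal.ofReal_ne_top

lemma setIntegral_const_pi {c : ℝ} : (∫ _ in Set.Ioo (0:ℝ) (π/2), c) = (π/2) * c := by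
  rw [setIntegral_const, measureReal_def, measure_Ioo_pi, smul_eq_mul]

lemma sin_sq_lt_one {φ : ℝ} (hφ : φ ∈ Set.Ioo (0:ℝ) (π/2)) :
    0 < Real.sin φ ∧ Real.sin φ ^ 2 < 1 := by
  obtain ⟨h1, h2⟩ := hφ
  have hcos : 0 < Real.cos φ := Real.cos_pos_of_mem_Ioo ⟨by linarith [Real.pi_pos], h2⟩
  have hsin : 0 < Real.sin φ := Real.sin_pos_of_pos_of_lt_pi h1 (by linarith [Real.pi_pos])
  exact ⟨hsin, by nlinarith [Real.sin_sq_add_cos_sq φ]⟩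

lemma F_gt {d : ℝ} (hd0 : 0 < d) (hd1 : d < 1) : π / 2 < F d := by
  have hπ : (0:ℝ) < π / 2 := by positivity
  have key : (∫ _ in Set.Ioo (0:ℝ) (π/2), (1:ℝ)) < F d := by
    apply setIntegral_lt_of_lt hπ intConst (integrableF hd0 hd1)
    intro φ hφ
    obtain ⟨hsin, hsq⟩ := sin_sq_lt_one hφ
    have h1 : 0 < 1 - d ^ 2 * Real.sin φ ^ 2 := by nlinarith
    have hds : 0 < d ^ 2 * Real.sin φ ^ 2 := by positivity
    have h2 : 1 - d ^ 2 * Real.sin φ ^ 2 < 1 := by linarith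
    have h3 : Real.sqrt (1 - d ^ 2 * Real.sin φ ^ 2) < 1 :=
      (Real.sqrt_lt' one_pos).2 (by nlinarith)
    have h4 : 0 < Real.sqrt (1 - d ^ 2 * Real.sin φ ^ 2) := Real.sqrt_pos.2 h1
    rw [lt_div_iff₀ h4, one_mul]
    exact h3
  rw [setIntegral_const_pi, mul_one] at key
  exact key

lemma F_mono {a b : ℝ} (ha0 : 0 < a) (hb1 : b < 1) (hab : a < b) : F a < F b := by
  have hπ : (0:ℝ) < π / 2 := by positivity
  apply setIntegral_lt_of_lt hπ (integrableF ha0 (hab.trans hb1)) (integrableF (ha0.trans hab) hb1)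
  intro φ hφ
  obtain ⟨hsin, hsq⟩ := sin_sq_lt_one hφ
  have h1 : 0 < 1 - b ^ 2 * Real.sin φ ^ 2 := by nlinarith
  have hs2 : 0 < Real.sin φ ^ 2 := by positivity
  have hab2 : a ^ 2 < b ^ 2 := by nlinarith
  have h2 : 1 - b ^ 2 * Real.sin φ ^ 2 < 1 - a ^ 2 * Real.sin φ ^ 2 := by nlinarith
  have h3 : Real.sqrt (1 - b ^ 2 * Real.sin φ ^ 2) < Real.sqrt (1 - a ^ 2 * Real.sin φ ^ 2) :=
    Real.sqrt_lt_sqrt h1.le h2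
  have h4 : 0 < Real.sqrt (1 - b ^ 2 * Real.sin φ ^ 2) := Real.sqrt_pos.2 h1
  simp only [one_div]
  exact inv_strictAnti₀ h4 h3

lemma F_le {d : ℝ} (hd0 : 0 < d) (hd1 : d < 1) : F d ≤ (π/2) / Real.sqrt (1 - d ^ 2) := by
  have h1d : (0:ℝ) < 1 - d ^ 2 := by nlinarith
  have key : F d ≤ ∫ _ in Set.Ioo (0:ℝ) (π/2), 1 / Real.sqrt (1 - d ^ 2) := by
    apply setIntegral_mono_on (integrableF hd0 hd1) intConst measurableSet_Ioo
    intro φ hφ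
    obtain ⟨hsin, hsq⟩ := sin_sq_lt_one hφ
    have h1 : 1 - d ^ 2 ≤ 1 - d ^ 2 * Real.sin φ ^ 2 := by nlinarith
    have h2 : Real.sqrt (1 - d ^ 2) ≤ Real.sqrt (1 - d ^ 2 * Real.sin φ ^ 2) :=
      Real.sqrt_le_sqrt h1
    exact one_div_le_one_div_of_le (Real.sqrt_pos.2 h1d) h2
  rw [setIntegral_const_pi] at key
  calc F d ≤ π / 2 * (1 / Real.sqrt (1 - d ^ 2)) := key
    _ = π / 2 / Real.sqrt (1 - d ^ 2) := by ring

lemma F_lower {d : ℝ} (hd0 : 0 < d) (hd1 : d < 1) :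
    Real.log ((Real.sqrt (1 - d ^ 2) + π/2) / Real.sqrt (1 - d ^ 2)) ≤ F d := by
  set ε := Real.sqrt (1 - d ^ 2) with hε_def
  have h1d : (0:ℝ) < 1 - d ^ 2 := by nlinarith
  have hε : 0 < ε := Real.sqrt_pos.2 h1d
  have hε2 : ε ^ 2 = 1 - d ^ 2 := Real.sq_sqrt h1d.le
  have hπ : (0:ℝ) < π / 2 := by positivity
  -- pointwise bound
  have hpt : ∀ φ ∈ Set.Ioo (0:ℝ) (π/2),
      (ε + π/2 - φ)⁻¹ ≤ 1 / Real.sqrt (1 - d ^ 2 * Real.sin φ ^ 2) := by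
    intro φ hφ
    obtain ⟨hφ1, hφ2⟩ := hφ
    have hcos : 0 ≤ Real.cos φ := Real.cos_nonneg_of_mem_Icc ⟨by linarith [Real.pi_pos], hφ2.le⟩
    have hcle : Real.cos φ ≤ π/2 - φ := by
      rw [← Real.sin_pi_div_two_sub]
      exact Real.sin_le (by linarith)
    have hsc : Real.sin φ ^ 2 + Real.cos φ ^ 2 = 1 := Real.sin_sq_add_cos_sq φ
    have hsub : 0 ≤ π/2 - φ := by linarith
    have hsq : 1 - d ^ 2 * Real.sin φ ^ 2 ≤ (ε + (π/2 - φ)) ^ 2 := by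
      nlinarith [sq_nonneg (Real.cos φ), mul_nonneg hε.le hsub, sq_nonneg d,
        mul_le_mul_of_nonneg_left hcle hcos]
    have hle : Real.sqrt (1 - d ^ 2 * Real.sin φ ^ 2) ≤ ε + π/2 - φ := by
      calc Real.sqrt (1 - d ^ 2 * Real.sin φ ^ 2) ≤ Real.sqrt ((ε + (π/2 - φ)) ^ 2) :=
            Real.sqrt_le_sqrt hsq
        _ = ε + (π/2 - φ) := Real.sqrt_sq (by linarith)
        _ = ε + π/2 - φ := by ring
    have hpos : 0 < Real.sqrt (1 - d ^ 2 * Real.sin φ ^ 2) := by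
      obtain ⟨hsin, hsq'⟩ := sin_sq_lt_one ⟨hφ1, hφ2⟩
      exact Real.sqrt_pos.2 (by nlinarith)
    rw [one_div]
    exact inv_anti₀ hpos hle
  -- integrability of the lower bound
  have hint : IntegrableOn (fun φ => (ε + π/2 - φ)⁻¹) (Set.Ioo 0 (π/2)) := by
    apply (ContinuousOn.integrableOn_Icc _).mono_set Set.Ioo_subset_Icc_self
    apply ContinuousOn.inv₀ (by fun_prop)
    intro x hx
    have : 0 < ε + π/2 - x := by have := hx.2; linarith
    exact this.ne'
  -- value of the lower integral
  have hcalc : (∫ φ in Set.Ioo (0:ℝ) (π/2), (ε + π/2 - φ)⁻¹) = Real.log ((ε + π/2)/ε) := by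
    rw [← MeasureTheory.integral_Ioc_eq_integral_Ioo,
        ← intervalIntegral.integral_of_le hπ.le]
    rw [intervalIntegral.integral_comp_sub_left (fun x => x⁻¹) (ε + π/2)]
    norm_num
    rw [integral_inv (Set.notMem_uIcc_of_lt hε (by linarith))]
  have := setIntegral_mono_on hint (integrableF hd0 hd1) measurableSet_Ioo hpt
  rw [hcalc] at this
  exact this

end TallRect

open TallRect

/-- Properties of the half-height `Λ(d) = ∫_{d₁}^{1} 2/√(d²(1+v²)² - (1-v²)²) dv`
(with `d₁ = √((1-d)/(1+d))`) of the tall rectangle `Σ_d`: the expression under the root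
is positive on `(d₁,1)`, the integral converges, `Λ(d) > π/2`, `Λ` is strictly
increasing on `(0,1)`, `Λ(d) → π/2` as `d → 0⁺`, and `Λ(d) → ∞` as `d → 1⁻`. -/
theorem tall_rectangle_height_properties (Λ : ℝ → ℝ)
    (hΛ : ∀ d : ℝ, Λ d = ∫ v in Set.Ioo (Real.sqrt ((1 - d) / (1 + d))) 1,
        2 / Real.sqrt (d ^ 2 * (1 + v ^ 2) ^ 2 - (1 - v ^ 2) ^ 2)) :
    (∀ d ∈ Set.Ioo (0 : ℝ) 1,
      (∀ v ∈ Set.Ioo (Real.sqrt ((1 - d) / (1 + d))) 1,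
        0 < d ^ 2 * (1 + v ^ 2) ^ 2 - (1 - v ^ 2) ^ 2) ∧
      IntegrableOn (fun v => 2 / Real.sqrt (d ^ 2 * (1 + v ^ 2) ^ 2 - (1 - v ^ 2) ^ 2))
        (Set.Ioo (Real.sqrt ((1 - d) / (1 + d))) 1) ∧
      Real.pi / 2 < Λ d) ∧
    StrictMonoOn Λ (Set.Ioo 0 1) ∧
    Tendsto Λ (nhdsWithin 0 (Set.Ioi 0)) (nhds (Real.pi / 2)) ∧
    Tendsto Λ (nhdsWithin 1 (Set.Iio 1)) atTop := by
  have hFd : ∀ d ∈ Set.Ioo (0:ℝ) 1, Λ d = F d := fun d hd =>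
    (hΛ d).trans (key_cov hd.1 hd.2).1
  have hmem0 : Set.Ioo (0:ℝ) 1 ∈ nhdsWithin 0 (Set.Ioi 0) :=
    Ioo_mem_nhdsGT one_pos
  have hmem1 : Set.Ioo (0:ℝ) 1 ∈ nhdsWithin 1 (Set.Iio 1) :=
    Ioo_mem_nhdsLT one_pos
  refine ⟨fun d hd => ⟨fun v hv => pos_under_root hd.1 hd.2 hv, (key_cov hd.1 hd.2).2, ?_⟩,
    ?_, ?_, ?_⟩
  · rw [hFd d hd]; exact F_gt hd.1 hd.2
  · intro a ha b hb hab
    rw [hFd a ha, hFd b hb]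
    exact F_mono ha.1 hb.2 hab
  · -- limit at 0⁺
    have hB : Tendsto (fun d : ℝ => (Real.pi/2) / Real.sqrt (1 - d ^ 2))
        (nhdsWithin 0 (Set.Ioi 0)) (nhds (Real.pi / 2)) := by
      have hc : ContinuousAt (fun d : ℝ => (Real.pi/2) / Real.sqrt (1 - d ^ 2)) 0 := by
        apply ContinuousAt.div continuousAt_const
          ((Real.continuous_sqrt.comp (continuous_const.sub (continuous_pow 2))).continuousAt)
        norm_num
      have htd := hc.tendsto
      norm_num [Real.sqrt_one] at htd
      exact htd.mono_left nhdsWithin_le_nhds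
    apply tendsto_of_tendsto_of_tendsto_of_le_of_le' (tendsto_const_nhds) hB
    · filter_upwards [hmem0] with d hd
      rw [hFd d hd]
      exact (F_gt hd.1 hd.2).le
    · filter_upwards [hmem0] with d hd
      rw [hFd d hd]
      exact F_le hd.1 hd.2
  · -- limit at 1⁻
    have h1 : Tendsto (fun d : ℝ => Real.sqrt (1 - d ^ 2)) (nhdsWithin 1 (Set.Iio 1))
        (nhdsWithin 0 (Set.Ioi 0)) := by
      rw [tendsto_nhdsWithin_iff]
      constructor
      · have hc : ContinuousAt (fun d : ℝ => Real.sqrt (1 - d ^ 2)) 1 :=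
          (Real.continuous_sqrt.comp (continuous_const.sub (continuous_pow 2))).continuousAt
        have htd := hc.tendsto
        norm_num [Real.sqrt_zero] at htd
        exact htd.mono_left nhdsWithin_le_nhds
      · filter_upwards [hmem1] with d hd
        exact Real.sqrt_pos.2 (by nlinarith [hd.1, hd.2])
    have h2 : Tendsto (fun ε : ℝ => (ε + Real.pi/2) / ε) (nhdsWithin 0 (Set.Ioi 0)) atTop := by
      have hmul : Tendsto (fun ε : ℝ => (ε + Real.pi/2) * ε⁻¹)
          (nhdsWithin 0 (Set.Ioi 0)) atTop := by
        apply Filter.Tendsto.pos_mul_atTop (show (0:ℝ) < Real.pi/2 by positivity) _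
          tendsto_inv_nhdsGT_zero
        have hc : ContinuousAt (fun ε : ℝ => ε + Real.pi/2) 0 :=
          (continuous_id.add continuous_const).continuousAt
        have htd := hc.tendsto
        norm_num at htd
        exact htd.mono_left nhdsWithin_le_nhds
      exact hmul.congr (fun ε => by ring)
    have h3 : Tendsto (fun d : ℝ =>
        Real.log ((Real.sqrt (1 - d ^ 2) + Real.pi/2) / Real.sqrt (1 - d ^ 2)))
        (nhdsWithin 1 (Set.Iio 1)) atTop := by
      have := Real.tendsto_log_atTop.comp (h2.comp h1)
      exact this
    apply tendsto_atTop_mono' _ _ h3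
    filter_upwards [hmem1] with d hd
    rw [hFd d hd]
    exact F_lower hd.1 hd.2
end

section
/- The functions w₁(x,t) = (1/4)(t·sin t − x²·cos t) and w₂(x,t) = (1/8)((π − 2t)·cos t − 2x²·sin t) satisfy the Jacobi equation ∂²w/∂x² + ∂²w/∂t² + w = 0 at every point (x,t) ∈ ℝ²; equivalently, L w₁ = L w₂ = 0 for the Jacobi operator L = −sin²t(∂²/∂x² + ∂²/∂t² + 1) of the parabolic catenoid. -/
/-- The functions `w₁(x,t) = (1/4)(t sin t - x² cos t)` and
`w₂(x,t) = (1/8)((π - 2t) cos t - 2x² sin t)` satisfy the Jacobi equation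
`w_{xx} + w_{tt} + w = 0` at every point of `ℝ²`; equivalently `L w₁ = L w₂ = 0` for
the Jacobi operator `L = -sin²t (∂x² + ∂t² + 1)` of the parabolic catenoid. -/
theorem jacobi_fields_of_parabolic_catenoid (w₁ w₂ : ℝ → ℝ → ℝ)
    (hw₁ : ∀ x t : ℝ, w₁ x t = (1 / 4) * (t * Real.sin t - x ^ 2 * Real.cos t))
    (hw₂ : ∀ x t : ℝ,
      w₂ x t = (1 / 8) * ((Real.pi - 2 * t) * Real.cos t - 2 * x ^ 2 * Real.sin t)) :
    ∀ x t : ℝ,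
      (deriv (fun a => deriv (fun b => w₁ b t) a) x
        + deriv (fun a => deriv (fun b => w₁ x b) a) t + w₁ x t = 0) ∧
      (deriv (fun a => deriv (fun b => w₂ b t) a) x
        + deriv (fun a => deriv (fun b => w₂ x b) a) t + w₂ x t = 0) ∧
      (-(Real.sin t) ^ 2 * (deriv (fun a => deriv (fun b => w₁ b t) a) x
        + deriv (fun a => deriv (fun b => w₁ x b) a) t + w₁ x t) = 0) ∧
      (-(Real.sin t) ^ 2 * (deriv (fun a => deriv (fun b => w₂ b t) a) x
        + deriv (fun a => deriv (fun b => w₂ x b) a) t + w₂ x t) = 0) := by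
  intro x t
  -- first derivatives in x
  have h1x : ∀ a : ℝ, deriv (fun b => w₁ b t) a = -(1 / 2) * Real.cos t * a := by
    intro a
    have h0 : HasDerivAt (fun b : ℝ => (1 / 4) * (t * Real.sin t - b ^ 2 * Real.cos t))
        (-(1 / 2) * Real.cos t * a) a := by
      have := (((hasDerivAt_pow 2 a).mul_const (Real.cos t)).const_sub
        (t * Real.sin t)).const_mul ((1 : ℝ) / 4)
      refine this.congr_deriv ?_
      push_cast; ring
    exact (h0.congr_of_eventuallyEq
      (Filter.Eventually.of_forall fun b => hw₁ b t)).deriv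
  have h2x : ∀ a : ℝ, deriv (fun b => w₂ b t) a = -(1 / 2) * Real.sin t * a := by
    intro a
    have h0 : HasDerivAt
        (fun b : ℝ => (1 / 8) * ((Real.pi - 2 * t) * Real.cos t - 2 * b ^ 2 * Real.sin t))
        (-(1 / 2) * Real.sin t * a) a := by
      have h1 : HasDerivAt (fun b : ℝ => 2 * b ^ 2 * Real.sin t) (2 * (2 * a) * Real.sin t) a := by
        have := ((hasDerivAt_pow 2 a).const_mul (2 : ℝ)).mul_const (Real.sin t)
        refine this.congr_deriv ?_
        push_cast; ring
      have := (h1.const_sub ((Real.pi - 2 * t) * Real.cos t)).const_mul ((1 : ℝ) / 8)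
      refine this.congr_deriv ?_
      ring
    exact (h0.congr_of_eventuallyEq
      (Filter.Eventually.of_forall fun b => hw₂ b t)).deriv
  -- second derivatives in x
  have D1x : deriv (fun a => deriv (fun b => w₁ b t) a) x = -(1 / 2) * Real.cos t := by
    have he : (fun a => deriv (fun b => w₁ b t) a) = fun a => -(1 / 2) * Real.cos t * a :=
      funext h1x
    rw [he]
    have := (hasDerivAt_id x).const_mul (-(1 / 2) * Real.cos t)
    simpa using this.deriv
  have D2x : deriv (fun a => deriv (fun b => w₂ b t) a) x = -(1 / 2) * Real.sin t := by
    have he : (fun a => deriv (fun b => w₂ b t) a) = fun a => -(1 / 2) * Real.sin t * a :=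
      funext h2x
    rw [he]
    have := (hasDerivAt_id x).const_mul (-(1 / 2) * Real.sin t)
    simpa using this.deriv
  -- first derivatives in t
  have h1t : ∀ b : ℝ, deriv (fun b => w₁ x b) b
      = (1 / 4) * (Real.sin b + b * Real.cos b + x ^ 2 * Real.sin b) := by
    intro b
    have h0 : HasDerivAt (fun b : ℝ => (1 / 4) * (b * Real.sin b - x ^ 2 * Real.cos b))
        ((1 / 4) * (Real.sin b + b * Real.cos b + x ^ 2 * Real.sin b)) b := by
      have h1 : HasDerivAt (fun b : ℝ => b * Real.sin b) (Real.sin b + b * Real.cos b) b := by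
        have := (hasDerivAt_id b).mul (Real.hasDerivAt_sin b)
        refine this.congr_deriv ?_
        simp only [id_eq, one_mul]
      have h2 : HasDerivAt (fun b : ℝ => x ^ 2 * Real.cos b) (x ^ 2 * -Real.sin b) b :=
        (Real.hasDerivAt_cos b).const_mul (x ^ 2)
      have := (h1.sub h2).const_mul ((1 : ℝ) / 4)
      refine this.congr_deriv ?_; ring
    exact (h0.congr_of_eventuallyEq
      (Filter.Eventually.of_forall fun b => hw₁ x b)).deriv
  have h2t : ∀ b : ℝ, deriv (fun b => w₂ x b) b
      = (1 / 8) * (-2 * Real.cos b - (Real.pi - 2 * b) * Real.sin b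
          - 2 * x ^ 2 * Real.cos b) := by
    intro b
    have h0 : HasDerivAt
        (fun b : ℝ => (1 / 8) * ((Real.pi - 2 * b) * Real.cos b - 2 * x ^ 2 * Real.sin b))
        ((1 / 8) * (-2 * Real.cos b - (Real.pi - 2 * b) * Real.sin b
          - 2 * x ^ 2 * Real.cos b)) b := by
      have hlin : HasDerivAt (fun b : ℝ => Real.pi - 2 * b) (-2) b := by
        have := ((hasDerivAt_id b).const_mul (2 : ℝ)).const_sub Real.pi
        refine this.congr_deriv ?_; ring
      have h1 : HasDerivAt (fun b : ℝ => (Real.pi - 2 * b) * Real.cos b)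
          (-2 * Real.cos b + (Real.pi - 2 * b) * -Real.sin b) b :=
        hlin.mul (Real.hasDerivAt_cos b)
      have h2 : HasDerivAt (fun b : ℝ => 2 * x ^ 2 * Real.sin b)
          (2 * x ^ 2 * Real.cos b) b :=
        (Real.hasDerivAt_sin b).const_mul (2 * x ^ 2)
      have := (h1.sub h2).const_mul ((1 : ℝ) / 8)
      refine this.congr_deriv ?_; ring
    exact (h0.congr_of_eventuallyEq
      (Filter.Eventually.of_forall fun b => hw₂ x b)).deriv
  -- second derivatives in t
  have D1t : deriv (fun a => deriv (fun b => w₁ x b) a) t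
      = (1 / 4) * (2 * Real.cos t - t * Real.sin t + x ^ 2 * Real.cos t) := by
    have he : (fun a => deriv (fun b => w₁ x b) a)
        = fun b => (1 / 4) * (Real.sin b + b * Real.cos b + x ^ 2 * Real.sin b) :=
      funext h1t
    rw [he]
    have h1 : HasDerivAt (fun b : ℝ => b * Real.cos b) (Real.cos t + t * -Real.sin t) t := by
      have := (hasDerivAt_id t).mul (Real.hasDerivAt_cos t)
      refine this.congr_deriv ?_
      simp only [id_eq, one_mul]
    have h2 : HasDerivAt (fun b : ℝ => x ^ 2 * Real.sin b) (x ^ 2 * Real.cos t) t :=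
      (Real.hasDerivAt_sin t).const_mul (x ^ 2)
    have h0 := (((Real.hasDerivAt_sin t).add h1).add h2).const_mul ((1 : ℝ) / 4)
    have h0' : HasDerivAt
        (fun b : ℝ => (1 / 4) * (Real.sin b + b * Real.cos b + x ^ 2 * Real.sin b))
        ((1 / 4) * (2 * Real.cos t - t * Real.sin t + x ^ 2 * Real.cos t)) t := by
      refine h0.congr_deriv ?_; ring
    exact h0'.deriv
  have D2t : deriv (fun a => deriv (fun b => w₂ x b) a) t
      = (1 / 8) * (4 * Real.sin t - (Real.pi - 2 * t) * Real.cos t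
          + 2 * x ^ 2 * Real.sin t) := by
    have he : (fun a => deriv (fun b => w₂ x b) a)
        = fun b => (1 / 8) * (-2 * Real.cos b - (Real.pi - 2 * b) * Real.sin b
            - 2 * x ^ 2 * Real.cos b) :=
      funext h2t
    rw [he]
    have hlin : HasDerivAt (fun b : ℝ => Real.pi - 2 * b) (-2) t := by
      have := ((hasDerivAt_id t).const_mul (2 : ℝ)).const_sub Real.pi
      refine this.congr_deriv ?_; ring
    have h1 : HasDerivAt (fun b : ℝ => -2 * Real.cos b) (-2 * -Real.sin t) t :=
      (Real.hasDerivAt_cos t).const_mul (-2)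
    have h2 : HasDerivAt (fun b : ℝ => (Real.pi - 2 * b) * Real.sin b)
        (-2 * Real.sin t + (Real.pi - 2 * t) * Real.cos t) t :=
      hlin.mul (Real.hasDerivAt_sin t)
    have h3 : HasDerivAt (fun b : ℝ => 2 * x ^ 2 * Real.cos b)
        (2 * x ^ 2 * -Real.sin t) t :=
      (Real.hasDerivAt_cos t).const_mul (2 * x ^ 2)
    have h0 := ((h1.sub h2).sub h3).const_mul ((1 : ℝ) / 8)
    have h0' : HasDerivAt
        (fun b : ℝ => (1 / 8) * (-2 * Real.cos b - (Real.pi - 2 * b) * Real.sin b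
            - 2 * x ^ 2 * Real.cos b))
        ((1 / 8) * (4 * Real.sin t - (Real.pi - 2 * t) * Real.cos t
            + 2 * x ^ 2 * Real.sin t)) t := by
      refine h0.congr_deriv ?_; ring
    exact h0'.deriv
  have e1 : deriv (fun a => deriv (fun b => w₁ b t) a) x
      + deriv (fun a => deriv (fun b => w₁ x b) a) t + w₁ x t = 0 := by
    rw [D1x, D1t, hw₁]; ring
  have e2 : deriv (fun a => deriv (fun b => w₂ b t) a) x
      + deriv (fun a => deriv (fun b => w₂ x b) a) t + w₂ x t = 0 := by
    rw [D2x, D2t, hw₂]; ring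
  exact ⟨e1, e2, by rw [e1]; ring, by rw [e2]; ring⟩
end

section
/- For every y ∈ (−1,1), ∫₀¹ (−s²y³ + 3s²y² − 3s²y + s² − 3sy² + 6sy − 3s + y² − 2y + 1) / (2(sy − s + 2)·√(s(1−y)(sy − s + 2))) ds = 0. -/
open Set MeasureTheory intervalIntegral

/-- For `y ∈ (-1,1)`, the coefficient `a₁` of `√κ` in the catenoid height expansion
integrates to zero over `s ∈ [0,1]`. -/
theorem integral_a1_eq_zero :
    ∀ y ∈ Set.Ioo (-1 : ℝ) 1,
      (∫ s in (0 : ℝ)..1,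
        (-s ^ 2 * y ^ 3 + 3 * s ^ 2 * y ^ 2 - 3 * s ^ 2 * y + s ^ 2
          - 3 * s * y ^ 2 + 6 * s * y - 3 * s + y ^ 2 - 2 * y + 1)
        / (2 * (s * y - s + 2) * Real.sqrt (s * (1 - y) * (s * y - s + 2)))) = 0 := by
  intro y hy
  obtain ⟨hy1, hy2⟩ := hy
  set g : ℝ → ℝ := fun s =>
    (-s ^ 2 * y ^ 3 + 3 * s ^ 2 * y ^ 2 - 3 * s ^ 2 * y + s ^ 2
      - 3 * s * y ^ 2 + 6 * s * y - 3 * s + y ^ 2 - 2 * y + 1)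
      / (2 * (s * y - s + 2) * Real.sqrt (s * (1 - y) * (s * y - s + 2))) with hg
  set F : ℝ → ℝ := fun s =>
    (1 - y) * (1 - s) * Real.sqrt (s * (1 - y)) / (2 * Real.sqrt (s * y - s + 2)) with hF
  have hc : (0:ℝ) < 1 - y := by linarith
  have hpos : ∀ s ∈ Set.Icc (0:ℝ) 1, 0 < s * y - s + 2 := by
    intro s hs
    nlinarith [hs.1, hs.2]
  -- continuity of F on [0,1]
  have hFcont : ContinuousOn F (Set.Icc 0 1) := by
    apply ContinuousOn.div
    · fun_prop
    · fun_prop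
    · intro s hs
      have h1 := hpos s hs
      positivity
  -- derivative of F on (0,1)
  have hderiv : ∀ s ∈ Set.Ioo (0:ℝ) 1, HasDerivAt F (g s) s := by
    intro s hs
    obtain ⟨hs0, hs1⟩ := hs
    have hD : 0 < s * y - s + 2 := hpos s ⟨hs0.le, hs1.le⟩
    have hA : 0 < s * (1 - y) := by positivity
    set a := Real.sqrt (s * (1 - y)) with haa
    set b := Real.sqrt (s * y - s + 2) with hbb
    have ha0 : 0 < a := Real.sqrt_pos.2 hA
    have hb0 : 0 < b := Real.sqrt_pos.2 hD
    have ha2 : a ^ 2 = s * (1 - y) := Real.sq_sqrt hA.le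
    have hb2 : b ^ 2 = s * y - s + 2 := Real.sq_sqrt hD.le
    have hin1 : HasDerivAt (fun t : ℝ => t * (1 - y)) (1 - y) s := by
      simpa using (hasDerivAt_id s).mul_const (1 - y)
    have hin2 : HasDerivAt (fun t : ℝ => t * y - t + 2) (y - 1) s := by
      simpa using (((hasDerivAt_id s).mul_const y).sub (hasDerivAt_id s)).add_const 2
    have hAd : HasDerivAt (fun t : ℝ => Real.sqrt (t * (1 - y))) ((1 - y) / (2 * a)) s := by
      have := (Real.hasDerivAt_sqrt hA.ne').comp s hin1
      simpa [haa, div_eq_mul_inv, mul_comm, Function.comp_def] using this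
    have hBd : HasDerivAt (fun t : ℝ => Real.sqrt (t * y - t + 2)) ((y - 1) / (2 * b)) s := by
      have := (Real.hasDerivAt_sqrt hD.ne').comp s hin2
      simpa [hbb, div_eq_mul_inv, mul_comm, Function.comp_def] using this
    have hlin : HasDerivAt (fun t : ℝ => (1 - y) * (1 - t)) (-(1 - y)) s := by
      simpa using ((hasDerivAt_const s (1:ℝ)).sub (hasDerivAt_id s)).const_mul (1 - y)
    have hnum : HasDerivAt (fun t : ℝ => (1 - y) * (1 - t) * Real.sqrt (t * (1 - y)))
        (-(1 - y) * a + (1 - y) * (1 - s) * ((1 - y) / (2 * a))) s := by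
      simpa [haa, Pi.mul_def] using hlin.mul hAd
    have hden : HasDerivAt (fun t : ℝ => 2 * Real.sqrt (t * y - t + 2))
        (2 * ((y - 1) / (2 * b))) s := hBd.const_mul 2
    have hFd : HasDerivAt F _ s := hnum.div hden (by positivity)
    convert hFd using 1
    have hab : Real.sqrt (s * (1 - y) * (s * y - s + 2)) = a * b := by
      rw [haa, hbb, ← Real.sqrt_mul hA.le]
    rw [hg]
    simp only [hab, ← haa, ← hbb]
    rw [div_eq_div_iff (by positivity) (by positivity)]
    field_simp
    linear_combination (2*(1-y)*(s*y-s+2)^2 + (1-y)*(1-s)*(y-1)*(s*y-s+2)) * ha2 + (2 * (s * (s * (y * (y * (-y + 3) - 3) + 1) - y ^ 2 * 3 + y * 6 - 3) + y ^ 2 - y * 2 + 1) + 2*(1-y)*(s*y-s+2)*a^2 - (1-y)^2*(1-s)*(s*y-s+2)) * hb2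
  -- integrability of g
  have hint : IntervalIntegrable g volume 0 1 := by
    have hrpow : IntervalIntegrable (fun s : ℝ => s ^ (-(1/2) : ℝ)) volume 0 1 :=
      intervalIntegral.intervalIntegrable_rpow' (by norm_num)
    set h : ℝ → ℝ := fun s =>
      (-s ^ 2 * y ^ 3 + 3 * s ^ 2 * y ^ 2 - 3 * s ^ 2 * y + s ^ 2
        - 3 * s * y ^ 2 + 6 * s * y - 3 * s + y ^ 2 - 2 * y + 1)
        / (2 * (s * y - s + 2) * Real.sqrt ((1 - y) * (s * y - s + 2))) with hh
    have hconth : ContinuousOn h (Set.uIcc 0 1) := by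
      rw [Set.uIcc_of_le (by norm_num : (0:ℝ) ≤ 1)]
      apply ContinuousOn.div (by fun_prop) (by fun_prop)
      intro s hs
      have h1 := hpos s hs
      positivity
    have hmul := hrpow.mul_continuousOn hconth
    rw [intervalIntegrable_iff_integrableOn_Ioc_of_le (by norm_num)] at hmul ⊢
    apply hmul.congr_fun ?_ measurableSet_Ioc
    intro s hs
    obtain ⟨hs0, hs1⟩ := hs
    have hD : 0 < s * y - s + 2 := hpos s ⟨hs0.le, hs1⟩
    have hE : 0 < Real.sqrt ((1 - y) * (s * y - s + 2)) := Real.sqrt_pos.2 (by positivity)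
    have hS : 0 < Real.sqrt s := Real.sqrt_pos.2 hs0
    have hsq : Real.sqrt (s * (1 - y) * (s * y - s + 2))
        = Real.sqrt s * Real.sqrt ((1 - y) * (s * y - s + 2)) := by
      rw [mul_assoc, Real.sqrt_mul hs0.le]
    have h2 : s ^ (-(1/2) : ℝ) = (Real.sqrt s)⁻¹ := by
      rw [Real.rpow_neg hs0.le, Real.sqrt_eq_rpow]
    simp only [hg, hh, hsq, h2]
    field_simp
  have := intervalIntegral.integral_eq_sub_of_hasDeriv_right_of_le (by norm_num) hFcont
    (fun s hsI => (hderiv s hsI).hasDerivWithinAt) hint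
  rw [this]
  have hF1 : F 1 = 0 := by simp [hF]
  have hF0 : F 0 = 0 := by simp [hF]
  rw [hF1, hF0, sub_zero]
end

section
/- For every x ∈ ℝ and y ∈ (0,1), ∫₀¹ [−2s⁴(y−1)⁵ + 2s³(y−5)(y−1)⁴ + s²(10y−13)(y−1)³ + 2s(y−1)(y(x² + 8y − 6) − 2) + y(4x² + (5−3y)y + 7) − 9] / (8(sy − s + 2)²·√(s(1−y)(sy − s + 2))) ds = (1/4)·( x²y/√(1−y²) − arccos y ). -/
open Set intervalIntegral

set_option maxHeartbeats 8000000 in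
/-- For `x ∈ ℝ` and `y ∈ (0,1)`, the coefficient `a₂` of `κ` in the catenoid height
expansion integrates over `s ∈ [0,1]` to `(1/4)(x²y/√(1-y²) - arccos y)`. -/
theorem integral_a2 :
    ∀ x : ℝ, ∀ y ∈ Set.Ioo (0 : ℝ) 1,
      (∫ s in (0 : ℝ)..1,
        (-2 * s ^ 4 * (y - 1) ^ 5 + 2 * s ^ 3 * (y - 5) * (y - 1) ^ 4
          + s ^ 2 * (10 * y - 13) * (y - 1) ^ 3
          + 2 * s * (y - 1) * (y * (x ^ 2 + 8 * y - 6) - 2)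
          + y * (4 * x ^ 2 + (5 - 3 * y) * y + 7) - 9)
        / (8 * (s * y - s + 2) ^ 2 * Real.sqrt (s * (1 - y) * (s * y - s + 2))))
      = (1 / 4) * (x ^ 2 * y / Real.sqrt (1 - y ^ 2) - Real.arccos y) := by
  rintro x y ⟨hy0, hy1⟩
  set f : ℝ → ℝ := fun s =>
    (-2 * s ^ 4 * (y - 1) ^ 5 + 2 * s ^ 3 * (y - 5) * (y - 1) ^ 4
      + s ^ 2 * (10 * y - 13) * (y - 1) ^ 3
      + 2 * s * (y - 1) * (y * (x ^ 2 + 8 * y - 6) - 2)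
      + y * (4 * x ^ 2 + (5 - 3 * y) * y + 7) - 9)
    / (8 * (s * y - s + 2) ^ 2 * Real.sqrt (s * (1 - y) * (s * y - s + 2))) with hf
  set F : ℝ → ℝ := fun s =>
    x ^ 2 * y / (4 * (1 - y)) * (Real.sqrt (s * (1 - y) * (s * y - s + 2)) / (s * y - s + 2))
    + Real.sqrt (s * (1 - y) * (s * y - s + 2)) *
        ((1 - y) * (1 - s) * ((s * (1 - y)) ^ 2 - (2 - y) * (s * (1 - y)) + (3 * (1 - y) - 4))
          / (8 * (s * y - s + 2) ^ 2))
    - 1 / 4 * Real.arcsin (s * (1 - y) - 1) with hF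
  have hq : (0:ℝ) < 1 - y := by linarith
  -- positivity of D on [0,1]
  have hD : ∀ s : ℝ, 0 ≤ s → s ≤ 1 → 0 < s * y - s + 2 := by
    intro s hs hs1
    nlinarith
  -- derivative on Ioo
  have hderiv : ∀ s ∈ Ioo (0:ℝ) 1, HasDerivAt F (f s) s := by
    intro s ⟨hs0, hs1⟩
    have hDpos : 0 < s * y - s + 2 := hD s hs0.le hs1.le
    have hD' : s * (y - 1) + 2 ≠ 0 := (by linarith : 0 < s * (y - 1) + 2).ne'
    have hgpos : 0 < s * (1 - y) * (s * y - s + 2) := by positivity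
    have hSpos : 0 < Real.sqrt (s * (1 - y) * (s * y - s + 2)) := Real.sqrt_pos.2 hgpos
    set S := Real.sqrt (s * (1 - y) * (s * y - s + 2)) with hSdef
    have hS2 : S ^ 2 = s * (1 - y) * (s * y - s + 2) := Real.sq_sqrt hgpos.le
    -- building blocks
    have hDder : HasDerivAt (fun t : ℝ => t * y - t + 2) (1 * y - 1) s :=
      (((hasDerivAt_id s).mul_const y).sub (hasDerivAt_id s)).add_const 2
    have hu : HasDerivAt (fun t : ℝ => t * (1 - y)) (1 * (1 - y)) s :=
      (hasDerivAt_id s).mul_const (1 - y)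
    have hgder : HasDerivAt (fun t : ℝ => t * (1 - y) * (t * y - t + 2))
        (1 * (1 - y) * (s * y - s + 2) + s * (1 - y) * (1 * y - 1)) s := hu.mul hDder
    have hSder0 : HasDerivAt (fun t : ℝ => Real.sqrt (t * (1 - y) * (t * y - t + 2)))
        ((1 * (1 - y) * (s * y - s + 2) + s * (1 - y) * (1 * y - 1)) / (2 * S)) s :=
      hgder.sqrt hgpos.ne'
    have hSder : HasDerivAt (fun t : ℝ => Real.sqrt (t * (1 - y) * (t * y - t + 2)))
        ((1 - y) * (1 - s * (1 - y)) / S) s := by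
      convert hSder0 using 1
      field_simp
      ring
    have hDder : HasDerivAt (fun t : ℝ => t * y - t + 2) (y - 1) s := by
      simpa using hDder
    have hT1 : HasDerivAt (fun t : ℝ =>
        x ^ 2 * y / (4 * (1 - y)) *
          (Real.sqrt (t * (1 - y) * (t * y - t + 2)) / (t * y - t + 2)))
        (x ^ 2 * y / (4 * (1 - y)) *
          (((1 - y) * (1 - s * (1 - y)) / S * (s * y - s + 2) - S * (y - 1))
            / (s * y - s + 2) ^ 2)) s :=
      (hSder.div hDder hDpos.ne').const_mul _
    have hP : HasDerivAt (fun t : ℝ =>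
        (t * (1 - y)) ^ 2 - (2 - y) * (t * (1 - y)) + (3 * (1 - y) - 4))
        (2 * (s * (1 - y)) ^ 1 * (1 * (1 - y)) - (2 - y) * (1 * (1 - y))) s :=
      ((hu.pow 2).sub (hu.const_mul (2 - y))).add_const _
    have h1mt : HasDerivAt (fun t : ℝ => (1 - y) * (1 - t)) ((1 - y) * (0 - 1)) s :=
      (((hasDerivAt_const s (1:ℝ)).sub (hasDerivAt_id s)).const_mul (1 - y))
    have hQ : HasDerivAt (fun t : ℝ =>
        (1 - y) * (1 - t) * ((t * (1 - y)) ^ 2 - (2 - y) * (t * (1 - y)) + (3 * (1 - y) - 4)))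
        ((1 - y) * (0 - 1) * ((s * (1 - y)) ^ 2 - (2 - y) * (s * (1 - y)) + (3 * (1 - y) - 4))
          + (1 - y) * (1 - s) *
            (2 * (s * (1 - y)) ^ 1 * (1 * (1 - y)) - (2 - y) * (1 * (1 - y)))) s := h1mt.mul hP
    have h8D : HasDerivAt (fun t : ℝ => 8 * (t * y - t + 2) ^ 2)
        (8 * (2 * (s * y - s + 2) ^ 1 * (y - 1))) s := by
      simpa [mul_comm] using (hDder.pow 2).const_mul (8:ℝ)
    have h8Dne : 8 * (s * y - s + 2) ^ 2 ≠ 0 := by positivity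
    have hfrac0 := hQ.div h8D h8Dne
    have hfrac : HasDerivAt (fun t : ℝ =>
        (1 - y) * (1 - t) * ((t * (1 - y)) ^ 2 - (2 - y) * (t * (1 - y)) + (3 * (1 - y) - 4))
          / (8 * (t * y - t + 2) ^ 2))
        ((((1 - y) * (0 - 1) * ((s * (1 - y)) ^ 2 - (2 - y) * (s * (1 - y)) + (3 * (1 - y) - 4))
          + (1 - y) * (1 - s) *
            (2 * (s * (1 - y)) * (1 - y) - (2 - y) * (1 - y))) * (s * y - s + 2)
          - 2 * ((1 - y) * (1 - s) *
            ((s * (1 - y)) ^ 2 - (2 - y) * (s * (1 - y)) + (3 * (1 - y) - 4))) * (y - 1))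
          / (8 * (s * y - s + 2) ^ 3)) s := by
      refine hfrac0.congr_deriv (Eq.symm ?_)
      field_simp
    have hT2 := hSder.mul hfrac
    have haff : HasDerivAt (fun t : ℝ => t * (1 - y) - 1) (1 * (1 - y)) s := hu.sub_const 1
    have harg1 : s * (1 - y) - 1 ≠ -1 := by nlinarith
    have harg2 : s * (1 - y) - 1 ≠ 1 := by nlinarith
    have harc0 := (Real.hasDerivAt_arcsin harg1 harg2).comp s haff
    have harc := harc0.const_mul (1/4 : ℝ)
    have hsq : Real.sqrt (1 - (s * (1 - y) - 1) ^ 2) = S := by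
      rw [show 1 - (s * (1 - y) - 1) ^ 2 = s * (1 - y) * (s * y - s + 2) by ring]
    rw [hsq] at harc
    have hS3 : S ^ 3 = s * (1 - y) * (s * y - s + 2) * S := by
      rw [show S ^ 3 = S ^ 2 * S by ring, hS2]
    have hS4 : S ^ 4 = (s * (1 - y) * (s * y - s + 2)) ^ 2 := by
      rw [show S ^ 4 = (S ^ 2) ^ 2 by ring, hS2]
    clear_value S
    rw [← hSdef] at hT2
    have hT1' : HasDerivAt (fun t : ℝ =>
        x ^ 2 * y / (4 * (1 - y)) *
          (Real.sqrt (t * (1 - y) * (t * y - t + 2)) / (t * y - t + 2)))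
        (1 / S * (x ^ 2 * y / (4 * (1 - y)) *
          (((1 - y) * (1 - s * (1 - y)) * (s * y - s + 2)
            - (s * (1 - y) * (s * y - s + 2)) * (y - 1)) / (s * y - s + 2) ^ 2))) s := by
      refine hT1.congr_deriv (Eq.symm ?_)
      field_simp
      ring_nf
      simp only [hS4, hS3, hS2]
      ring
    have hT2' : HasDerivAt (fun t : ℝ =>
        Real.sqrt (t * (1 - y) * (t * y - t + 2)) *
          ((1 - y) * (1 - t) * ((t * (1 - y)) ^ 2 - (2 - y) * (t * (1 - y)) + (3 * (1 - y) - 4))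
            / (8 * (t * y - t + 2) ^ 2)))
        (1 / S * (((1 - y) * (1 - s * (1 - y)) *
            ((1 - y) * (1 - s) * ((s * (1 - y)) ^ 2 - (2 - y) * (s * (1 - y)) + (3 * (1 - y) - 4)))
            * (s * y - s + 2)
          + (s * (1 - y) * (s * y - s + 2)) *
            ((((1 - y) * (0 - 1) * ((s * (1 - y)) ^ 2 - (2 - y) * (s * (1 - y)) + (3 * (1 - y) - 4))
              + (1 - y) * (1 - s) *
                (2 * (s * (1 - y)) * (1 - y) - (2 - y) * (1 - y))) * (s * y - s + 2)
             - 2 * ((1 - y) * (1 - s) *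
                ((s * (1 - y)) ^ 2 - (2 - y) * (s * (1 - y)) + (3 * (1 - y) - 4))) * (y - 1))))
          / (8 * (s * y - s + 2) ^ 3))) s := by
      refine hT2.congr_deriv (Eq.symm ?_)
      field_simp
      ring_nf
      simp only [hS4, hS3, hS2]
      ring
    have hFder := (hT1'.add hT2').sub harc
    refine hFder.congr_deriv (Eq.symm ?_)
    rw [hf]
    show (-2 * s ^ 4 * (y - 1) ^ 5 + 2 * s ^ 3 * (y - 5) * (y - 1) ^ 4
      + s ^ 2 * (10 * y - 13) * (y - 1) ^ 3
      + 2 * s * (y - 1) * (y * (x ^ 2 + 8 * y - 6) - 2)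
      + y * (4 * x ^ 2 + (5 - 3 * y) * y + 7) - 9)
      / (8 * (s * y - s + 2) ^ 2 * Real.sqrt (s * (1 - y) * (s * y - s + 2))) = _
    rw [← hSdef]
    field_simp
    ring
  -- integrability
  have hcontD : Continuous fun s : ℝ => s * y - s + 2 := by continuity
  have hcontN : Continuous fun s : ℝ =>
      (-2 * s ^ 4 * (y - 1) ^ 5 + 2 * s ^ 3 * (y - 5) * (y - 1) ^ 4
        + s ^ 2 * (10 * y - 13) * (y - 1) ^ 3
        + 2 * s * (y - 1) * (y * (x ^ 2 + 8 * y - 6) - 2)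
        + y * (4 * x ^ 2 + (5 - 3 * y) * y + 7) - 9) := by continuity
  have hcontden : Continuous fun s : ℝ =>
      8 * (s * y - s + 2) ^ 2 * Real.sqrt ((1 - y) * (s * y - s + 2)) := by
    exact (continuous_const.mul (hcontD.pow 2)).mul
      (Real.continuous_sqrt.comp (continuous_const.mul hcontD))
  set h : ℝ → ℝ := fun s =>
    (-2 * s ^ 4 * (y - 1) ^ 5 + 2 * s ^ 3 * (y - 5) * (y - 1) ^ 4
      + s ^ 2 * (10 * y - 13) * (y - 1) ^ 3
      + 2 * s * (y - 1) * (y * (x ^ 2 + 8 * y - 6) - 2)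
      + y * (4 * x ^ 2 + (5 - 3 * y) * y + 7) - 9)
    / (8 * (s * y - s + 2) ^ 2 * Real.sqrt ((1 - y) * (s * y - s + 2))) with hh
  have hconth : ContinuousOn h (Icc (0:ℝ) 1) := by
    apply ContinuousOn.div hcontN.continuousOn hcontden.continuousOn
    intro s hs
    have hDpos := hD s hs.1 hs.2
    have : 0 < Real.sqrt ((1 - y) * (s * y - s + 2)) := Real.sqrt_pos.2 (by positivity)
    positivity
  obtain ⟨C, hC⟩ := isCompact_Icc.exists_bound_of_continuousOn hconth
  have hC0 : 0 ≤ C := le_trans (norm_nonneg _) (hC 0 ⟨le_refl _, by norm_num⟩)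
  have hint : IntervalIntegrable f MeasureTheory.volume 0 1 := by
    have hg : IntervalIntegrable (fun s : ℝ => C * s ^ (-(1:ℝ)/2)) MeasureTheory.volume 0 1 :=
      (intervalIntegral.intervalIntegrable_rpow' (by norm_num)).const_mul C
    apply hg.mono_fun
    · exact (hcontN.measurable.div ((continuous_const.mul (hcontD.pow 2)).mul
        (Real.continuous_sqrt.comp (by continuity))).measurable).aestronglyMeasurable
    · rw [Filter.EventuallyLE, MeasureTheory.ae_restrict_iff' measurableSet_uIoc]
      refine MeasureTheory.ae_of_all _ fun s hs => ?_
      rw [Set.uIoc_of_le (by norm_num : (0:ℝ) ≤ 1)] at hs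
      obtain ⟨hs0, hs1⟩ := hs
      have hDpos := hD s hs0.le hs1
      have h1 : Real.sqrt s > 0 := Real.sqrt_pos.2 hs0
      have h2 : (0:ℝ) < Real.sqrt ((1 - y) * (s * y - s + 2)) :=
        Real.sqrt_pos.2 (by positivity)
      have hsplit : Real.sqrt (s * (1 - y) * (s * y - s + 2))
          = Real.sqrt s * Real.sqrt ((1 - y) * (s * y - s + 2)) := by
        rw [show s * (1 - y) * (s * y - s + 2) = s * ((1 - y) * (s * y - s + 2)) by ring]
        exact Real.sqrt_mul hs0.le _
      have hfs : f s = h s / Real.sqrt s := by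
        rw [hf, hh]
        simp only
        rw [hsplit]
        rw [div_div]
        ring
      have hrw : s ^ (-(1:ℝ)/2) = (Real.sqrt s)⁻¹ := by
        rw [show (-(1:ℝ)/2) = -(1/2:ℝ) by norm_num, Real.rpow_neg hs0.le,
          ← Real.sqrt_eq_rpow]
      simp only [hfs, hrw, Real.norm_eq_abs]
      rw [abs_div, abs_of_nonneg (Real.sqrt_nonneg s), abs_mul, abs_of_nonneg hC0,
        abs_of_nonneg (inv_nonneg.2 (Real.sqrt_nonneg s)), div_eq_mul_inv]
      have := hC s ⟨hs0.le, hs1⟩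
      rw [Real.norm_eq_abs] at this
      exact mul_le_mul_of_nonneg_right this (inv_nonneg.2 (Real.sqrt_nonneg s))
  -- limits at the endpoints
  have harc_cont : Continuous fun s : ℝ => 1 / 4 * Real.arcsin (s * (1 - y) - 1) :=
    continuous_const.mul (Real.continuous_arcsin.comp (by continuity))
  have hcontS : Continuous fun s : ℝ => Real.sqrt (s * (1 - y) * (s * y - s + 2)) :=
    Real.continuous_sqrt.comp (by continuity)
  have hcont0 : ContinuousAt F 0 := by
    rw [hF]
    apply ContinuousAt.sub
    apply ContinuousAt.add
    · exact continuousAt_const.mul (hcontS.continuousAt.div hcontD.continuousAt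
        (by norm_num))
    · exact hcontS.continuousAt.mul ((by continuity :
        Continuous fun s : ℝ => (1 - y) * (1 - s) *
          ((s * (1 - y)) ^ 2 - (2 - y) * (s * (1 - y)) + (3 * (1 - y) - 4))).continuousAt.div
        ((continuous_const.mul (hcontD.pow 2)).continuousAt) (by norm_num))
    · exact harc_cont.continuousAt
  have hcont1 : ContinuousAt F 1 := by
    have hD1 : (1:ℝ) * y - 1 + 2 ≠ 0 := by intro hc; nlinarith
    rw [hF]
    apply ContinuousAt.sub
    apply ContinuousAt.add
    · exact continuousAt_const.mul (hcontS.continuousAt.div hcontD.continuousAt hD1)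
    · exact hcontS.continuousAt.mul ((by continuity :
        Continuous fun s : ℝ => (1 - y) * (1 - s) *
          ((s * (1 - y)) ^ 2 - (2 - y) * (s * (1 - y)) + (3 * (1 - y) - 4))).continuousAt.div
        ((continuous_const.mul (hcontD.pow 2)).continuousAt) (by positivity))
    · exact harc_cont.continuousAt
  have key := intervalIntegral.integral_eq_sub_of_hasDerivAt_of_tendsto
    (by norm_num : (0:ℝ) < 1) hderiv hint
    (hcont0.tendsto.mono_left nhdsWithin_le_nhds)
    (hcont1.tendsto.mono_left nhdsWithin_le_nhds)
  rw [key]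
  -- compute F 1 - F 0
  have hy2 : (0:ℝ) < 1 - y ^ 2 := by nlinarith
  have hsq2 : Real.sqrt (1 - y ^ 2) ^ 2 = 1 - y ^ 2 := Real.sq_sqrt hy2.le
  have hsqpos : 0 < Real.sqrt (1 - y ^ 2) := Real.sqrt_pos.2 hy2
  have hF0 : F 0 = Real.pi / 8 := by
    rw [hF]
    norm_num [Real.arcsin_neg_one]
    ring
  have hdiv : Real.sqrt (1 - y ^ 2) / (y + 1) = (1 - y) / Real.sqrt (1 - y ^ 2) := by
    rw [div_eq_div_iff (by linarith : (y:ℝ) + 1 ≠ 0) hsqpos.ne']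
    linear_combination hsq2
  have hF1 : F 1 = x ^ 2 * y / (4 * Real.sqrt (1 - y ^ 2)) + 1 / 4 * Real.arcsin y := by
    rw [hF]
    simp only
    rw [show (1:ℝ) * (1 - y) * (1 * y - 1 + 2) = 1 - y ^ 2 by ring,
      show (1:ℝ) * (1 - y) - 1 = -y by ring, Real.arcsin_neg,
      show (1:ℝ) * y - 1 + 2 = y + 1 by ring, show (1:ℝ) - 1 = 0 by ring, hdiv]
    field_simp
    ring
  rw [hF1, hF0, Real.arccos]
  ring
end

section
/- For every x ∈ ℝ and y ∈ (0,1), ∫₀¹ [−2s⁴(y−1)⁵ + 2s³(y−5)(y−1)⁴ + s²(10y−17)(y−1)³ + 2s(y−1)(−(x²+14)y + 8y² + 6) − y(4x² + y(3y−5) + 9) + 7] / (8(s(y−1) + 2)²·√(s(1−y)(s(y−1) + 2))) ds = (1/4)·( arccos y − x²y/√(1−y²) ). In particular this integral is the negative of ∫₀¹ a₂(x,y,s) ds = (1/4)(x²y/√(1−y²) − arccos y), so the Jacobi field on the parabolic catenoid generated by deformation into tall rectangles is the negative of the one generated by deformation into catenoids. -/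
open Real Set intervalIntegral

set_option maxHeartbeats 1000000 in
/-- For `x ∈ ℝ` and `y ∈ (0,1)`, the coefficient `h₂` of `d` in the tall-rectangle
height expansion integrates over `s ∈ [0,1]` to `(1/4)(arccos y - x²y/√(1-y²))`;
in particular this is the negative of `∫₀¹ a₂(x,y,s) ds = (1/4)(x²y/√(1-y²) - arccos y)`,
so the Jacobi field generated by deformation into tall rectangles is the negative of the
one generated by deformation into catenoids. -/
theorem integral_h2 :
    ∀ x : ℝ, ∀ y ∈ Set.Ioo (0 : ℝ) 1,
      (∫ s in (0 : ℝ)..1,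
        (-2 * s ^ 4 * (y - 1) ^ 5 + 2 * s ^ 3 * (y - 5) * (y - 1) ^ 4
          + s ^ 2 * (10 * y - 17) * (y - 1) ^ 3
          + 2 * s * (y - 1) * (-(x ^ 2 + 14) * y + 8 * y ^ 2 + 6)
          - y * (4 * x ^ 2 + y * (3 * y - 5) + 9) + 7)
        / (8 * (s * (y - 1) + 2) ^ 2 * Real.sqrt (s * (1 - y) * (s * (y - 1) + 2))))
      = (1 / 4) * (Real.arccos y - x ^ 2 * y / Real.sqrt (1 - y ^ 2)) ∧
      (1 / 4) * (Real.arccos y - x ^ 2 * y / Real.sqrt (1 - y ^ 2))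
        = -((1 / 4) * (x ^ 2 * y / Real.sqrt (1 - y ^ 2) - Real.arccos y)) := by
  intro x y hy
  obtain ⟨hy0, hy1⟩ := hy
  refine ⟨?_, by ring⟩
  have hym : y - 1 ≠ 0 := by intro h; nlinarith [h]
  have h1y : (0:ℝ) < 1 - y := by linarith
  obtain ⟨c0, hc0⟩ : ∃ c : ℝ, c = (3*y+1)*(y-1)/8 + x^2*y/(2*(y-1)) := ⟨_, rfl⟩
  obtain ⟨c1, hc1⟩ : ∃ c : ℝ, c = (y-1)*(y^2-6*y+1)/8 + x^2*y/4 := ⟨_, rfl⟩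
  obtain ⟨c2, hc2⟩ : ∃ c : ℝ, c = (y-1)^2*(3-2*y)/8 := ⟨_, rfl⟩
  obtain ⟨c3, hc3⟩ : ∃ c : ℝ, c = (y-1)^3/8 := ⟨_, rfl⟩
  obtain ⟨P, hP⟩ : ∃ P : ℝ → ℝ, P = fun s => c0 + c1*s + c2*s^2 + c3*s^3 := ⟨_, rfl⟩
  obtain ⟨N, hN⟩ : ∃ N : ℝ → ℝ, N = fun s =>
      -2 * s ^ 4 * (y - 1) ^ 5 + 2 * s ^ 3 * (y - 5) * (y - 1) ^ 4
        + s ^ 2 * (10 * y - 17) * (y - 1) ^ 3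
        + 2 * s * (y - 1) * (-(x ^ 2 + 14) * y + 8 * y ^ 2 + 6)
        - y * (4 * x ^ 2 + y * (3 * y - 5) + 9) + 7 := ⟨_, rfl⟩
  obtain ⟨F, hF⟩ : ∃ F : ℝ → ℝ, F = fun s =>
      1/4 * Real.arccos (1 - s*(1-y))
        + P s * Real.sqrt (s*(1-y)*(s*(y-1)+2)) / (s*(y-1)+2)^2 := ⟨_, rfl⟩
  have hfN : (fun s : ℝ =>
      (-2 * s ^ 4 * (y - 1) ^ 5 + 2 * s ^ 3 * (y - 5) * (y - 1) ^ 4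
          + s ^ 2 * (10 * y - 17) * (y - 1) ^ 3
          + 2 * s * (y - 1) * (-(x ^ 2 + 14) * y + 8 * y ^ 2 + 6)
          - y * (4 * x ^ 2 + y * (3 * y - 5) + 9) + 7)
        / (8 * (s * (y - 1) + 2) ^ 2 * Real.sqrt (s * (1 - y) * (s * (y - 1) + 2))))
      = fun s => N s / (8 * (s * (y - 1) + 2) ^ 2
          * Real.sqrt (s * (1 - y) * (s * (y - 1) + 2))) := by
    rw [hN]
  rw [hfN]
  have hwpos : ∀ s ∈ Icc (0:ℝ) 1, 0 < s*(y-1)+2 := by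
    intro s hs; nlinarith [hs.1, hs.2]
  have hPc : Continuous P := by rw [hP]; fun_prop
  have hNc : Continuous N := by rw [hN]; fun_prop
  -- continuity of F on [0,1]
  have hcont : ContinuousOn F (Icc 0 1) := by
    rw [hF]
    apply ContinuousOn.add
    · exact (continuous_const.mul (Real.continuous_arccos.comp
        (by fun_prop : Continuous fun s : ℝ => 1 - s*(1-y)))).continuousOn
    · apply ContinuousOn.div
      · exact (hPc.mul (Real.continuous_sqrt.comp
          (by fun_prop : Continuous fun s : ℝ => s*(1-y)*(s*(y-1)+2)))).continuousOn
      · exact (by fun_prop : Continuous fun s : ℝ => (s*(y-1)+2)^2).continuousOn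
      · intro s hs; exact pow_ne_zero _ (hwpos s hs).ne'
  -- derivative of F on (0,1)
  have hderiv : ∀ s ∈ Ioo (0:ℝ) 1, HasDerivAt F
      (N s / (8 * (s * (y - 1) + 2) ^ 2
        * Real.sqrt (s * (1 - y) * (s * (y - 1) + 2)))) s := by
    intro s hs
    obtain ⟨hs0, hs1⟩ := hs
    have hw : 0 < s*(y-1)+2 := hwpos s ⟨hs0.le, hs1.le⟩
    have hQpos : 0 < s*(1-y)*(s*(y-1)+2) := by positivity
    obtain ⟨r, hr⟩ : ∃ r : ℝ, r = Real.sqrt (s*(1-y)*(s*(y-1)+2)) := ⟨_, rfl⟩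
    have hrpos : 0 < r := hr ▸ Real.sqrt_pos.mpr hQpos
    have hr2 : r^2 = s*(1-y)*(s*(y-1)+2) := hr ▸ Real.sq_sqrt hQpos.le
    have hz1 : 1 - s*(1-y) ≠ -1 := by nlinarith
    have hz2 : 1 - s*(1-y) ≠ 1 := by nlinarith
    have hzd : HasDerivAt (fun t : ℝ => 1 - t*(1-y)) (-(1*(1-y))) s :=
      ((hasDerivAt_id s).mul_const (1-y)).const_sub 1
    have hac : HasDerivAt (fun t : ℝ => Real.arccos (1 - t*(1-y)))
        ((-(1 / Real.sqrt (1 - (1 - s*(1-y))^2))) * (-(1*(1-y)))) s :=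
      HasDerivAt.comp (h₂ := Real.arccos) (h := fun t : ℝ => 1 - t*(1-y)) s
        (Real.hasDerivAt_arccos hz1 hz2) hzd
    have hQd : HasDerivAt (fun t : ℝ => t*(1-y)*(t*(y-1)+2))
        (1*(1-y)*(s*(y-1)+2) + s*(1-y)*(1*(y-1))) s :=
      ((hasDerivAt_id s).mul_const (1-y)).mul
        (((hasDerivAt_id s).mul_const (y-1)).add_const 2)
    have hrd : HasDerivAt (fun t : ℝ => Real.sqrt (t*(1-y)*(t*(y-1)+2)))
        ((1*(1-y)*(s*(y-1)+2) + s*(1-y)*(1*(y-1))) / (2*r)) s := by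
      rw [hr]; exact hQd.sqrt hQpos.ne'
    have hPd : HasDerivAt P (c1 + c2*(2*s) + c3*(3*s^2)) s := by
      rw [hP]
      have h := ((((hasDerivAt_const s c0).add
          ((hasDerivAt_id s).const_mul c1)).add
          ((hasDerivAt_pow 2 s).const_mul c2)).add
          ((hasDerivAt_pow 3 s).const_mul c3))
      exact h.congr_deriv (by push_cast; ring)
    have hwd : HasDerivAt (fun t : ℝ => (t*(y-1)+2)^2)
        (2*(s*(y-1)+2)^1*(1*(y-1))) s := by
      have h := (((hasDerivAt_id s).mul_const (y-1)).add_const 2).pow 2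
      exact h.congr_deriv (by simp only [id]; push_cast; ring)
    have hG : HasDerivAt (fun t : ℝ => P t * Real.sqrt (t*(1-y)*(t*(y-1)+2)) / (t*(y-1)+2)^2)
        ((((c1 + c2*(2*s) + c3*(3*s^2)) * Real.sqrt (s*(1-y)*(s*(y-1)+2))
            + P s * ((1*(1-y)*(s*(y-1)+2) + s*(1-y)*(1*(y-1))) / (2*r))) * (s*(y-1)+2)^2
          - P s * Real.sqrt (s*(1-y)*(s*(y-1)+2)) * (2*(s*(y-1)+2)^1*(1*(y-1))))
            / ((s*(y-1)+2)^2)^2) s :=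
      (hPd.mul hrd).div hwd (pow_ne_zero _ hw.ne')
    have hFd := (hac.const_mul (1/4 : ℝ)).add hG
    replace hFd : HasDerivAt F (1/4 * ((-(1 / Real.sqrt (1 - (1 - s*(1-y))^2))) * (-(1*(1-y))))
        + ((((c1 + c2*(2*s) + c3*(3*s^2)) * Real.sqrt (s*(1-y)*(s*(y-1)+2))
            + P s * ((1*(1-y)*(s*(y-1)+2) + s*(1-y)*(1*(y-1))) / (2*r))) * (s*(y-1)+2)^2
          - P s * Real.sqrt (s*(1-y)*(s*(y-1)+2)) * (2*(s*(y-1)+2)^1*(1*(y-1))))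
            / ((s*(y-1)+2)^2)^2)) s := by
      rw [hF]; exact hFd
    have hsqeq : Real.sqrt (1 - (1 - s*(1-y))^2) = r := by
      rw [show (1 : ℝ) - (1 - s*(1-y))^2 = s*(1-y)*(s*(y-1)+2) by ring, hr]
    rw [hsqeq, ← hr] at hFd
    convert hFd using 1
    rw [← hr]
    have key : (1/4 : ℝ) * ((-(1 / r)) * (-(1*(1-y))))
        + (((c1 + c2*(2*s) + c3*(3*s^2)) * r
            + P s * ((1*(1-y)*(s*(y-1)+2) + s*(1-y)*(1*(y-1))) / (2*r))) * (s*(y-1)+2)^2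
          - P s * r * (2*(s*(y-1)+2)^1*(1*(y-1)))) / ((s*(y-1)+2)^2)^2
        = (2*(1-y)*(s*(y-1)+2)^3
            + 8*r^2*(c1 + c2*(2*s) + c3*(3*s^2))*(s*(y-1)+2)
            + 4*(P s)*(1*(1-y)*(s*(y-1)+2) + s*(1-y)*(1*(y-1)))*(s*(y-1)+2)
            - 16*(P s)*r^2*(y-1)) / (8*r*(s*(y-1)+2)^3) := by
      field_simp
      ring
    have key2 : 2*(1-y)*(s*(y-1)+2)^3
            + 8*(s*(1-y)*(s*(y-1)+2))*(c1 + c2*(2*s) + c3*(3*s^2))*(s*(y-1)+2)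
            + 4*(P s)*(1*(1-y)*(s*(y-1)+2) + s*(1-y)*(1*(y-1)))*(s*(y-1)+2)
            - 16*(P s)*(s*(1-y)*(s*(y-1)+2))*(y-1)
        = N s * (s*(y-1)+2) := by
      rw [hP, hN, hc0, hc1, hc2, hc3]
      field_simp
      ring
    rw [key, hr2, key2]
    rw [div_eq_div_iff
      (mul_pos (by positivity : (0:ℝ) < 8 * (s*(y-1)+2)^2) hrpos).ne'
      (mul_pos (mul_pos (by norm_num : (0:ℝ) < 8) hrpos) (pow_pos hw 3)).ne']
    ring
  -- interval integrability of the integrand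
  have hint : IntervalIntegrable
      (fun s => N s / (8 * (s * (y - 1) + 2) ^ 2
        * Real.sqrt (s * (1 - y) * (s * (y - 1) + 2)))) MeasureTheory.volume 0 1 := by
    have hg : ContinuousOn (fun s : ℝ =>
        N s / (8 * (s*(y-1)+2)^2 * Real.sqrt ((1-y)*(s*(y-1)+2)))) (uIcc 0 1) := by
      rw [uIcc_of_le (by norm_num)]
      apply ContinuousOn.div
      · exact hNc.continuousOn
      · exact (by fun_prop : Continuous fun s : ℝ =>
          8*(s*(y-1)+2)^2*Real.sqrt ((1-y)*(s*(y-1)+2))).continuousOn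
      · intro s hs
        have hw := hwpos s hs
        have : 0 < Real.sqrt ((1-y)*(s*(y-1)+2)) := Real.sqrt_pos.mpr (by positivity)
        positivity
    have h0 : IntervalIntegrable (fun s : ℝ => s ^ (-(1/2) : ℝ) *
        (N s / (8 * (s*(y-1)+2)^2 * Real.sqrt ((1-y)*(s*(y-1)+2)))))
        MeasureTheory.volume 0 1 :=
      (intervalIntegrable_rpow' (by norm_num)).mul_continuousOn hg
    rw [intervalIntegrable_iff] at h0 ⊢
    apply h0.congr_fun ?_ measurableSet_uIoc
    intro s hs
    rw [uIoc_of_le (by norm_num)] at hs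
    obtain ⟨hs0, hs1⟩ := hs
    have hw : 0 < s*(y-1)+2 := hwpos s ⟨hs0.le, hs1⟩
    have hsq : Real.sqrt (s*(1-y)*(s*(y-1)+2))
        = Real.sqrt s * Real.sqrt ((1-y)*(s*(y-1)+2)) := by
      rw [mul_assoc, Real.sqrt_mul hs0.le]
    have hrp : s ^ (-(1/2) : ℝ) = (Real.sqrt s)⁻¹ := by
      rw [Real.rpow_neg hs0.le, Real.sqrt_eq_rpow]
    have hss : 0 < Real.sqrt s := Real.sqrt_pos.mpr hs0
    have hs2 : 0 < Real.sqrt ((1-y)*(s*(y-1)+2)) := Real.sqrt_pos.mpr (by positivity)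
    simp only
    rw [hsq, hrp, inv_mul_eq_div, div_div]
    congr 1
    ring
  have hFTC := intervalIntegral.integral_eq_sub_of_hasDeriv_right_of_le (by norm_num)
    hcont (fun s hs => (hderiv s hs).hasDerivWithinAt) hint
  rw [hFTC]
  -- evaluate F 1 - F 0
  have hF0 : F 0 = 0 := by
    rw [hF]
    norm_num [Real.arccos_one]
  have hsq1 : Real.sqrt (1*(1-y)*(1*(y-1)+2)) = Real.sqrt (1 - y^2) := by
    rw [show (1:ℝ)*(1-y)*(1*(y-1)+2) = 1 - y^2 by ring]
  have hF1 : F 1 = 1/4 * Real.arccos y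
      + P 1 * Real.sqrt (1 - y^2) / (y+1)^2 := by
    rw [hF]
    simp only
    rw [hsq1, show (1:ℝ) - 1*(1-y) = y by ring, show (1:ℝ)*(y-1)+2 = y+1 by ring]
  rw [hF1, hF0, sub_zero]
  have hP1 : P 1 = x^2*y*(y+1)/(4*(y-1)) := by
    rw [hP, hc0, hc1, hc2, hc3]
    simp only
    field_simp
    ring
  rw [hP1]
  have h1y2 : (0:ℝ) < 1 - y^2 := by nlinarith
  have hsp : 0 < Real.sqrt (1 - y^2) := Real.sqrt_pos.mpr h1y2
  have hsq2 : Real.sqrt (1 - y^2) ^ 2 = 1 - y^2 := Real.sq_sqrt h1y2.le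
  have hyp1 : (y:ℝ) + 1 ≠ 0 := by positivity
  field_simp
  linear_combination (y*x^2) * hsq2
end

section
/- Let u : ℝ × [0,π] → ℝ be twice continuously differentiable, satisfy ∂²u/∂x² + ∂²u/∂t² + u = 0 on ℝ × (0,π), vanish on the boundary (u(x,0) = u(x,π) = 0 for all x ∈ ℝ), and have at most polynomial growth: there exist C > 0 and N ∈ ℕ with |u(x,t)| ≤ C(1 + |x|)^N for all (x,t). Then there exist real constants a, b such that u(x,t) = (a + b·x)·sin t for all (x,t) ∈ ℝ × [0,π]. -/
open Set Real Filter MeasureTheory intervalIntegral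


lemma jacobi_barrier {d e r : ℝ → ℝ} (hd : ∀ x, HasDerivAt d (e x) x)
    (he : ∀ x, HasDerivAt e (r x) x) (hr : ∀ x, 0 ≤ d x → 0 ≤ r x)
    {a b : ℝ} (ha : d a < 0) (hb : d b < 0) :
    ∀ x ∈ Set.Icc a b, d x ≤ 0 := by
  by_contra hcon
  push_neg at hcon
  obtain ⟨x1, hx1, hx1pos⟩ := hcon
  have hab : a ≤ b := le_trans hx1.1 hx1.2
  have hcontd : Continuous d := by
    exact continuous_iff_continuousAt.2 fun x => (hd x).continuousAt
  have hconte : Continuous e := by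
    exact continuous_iff_continuousAt.2 fun x => (he x).continuousAt
  obtain ⟨c, hc, hmax⟩ := isCompact_Icc.exists_isMaxOn ⟨x1, hx1⟩ hcontd.continuousOn
  have hdc : 0 < d c := lt_of_lt_of_le hx1pos (hmax hx1)
  have hca : a < c := lt_of_le_of_ne hc.1 (by rintro rfl; exact absurd hdc (not_lt.2 ha.le))
  have hcb : c < b := lt_of_le_of_ne hc.2 (by rintro rfl; exact absurd hdc (not_lt.2 hb.le))
  have hloc : IsLocalMax d c := hmax.isLocalMax (Icc_mem_nhds hca hcb)
  have he0 : e c = 0 := by rw [← (hd c).deriv]; exact hloc.deriv_eq_zero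
  -- first zero of d to the right of c
  set S : Set ℝ := Icc c b ∩ d ⁻¹' {0} with hS
  have hSne : S.Nonempty := by
    have h0 : (0:ℝ) ∈ Icc (d b) (d c) := ⟨hb.le, hdc.le⟩
    obtain ⟨z, hz, hz0⟩ := intermediate_value_Icc' hc.2 hcontd.continuousOn h0
    exact ⟨z, hz, hz0⟩
  have hScl : IsClosed S := isClosed_Icc.inter (isClosed_singleton.preimage hcontd)
  have hSbdd : BddBelow S := ⟨c, fun y hy => hy.1.1⟩
  set s := sInf S with hs
  have hsS : s ∈ S := hScl.csInf_mem hSne hSbdd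
  have hcs : c ≤ s := le_csInf hSne fun y hy => hy.1.1
  have hds : d s = 0 := hsS.2
  have hpos : ∀ y ∈ Ico c s, 0 < d y := by
    intro y hy
    rcases lt_trichotomy (d y) 0 with hneg | h0 | hp
    · exfalso
      have h0 : (0:ℝ) ∈ Icc (d y) (d c) := ⟨hneg.le, hdc.le⟩
      obtain ⟨z, hz, hz0⟩ := intermediate_value_Icc' hy.1 hcontd.continuousOn h0
      have hzS : z ∈ S := ⟨⟨hz.1, le_trans hz.2 (le_trans hy.2.le hsS.1.2)⟩, hz0⟩
      exact absurd (csInf_le hSbdd hzS) (not_le.2 (lt_of_le_of_lt hz.2 hy.2))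
    · exfalso
      have hyS : y ∈ S := ⟨⟨hy.1, le_trans hy.2.le hsS.1.2⟩, h0⟩
      exact absurd (csInf_le hSbdd hyS) (not_le.2 hy.2)
    · exact hp
  have hnn : ∀ y ∈ Icc c s, 0 ≤ d y := by
    intro y hy
    rcases eq_or_lt_of_le hy.2 with h | h
    · rw [h, hds]
    · exact (hpos y ⟨hy.1, h⟩).le
  -- e monotone on [c,s]
  have hemono : MonotoneOn e (Icc c s) := by
    apply monotoneOn_of_deriv_nonneg (convex_Icc c s) hconte.continuousOn
      (fun x _ => ((he x).differentiableAt.differentiableWithinAt))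
    intro x hx
    rw [interior_Icc] at hx
    rw [(he x).deriv]
    exact hr x (hnn x (Ioo_subset_Icc_self hx))
  have hennn : ∀ y ∈ Icc c s, 0 ≤ e y := by
    intro y hy
    have := hemono (left_mem_Icc.2 hcs) hy hy.1
    rwa [he0] at this
  have hdmono : MonotoneOn d (Icc c s) := by
    apply monotoneOn_of_deriv_nonneg (convex_Icc c s) hcontd.continuousOn
      (fun x _ => ((hd x).differentiableAt.differentiableWithinAt))
    intro x hx
    rw [interior_Icc] at hx
    rw [(hd x).deriv]
    exact hennn x (Ioo_subset_Icc_self hx)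
  have : d c ≤ d s := hdmono (left_mem_Icc.2 hcs) (right_mem_Icc.2 hcs) hcs
  rw [hds] at this
  exact absurd hdc (not_lt.2 this)



lemma jacobi_ode_half {lam : ℝ} (hlam : 1 ≤ lam) {v w : ℝ → ℝ}
    (hv : ∀ x, HasDerivAt v (w x) x) (hw : ∀ x, HasDerivAt w (lam * v x) x)
    {C : ℝ} {N : ℕ} (hC : 0 < C) (hbound : ∀ x, |v x| ≤ C * (1 + |x|) ^ N) :
    ∀ x, v x ≤ 0 := by
  intro x0
  have key : ∀ ε > (0:ℝ), v x0 ≤ ε := by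
    intro ε hε
    -- find R
    have htend : Tendsto (fun R : ℝ => (1 + |x0| + R) ^ N * exp (-R)) atTop (nhds 0) := by
      have h1 : Tendsto (fun R : ℝ => R + (1 + |x0|)) atTop atTop :=
        tendsto_atTop_add_const_right _ _ tendsto_id
      have h2 := (Real.tendsto_pow_mul_exp_neg_atTop_nhds_zero N).comp h1
      have h3 : Tendsto (fun R : ℝ => (R + (1 + |x0|)) ^ N * exp (-(R + (1 + |x0|))) * exp (1 + |x0|))
          atTop (nhds (0 * exp (1 + |x0|))) := h2.mul_const _
      rw [zero_mul] at h3
      refine h3.congr (fun R => ?_)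
      rw [mul_assoc, ← Real.exp_add]
      ring_nf
    have hev : ∀ᶠ R in atTop, (1 + |x0| + R) ^ N * exp (-R) < ε / (2 * C) := by
      exact (htend.eventually (eventually_lt_nhds (by positivity))).mono (fun R h => h)
    obtain ⟨R, hR0, hRlt⟩ : ∃ R : ℝ, 0 < R ∧ (1 + |x0| + R) ^ N * exp (-R) < ε / (2 * C) := by
      obtain ⟨R, hR⟩ := ((eventually_gt_atTop (0:ℝ)).and hev).exists
      exact ⟨R, hR.1, hR.2⟩
    have hkey : C * (1 + |x0| + R) ^ N < ε * Real.cosh R := by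
      have h1 : C * ((1 + |x0| + R) ^ N * exp (-R)) < C * (ε / (2 * C)) :=
        mul_lt_mul_of_pos_left hRlt hC
      have h2 : C * (ε / (2 * C)) = ε / 2 := by field_simp
      have h3 : C * (1 + |x0| + R) ^ N < ε / 2 * exp R := by
        calc C * (1 + |x0| + R) ^ N = C * ((1 + |x0| + R) ^ N * exp (-R)) * exp R := by
              rw [mul_assoc, mul_assoc, ← Real.exp_add]; simp
          _ < C * (ε / (2 * C)) * exp R := by
              exact mul_lt_mul_of_pos_right h1 (exp_pos R)
          _ = ε / 2 * exp R := by rw [h2]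
      calc C * (1 + |x0| + R) ^ N < ε / 2 * exp R := h3
        _ ≤ ε * Real.cosh R := by
            rw [Real.cosh_eq]
            have := (Real.exp_pos (-R)).le
            nlinarith [hε.le, Real.exp_pos R]
    -- barrier functions
    set d : ℝ → ℝ := fun x => v x - ε * Real.cosh (x - x0) with hddef
    set e : ℝ → ℝ := fun x => w x - ε * Real.sinh (x - x0) with hedef
    set r : ℝ → ℝ := fun x => lam * v x - ε * Real.cosh (x - x0) with hrdef
    have hcoshD : ∀ x : ℝ, HasDerivAt (fun x => Real.cosh (x - x0)) (Real.sinh (x - x0)) x := by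
      intro x
      simpa [Function.comp_def] using (Real.hasDerivAt_cosh (x - x0)).comp x ((hasDerivAt_id x).sub_const x0)
    have hsinhD : ∀ x : ℝ, HasDerivAt (fun x => Real.sinh (x - x0)) (Real.cosh (x - x0)) x := by
      intro x
      simpa [Function.comp_def] using (Real.hasDerivAt_sinh (x - x0)).comp x ((hasDerivAt_id x).sub_const x0)
    have hd : ∀ x, HasDerivAt d (e x) x := fun x =>
      (hv x).sub (((hcoshD x)).const_mul ε)
    have he : ∀ x, HasDerivAt e (r x) x := fun x =>
      (hw x).sub (((hsinhD x)).const_mul ε)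
    have hr : ∀ x, 0 ≤ d x → 0 ≤ r x := by
      intro x hx
      have hcosh : 0 ≤ ε * Real.cosh (x - x0) := by positivity
      have : r x = lam * d x + (lam - 1) * (ε * Real.cosh (x - x0)) := by
        simp only [hrdef, hddef]; ring
      rw [this]
      have h1 : 0 ≤ lam * d x := mul_nonneg (by linarith) hx
      nlinarith
    have hend : ∀ x : ℝ, |x - x0| = R → d x < 0 := by
      intro x hx
      have h1 : |x| ≤ |x0| + R := by
        have := abs_sub_abs_le_abs_sub x x0
        rw [hx] at this; linarith
      have h2 : v x ≤ C * (1 + |x0| + R) ^ N := by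
        calc v x ≤ |v x| := le_abs_self _
          _ ≤ C * (1 + |x|) ^ N := hbound x
          _ ≤ C * (1 + |x0| + R) ^ N := by
              apply mul_le_mul_of_nonneg_left _ hC.le
              apply pow_le_pow_left₀ (by positivity) (by linarith)
      have h3 : Real.cosh (x - x0) = Real.cosh R := by
        rw [← Real.cosh_abs, hx]
      simp only [hddef]
      rw [h3]
      linarith
    have hda : d (x0 - R) < 0 := hend _ (by rw [abs_of_nonpos (by linarith)]; ring)
    have hdb : d (x0 + R) < 0 := hend _ (by rw [abs_of_nonneg (by linarith)]; ring)
    have := jacobi_barrier hd he hr hda hdb x0 ⟨by linarith, by linarith⟩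
    simp only [hddef, sub_self, Real.cosh_zero] at this
    linarith
  by_contra hcon
  push_neg at hcon
  exact absurd (key (v x0 / 2) (by linarith)) (by linarith)

lemma jacobi_ode_vanish {lam : ℝ} (hlam : 1 ≤ lam) {v w : ℝ → ℝ}
    (hv : ∀ x, HasDerivAt v (w x) x) (hw : ∀ x, HasDerivAt w (lam * v x) x)
    {C : ℝ} {N : ℕ} (hC : 0 < C) (hbound : ∀ x, |v x| ≤ C * (1 + |x|) ^ N) :
    ∀ x, v x = 0 := by
  intro x
  have h1 := jacobi_ode_half hlam hv hw hC hbound x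
  have h2 := jacobi_ode_half hlam (v := fun x => -v x) (w := fun x => -w x)
    (fun x => (hv x).neg) (fun x => by have h := (hw x).neg; rw [← mul_neg] at h; exact h) hC
    (fun x => by simpa using hbound x) x
  simp at h2
  linarith


namespace JacobiAux

noncomputable section

def St : Set (ℝ × ℝ) := Set.univ ×ˢ Set.Icc 0 Real.pi

def fu (u : ℝ → ℝ → ℝ) : ℝ × ℝ → ℝ := fun p => u p.1 p.2

def F1 (u : ℝ → ℝ → ℝ) : ℝ × ℝ → (ℝ × ℝ →L[ℝ] ℝ) := fderivWithin ℝ (fu u) St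

def F2 (u : ℝ → ℝ → ℝ) : ℝ × ℝ → (ℝ × ℝ →L[ℝ] (ℝ × ℝ →L[ℝ] ℝ)) := fderivWithin ℝ (F1 u) St

lemma huniq : UniqueDiffOn ℝ St := uniqueDiffOn_univ.prod (uniqueDiffOn_Icc Real.pi_pos)

variable {u : ℝ → ℝ → ℝ} (hreg : ContDiffOn ℝ 2 (fu u) St)
include hreg

lemma hF1c : ContDiffOn ℝ 1 (F1 u) St := hreg.fderivWithin huniq (by norm_num)

lemma hF2cont : ContinuousOn (F2 u) St :=
  (((hF1c hreg).fderivWithin huniq (by norm_num)) :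
    ContDiffOn ℝ 0 (F2 u) St).continuousOn

lemma hfd1 : ∀ p ∈ St, HasFDerivWithinAt (fu u) (F1 u p) St p := fun p hp =>
  ((hreg.differentiableOn (by norm_num)) p hp).hasFDerivWithinAt

lemma hfd2 : ∀ p ∈ St, HasFDerivWithinAt (F1 u) (F2 u p) St p := fun p hp =>
  (((hF1c hreg).differentiableOn one_ne_zero) p hp).hasFDerivWithinAt

omit hreg in
lemma mem_St {x t : ℝ} (ht : t ∈ Icc 0 Real.pi) : (x, t) ∈ St := ⟨trivial, ht⟩

/-- x-slice first derivative -/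
lemma hxslice1 {t : ℝ} (ht : t ∈ Icc 0 Real.pi) (x : ℝ) :
    HasDerivAt (fun b => u b t) ((F1 u (x, t)) (1, 0)) x := by
  have hι : HasDerivWithinAt (fun b : ℝ => ((b, t) : ℝ × ℝ)) ((1 : ℝ), (0 : ℝ)) Set.univ x :=
    ((hasDerivAt_id x).prodMk (hasDerivAt_const x t)).hasDerivWithinAt
  have h := (hfd1 hreg (x, t) (mem_St ht)).comp_hasDerivWithinAt x hι
    (fun b _ => mem_St ht)
  rw [hasDerivWithinAt_univ] at h
  exact h

/-- x-slice second derivative -/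
lemma hxslice2 {t : ℝ} (ht : t ∈ Icc 0 Real.pi) (x : ℝ) :
    HasDerivAt (fun b => (F1 u (b, t)) (1, 0)) ((F2 u (x, t)) (1, 0) (1, 0)) x := by
  have hι : HasDerivWithinAt (fun b : ℝ => ((b, t) : ℝ × ℝ)) ((1 : ℝ), (0 : ℝ)) Set.univ x :=
    ((hasDerivAt_id x).prodMk (hasDerivAt_const x t)).hasDerivWithinAt
  have h := (hfd2 hreg (x, t) (mem_St ht)).comp_hasDerivWithinAt x hι
    (fun b _ => mem_St ht)
  rw [hasDerivWithinAt_univ] at h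
  have h2 := h.clm_apply (hasDerivAt_const x ((1 : ℝ), (0 : ℝ)))
  simpa using h2

/-- t-slice first derivative, within Icc -/
lemma htslice1' (x : ℝ) {t : ℝ} (ht : t ∈ Icc 0 Real.pi) :
    HasDerivWithinAt (fun s => u x s) ((F1 u (x, t)) (0, 1)) (Icc 0 Real.pi) t := by
  have hι : HasDerivWithinAt (fun s : ℝ => ((x, s) : ℝ × ℝ)) ((0 : ℝ), (1 : ℝ))
      (Icc 0 Real.pi) t :=
    ((hasDerivAt_const t x).prodMk (hasDerivAt_id t)).hasDerivWithinAt
  exact (hfd1 hreg (x, t) (mem_St ht)).comp_hasDerivWithinAt t hι (fun s hs => mem_St hs)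

lemma htslice1 (x : ℝ) {t : ℝ} (ht : t ∈ Ioo 0 Real.pi) :
    HasDerivAt (fun s => u x s) ((F1 u (x, t)) (0, 1)) t :=
  (htslice1' hreg x (Ioo_subset_Icc_self ht)).hasDerivAt (Icc_mem_nhds ht.1 ht.2)

/-- t-slice second derivative, interior -/
lemma htslice2 (x : ℝ) {t : ℝ} (ht : t ∈ Ioo 0 Real.pi) :
    HasDerivAt (fun s => (F1 u (x, s)) (0, 1)) ((F2 u (x, t)) (0, 1) (0, 1)) t := by
  have hι : HasDerivWithinAt (fun s : ℝ => ((x, s) : ℝ × ℝ)) ((0 : ℝ), (1 : ℝ))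
      (Icc 0 Real.pi) t :=
    ((hasDerivAt_const t x).prodMk (hasDerivAt_id t)).hasDerivWithinAt
  have h := ((hfd2 hreg (x, t) (mem_St (Ioo_subset_Icc_self ht))).comp_hasDerivWithinAt t hι
    (fun s hs => mem_St hs)).hasDerivAt (Icc_mem_nhds ht.1 ht.2)
  have h2 := h.clm_apply (hasDerivAt_const t ((0 : ℝ), (1 : ℝ)))
  simpa using h2

/-- The PDE in terms of F2 -/
lemma pde' (hpde : ∀ x : ℝ, ∀ t ∈ Set.Ioo (0 : ℝ) Real.pi,
      deriv (fun a => deriv (fun b => u b t) a) x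
        + deriv (fun a => deriv (fun b => u x b) a) t
        + u x t = 0) :
    ∀ x : ℝ, ∀ t ∈ Ioo 0 Real.pi,
      (F2 u (x, t)) (1, 0) (1, 0) + (F2 u (x, t)) (0, 1) (0, 1) + u x t = 0 := by
  intro x t ht
  have ht' := Ioo_subset_Icc_self ht
  have e1 : deriv (fun b => u b t) = fun a => (F1 u (a, t)) (1, 0) :=
    funext fun a => (hxslice1 hreg ht' a).deriv
  have e2 : deriv (fun a => deriv (fun b => u b t) a) x = (F2 u (x, t)) (1, 0) (1, 0) := by
    rw [show (fun a => deriv (fun b => u b t) a) = fun a => (F1 u (a, t)) (1, 0) from e1]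
    exact (hxslice2 hreg ht' x).deriv
  have e3 : deriv (fun a => deriv (fun b => u x b) a) t = (F2 u (x, t)) (0, 1) (0, 1) := by
    have heq : (fun a => deriv (fun b => u x b) a) =ᶠ[nhds t] fun s => (F1 u (x, s)) (0, 1) := by
      filter_upwards [Ioo_mem_nhds ht.1 ht.2] with s hs
      exact (htslice1 hreg x hs).deriv
    rw [heq.deriv_eq]
    exact (htslice2 hreg x ht).deriv
  have := hpde x t ht
  rw [e2, e3] at this
  exact this

/-- continuity of scalar partials -/
lemma contF1app (v : ℝ × ℝ) : ContinuousOn (fun p => (F1 u p) v) St :=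
  (hF1c hreg).continuousOn.clm_apply continuousOn_const

lemma contF2app (v w : ℝ × ℝ) : ContinuousOn (fun p => (F2 u p) v w) St :=
  ((hF2cont hreg).clm_apply continuousOn_const).clm_apply continuousOn_const

lemma contu : ContinuousOn (fu u) St := hreg.continuousOn


/-- Fourier sine coefficients -/
def fm (u : ℝ → ℝ → ℝ) (n : ℕ) (x : ℝ) : ℝ :=
  ∫ t in (0:ℝ)..Real.pi, u x t * Real.sin (n * t)

def gm (u : ℝ → ℝ → ℝ) (n : ℕ) (x : ℝ) : ℝ :=
  ∫ t in (0:ℝ)..Real.pi, (F1 u (x, t)) (1, 0) * Real.sin (n * t)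

omit hreg in
lemma intervalIntegrable_of_contOn {g : ℝ → ℝ} (hg : ContinuousOn g (Icc 0 Real.pi)) :
    IntervalIntegrable g volume 0 Real.pi :=
  ContinuousOn.intervalIntegrable (by rwa [uIcc_of_le Real.pi_pos.le])

omit hreg in
lemma contsin (n : ℕ) : Continuous (fun t : ℝ => Real.sin (n * t)) :=
  Real.continuous_sin.comp (continuous_const.mul continuous_id)

omit hreg in
lemma contcos (n : ℕ) : Continuous (fun t : ℝ => Real.cos (n * t)) :=
  Real.continuous_cos.comp (continuous_const.mul continuous_id)

lemma contSliceU (x : ℝ) : ContinuousOn (fun t => u x t) (Icc 0 Real.pi) :=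
  (contu hreg).comp (Continuous.continuousOn (continuous_const.prodMk continuous_id))
    (fun t ht => mem_St ht)

lemma contSliceF1 (x : ℝ) (v : ℝ × ℝ) :
    ContinuousOn (fun t => (F1 u (x, t)) v) (Icc 0 Real.pi) :=
  (contF1app hreg v).comp (Continuous.continuousOn (continuous_const.prodMk continuous_id))
    (fun t ht => mem_St ht)

lemma contSliceF2 (x : ℝ) (v w : ℝ × ℝ) :
    ContinuousOn (fun t => (F2 u (x, t)) v w) (Icc 0 Real.pi) :=
  (contF2app hreg v w).comp (Continuous.continuousOn (continuous_const.prodMk continuous_id))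
    (fun t ht => mem_St ht)

omit hreg in
lemma hsinD (n : ℕ) (t : ℝ) :
    HasDerivAt (fun s : ℝ => Real.sin (n * s)) ((n : ℝ) * Real.cos (n * t)) t := by
  have h := (Real.hasDerivAt_sin ((n : ℝ) * t)).comp t ((hasDerivAt_id t).const_mul (n : ℝ))
  have e : (n : ℝ) * Real.cos (n * t) = Real.cos ((n : ℝ) * t) * ((n : ℝ) * 1) := by ring
  rw [e]; exact h

omit hreg in
lemma hcosD (n : ℕ) (t : ℝ) :
    HasDerivAt (fun s : ℝ => Real.cos (n * s)) (-((n : ℝ) * Real.sin (n * t))) t := by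
  have h := (Real.hasDerivAt_cos ((n : ℝ) * t)).comp t ((hasDerivAt_id t).const_mul (n : ℝ))
  have e : -((n : ℝ) * Real.sin (n * t)) = -Real.sin ((n : ℝ) * t) * ((n : ℝ) * 1) := by ring
  rw [e]; exact h

/-- integration by parts result -/
lemma hibp (x : ℝ) (hb0 : u x 0 = 0) (hbpi : u x Real.pi = 0) (n : ℕ) :
    ∫ t in (0:ℝ)..Real.pi,
      ((F2 u (x, t)) (0, 1) (0, 1) + (n : ℝ)^2 * u x t) * Real.sin (n * t) = 0 := by
  set Φ : ℝ → ℝ := fun t =>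
    (F1 u (x, t)) (0, 1) * Real.sin (n * t) - (n : ℝ) * u x t * Real.cos (n * t) with hΦ
  have hcontΦ : ContinuousOn Φ (Icc 0 Real.pi) := by
    apply ContinuousOn.sub
    · exact (contSliceF1 hreg x (0, 1)).mul (contsin n).continuousOn
    · exact ((continuousOn_const.mul (contSliceU hreg x)).mul (contcos n).continuousOn)
  have hderivΦ : ∀ t ∈ Ioo (0:ℝ) Real.pi, HasDerivWithinAt Φ
      (((F2 u (x, t)) (0, 1) (0, 1) + (n : ℝ)^2 * u x t) * Real.sin (n * t)) (Ioi t) t := by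
    intro t ht
    have h1 := (htslice2 hreg x ht).mul (hsinD n t)
    have h2 := (((htslice1 hreg x ht).const_mul (n : ℝ)).mul (hcosD n t))
    have h3 := h1.sub h2
    have : HasDerivAt Φ
        (((F2 u (x, t)) (0, 1) (0, 1) + (n : ℝ)^2 * u x t) * Real.sin (n * t)) t := by
      exact h3.congr_deriv (by ring)
    exact this.hasDerivWithinAt
  have hint : IntervalIntegrable
      (fun t => ((F2 u (x, t)) (0, 1) (0, 1) + (n : ℝ)^2 * u x t) * Real.sin (n * t))
      volume 0 Real.pi := by
    apply intervalIntegrable_of_contOn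
    exact ((contSliceF2 hreg x (0,1) (0,1)).add
      (continuousOn_const.mul (contSliceU hreg x))).mul (contsin n).continuousOn
  have hFTC := intervalIntegral.integral_eq_sub_of_hasDeriv_right_of_le Real.pi_pos.le
    hcontΦ hderivΦ hint
  rw [hFTC, hΦ]
  simp [hb0, hbpi, Real.sin_nat_mul_pi]

/-- the ODE for the Fourier coefficients -/
lemma hkey (hpde : ∀ x : ℝ, ∀ t ∈ Set.Ioo (0 : ℝ) Real.pi,
      deriv (fun a => deriv (fun b => u b t) a) x
        + deriv (fun a => deriv (fun b => u x b) a) t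
        + u x t = 0)
    (x : ℝ) (hb0 : u x 0 = 0) (hbpi : u x Real.pi = 0) (n : ℕ) :
    ∫ t in (0:ℝ)..Real.pi, (F2 u (x, t)) (1, 0) (1, 0) * Real.sin (n * t)
      = ((n : ℝ)^2 - 1) * fm u n x := by
  have hcongr : ∫ t in (0:ℝ)..Real.pi, (F2 u (x, t)) (1, 0) (1, 0) * Real.sin (n * t)
      = ∫ t in (0:ℝ)..Real.pi,
          (-(((F2 u (x, t)) (0, 1) (0, 1) + (n : ℝ)^2 * u x t) * Real.sin (n * t))
            + (((n : ℝ)^2 - 1) * (u x t * Real.sin (n * t)))) := by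
    apply intervalIntegral.integral_congr_ae
    have hae : ∀ᵐ t : ℝ, t ≠ Real.pi := by
      rw [MeasureTheory.ae_iff]
      convert Real.volume_singleton (a := Real.pi) using 2
      ext t; simp
    filter_upwards [hae] with t htne htΙ
    rw [uIoc_of_le Real.pi_pos.le] at htΙ
    have htIoo : t ∈ Ioo (0:ℝ) Real.pi := ⟨htΙ.1, lt_of_le_of_ne htΙ.2 htne⟩
    have hp := pde' hreg hpde x t htIoo
    have : (F2 u (x, t)) (1, 0) (1, 0) = -(F2 u (x, t)) (0, 1) (0, 1) - u x t := by linarith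
    rw [this]; ring
  rw [hcongr]
  have hint1 : IntervalIntegrable
      (fun t => -(((F2 u (x, t)) (0, 1) (0, 1) + (n : ℝ)^2 * u x t) * Real.sin (n * t)))
      volume 0 Real.pi := by
    apply intervalIntegrable_of_contOn
    exact (((contSliceF2 hreg x (0,1) (0,1)).add
      (continuousOn_const.mul (contSliceU hreg x))).mul (contsin n).continuousOn).neg
  have hint2 : IntervalIntegrable
      (fun t => ((n : ℝ)^2 - 1) * (u x t * Real.sin (n * t))) volume 0 Real.pi := by
    apply intervalIntegrable_of_contOn
    exact continuousOn_const.mul ((contSliceU hreg x).mul (contsin n).continuousOn)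
  rw [intervalIntegral.integral_add hint1 hint2, intervalIntegral.integral_neg,
    hibp hreg x hb0 hbpi n, intervalIntegral.integral_const_mul]
  simp [fm]


lemma hdiff1 (n : ℕ) (x0 : ℝ) : HasDerivAt (fm u n) (gm u n x0) x0 := by
  set K : Set (ℝ × ℝ) := Icc (x0 - 1) (x0 + 1) ×ˢ Icc 0 Real.pi with hK
  have hKc : IsCompact K := isCompact_Icc.prod isCompact_Icc
  have hKS : K ⊆ St := fun p hp => ⟨trivial, hp.2⟩
  obtain ⟨M, hM⟩ := hKc.exists_bound_of_continuousOn
    (((contF1app hreg (1, 0))).mono hKS)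
  have main := intervalIntegral.hasDerivAt_integral_of_dominated_loc_of_deriv_le
    (F := fun x t => u x t * Real.sin (n * t))
    (F' := fun x t => (F1 u (x, t)) (1, 0) * Real.sin (n * t))
    (bound := fun _ => |M|) (a := (0:ℝ)) (b := Real.pi) (μ := volume) (x₀ := x0)
    (Metric.ball_mem_nhds x0 zero_lt_one) ?_ ?_ ?_ ?_ ?_ ?_
  · exact main.2
  · refine Filter.Eventually.of_forall (fun x => ?_)
    rw [uIoc_of_le Real.pi_pos.le]
    exact (((contSliceU hreg x).mul (contsin n).continuousOn).mono
      Ioc_subset_Icc_self).aestronglyMeasurable measurableSet_Ioc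
  · exact intervalIntegrable_of_contOn ((contSliceU hreg x0).mul (contsin n).continuousOn)
  · rw [uIoc_of_le Real.pi_pos.le]
    exact (((contSliceF1 hreg x0 (1, 0)).mul (contsin n).continuousOn).mono
      Ioc_subset_Icc_self).aestronglyMeasurable measurableSet_Ioc
  · refine Filter.Eventually.of_forall (fun t ht x hx => ?_)
    rw [uIoc_of_le Real.pi_pos.le] at ht
    have hxK : (x, t) ∈ K := by
      rw [Metric.mem_ball, Real.dist_eq] at hx
      have hx' := abs_lt.1 hx
      exact ⟨Set.mem_Icc.2 ⟨by linarith, by linarith⟩, Ioc_subset_Icc_self ht⟩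
    have h1 : ‖(F1 u (x, t)) (1, 0)‖ ≤ M := hM _ hxK
    have h2 : |Real.sin (n * t)| ≤ 1 := Real.abs_sin_le_one _
    calc ‖(F1 u (x, t)) (1, 0) * Real.sin (n * t)‖
        = ‖(F1 u (x, t)) (1, 0)‖ * |Real.sin (n * t)| := by
          rw [Real.norm_eq_abs, Real.norm_eq_abs, abs_mul]
      _ ≤ |M| * 1 := by
          apply mul_le_mul _ h2 (abs_nonneg _) (abs_nonneg _)
          exact le_trans h1 (le_abs_self M)
      _ = |M| := mul_one _
  · exact intervalIntegrable_const
  · refine Filter.Eventually.of_forall (fun t ht x _ => ?_)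
    rw [uIoc_of_le Real.pi_pos.le] at ht
    exact (hxslice1 hreg (Ioc_subset_Icc_self ht) x).mul_const _

lemma hdiff2 (hpde : ∀ x : ℝ, ∀ t ∈ Set.Ioo (0 : ℝ) Real.pi,
      deriv (fun a => deriv (fun b => u b t) a) x
        + deriv (fun a => deriv (fun b => u x b) a) t
        + u x t = 0)
    (hb0 : ∀ x : ℝ, u x 0 = 0) (hbpi : ∀ x : ℝ, u x Real.pi = 0)
    (n : ℕ) (x0 : ℝ) :
    HasDerivAt (gm u n) (((n : ℝ)^2 - 1) * fm u n x0) x0 := by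
  set K : Set (ℝ × ℝ) := Icc (x0 - 1) (x0 + 1) ×ˢ Icc 0 Real.pi with hK
  have hKc : IsCompact K := isCompact_Icc.prod isCompact_Icc
  have hKS : K ⊆ St := fun p hp => ⟨trivial, hp.2⟩
  obtain ⟨M, hM⟩ := hKc.exists_bound_of_continuousOn
    (((contF2app hreg (1, 0) (1, 0))).mono hKS)
  have main := intervalIntegral.hasDerivAt_integral_of_dominated_loc_of_deriv_le
    (F := fun x t => (F1 u (x, t)) (1, 0) * Real.sin (n * t))
    (F' := fun x t => (F2 u (x, t)) (1, 0) (1, 0) * Real.sin (n * t))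
    (bound := fun _ => |M|) (a := (0:ℝ)) (b := Real.pi) (μ := volume) (x₀ := x0)
    (Metric.ball_mem_nhds x0 zero_lt_one) ?_ ?_ ?_ ?_ ?_ ?_
  · have h2 := main.2
    rw [hkey hreg hpde x0 (hb0 x0) (hbpi x0) n] at h2
    exact h2
  · refine Filter.Eventually.of_forall (fun x => ?_)
    rw [uIoc_of_le Real.pi_pos.le]
    exact (((contSliceF1 hreg x (1, 0)).mul (contsin n).continuousOn).mono
      Ioc_subset_Icc_self).aestronglyMeasurable measurableSet_Ioc
  · exact intervalIntegrable_of_contOn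
      ((contSliceF1 hreg x0 (1, 0)).mul (contsin n).continuousOn)
  · rw [uIoc_of_le Real.pi_pos.le]
    exact (((contSliceF2 hreg x0 (1, 0) (1, 0)).mul (contsin n).continuousOn).mono
      Ioc_subset_Icc_self).aestronglyMeasurable measurableSet_Ioc
  · refine Filter.Eventually.of_forall (fun t ht x hx => ?_)
    rw [uIoc_of_le Real.pi_pos.le] at ht
    have hxK : (x, t) ∈ K := by
      rw [Metric.mem_ball, Real.dist_eq] at hx
      have hx' := abs_lt.1 hx
      exact ⟨Set.mem_Icc.2 ⟨by linarith, by linarith⟩, Ioc_subset_Icc_self ht⟩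
    have h1 : ‖(F2 u (x, t)) (1, 0) (1, 0)‖ ≤ M := hM _ hxK
    have h2 : |Real.sin (n * t)| ≤ 1 := Real.abs_sin_le_one _
    calc ‖(F2 u (x, t)) (1, 0) (1, 0) * Real.sin (n * t)‖
        = ‖(F2 u (x, t)) (1, 0) (1, 0)‖ * |Real.sin (n * t)| := by
          rw [Real.norm_eq_abs, Real.norm_eq_abs, abs_mul]
      _ ≤ |M| * 1 := by
          apply mul_le_mul _ h2 (abs_nonneg _) (abs_nonneg _)
          exact le_trans h1 (le_abs_self M)
      _ = |M| := mul_one _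
  · exact intervalIntegrable_const
  · refine Filter.Eventually.of_forall (fun t ht x _ => ?_)
    rw [uIoc_of_le Real.pi_pos.le] at ht
    exact (hxslice2 hreg (Ioc_subset_Icc_self ht) x).mul_const _

lemma fmbound {C : ℝ} {N : ℕ} (hC : 0 < C)
    (hgr : ∀ x : ℝ, ∀ t ∈ Icc (0:ℝ) Real.pi, |u x t| ≤ C * (1 + |x|) ^ N) (n : ℕ) :
    ∀ x, |fm u n x| ≤ C * Real.pi * (1 + |x|) ^ N := by
  intro x
  have h := intervalIntegral.norm_integral_le_of_norm_le_const
    (C := C * (1 + |x|) ^ N) (f := fun t => u x t * Real.sin (n * t)) (a := (0:ℝ)) (b := Real.pi) ?_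
  · rw [Real.norm_eq_abs] at h
    calc |fm u n x| ≤ C * (1 + |x|) ^ N * |Real.pi - 0| := h
      _ = C * Real.pi * (1 + |x|) ^ N := by
          rw [sub_zero, abs_of_pos Real.pi_pos]; ring
  · intro t ht
    rw [uIoc_of_le Real.pi_pos.le] at ht
    have h1 := hgr x t (Ioc_subset_Icc_self ht)
    have h2 : |Real.sin (n * t)| ≤ 1 := Real.abs_sin_le_one _
    rw [Real.norm_eq_abs, abs_mul]
    calc |u x t| * |Real.sin (n * t)| ≤ (C * (1 + |x|) ^ N) * 1 :=
        mul_le_mul h1 h2 (abs_nonneg _) (by positivity)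
      _ = C * (1 + |x|) ^ N := mul_one _






omit hreg in
lemma intervalIntegrable_of_contOn' {g : ℝ → ℝ} {a b : ℝ} (hab : a ≤ b)
    (hg : ContinuousOn g (Icc a b)) : IntervalIntegrable g volume a b :=
  ContinuousOn.intervalIntegrable (by rwa [uIcc_of_le hab])

omit hreg in
lemma contsin' (n : ℕ) : Continuous (fun t : ℝ => Real.sin (n * t)) :=
  Real.continuous_sin.comp (continuous_const.mul continuous_id)

omit hreg in
/-- Step (i): adding powers of cosine -/
lemma sine_cos_pow {k : ℝ → ℝ} (hk : ContinuousOn k (Icc 0 Real.pi))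
    (hall : ∀ m : ℕ, ∫ t in (0:ℝ)..Real.pi, k t * Real.sin (m * t) = 0) :
    ∀ j m : ℕ, ∫ t in (0:ℝ)..Real.pi, k t * Real.sin (m * t) * Real.cos t ^ j = 0 := by
  have hint : ∀ (m j : ℕ), IntervalIntegrable
      (fun t => k t * Real.sin (m * t) * Real.cos t ^ j) volume 0 Real.pi := by
    intro m j
    exact intervalIntegrable_of_contOn' Real.pi_pos.le
      ((hk.mul (contsin' m).continuousOn).mul (Real.continuous_cos.pow j).continuousOn)
  intro j
  induction j with
  | zero => intro m; simpa using hall m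
  | succ j ih =>
    intro m
    match m with
    | 0 => simp
    | (m' + 1) =>
      have e : ∀ t : ℝ, k t * Real.sin ((m' + 1 : ℕ) * t) * Real.cos t ^ (j + 1)
          = (1/2 : ℝ) * ((k t * Real.sin ((m' + 2 : ℕ) * t) * Real.cos t ^ j)
            + (k t * Real.sin ((m' : ℕ) * t) * Real.cos t ^ j)) := by
        intro t
        have key : Real.sin ((m' + 2 : ℕ) * t) + Real.sin ((m' : ℕ) * t)
            = 2 * Real.sin ((m' + 1 : ℕ) * t) * Real.cos t := by
          push_cast
          rw [show ((m' : ℝ) + 2) * t = ((m' + 1) * t + t) by ring,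
            show (m' : ℝ) * t = ((m' + 1) * t - t) by ring, Real.sin_add, Real.sin_sub]
          ring
        rw [pow_succ]
        linear_combination (-(k t * Real.cos t ^ j) / 2) * key
      rw [intervalIntegral.integral_congr (g :=
        fun t => (1/2 : ℝ) * ((k t * Real.sin ((m' + 2 : ℕ) * t) * Real.cos t ^ j)
          + (k t * Real.sin ((m' : ℕ) * t) * Real.cos t ^ j))) (fun t _ => e t)]
      rw [intervalIntegral.integral_const_mul,
        intervalIntegral.integral_add (hint (m' + 2) j) (hint m' j), ih (m' + 2), ih m']
      ring

omit hreg in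
/-- Step (iii): polynomials in cosine -/
lemma sine_poly {k : ℝ → ℝ} (hk : ContinuousOn k (Icc 0 Real.pi))
    (hall : ∀ m : ℕ, ∫ t in (0:ℝ)..Real.pi, k t * Real.sin (m * t) = 0) :
    ∀ p : Polynomial ℝ,
      ∫ t in (0:ℝ)..Real.pi, k t * Real.sin t * p.eval (Real.cos t) = 0 := by
  have hQ := sine_cos_pow hk hall
  have hint : ∀ p : Polynomial ℝ, IntervalIntegrable
      (fun t => k t * Real.sin t * p.eval (Real.cos t)) volume 0 Real.pi := by
    intro p
    exact intervalIntegrable_of_contOn' Real.pi_pos.le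
      ((hk.mul Real.continuous_sin.continuousOn).mul
        ((p.continuous_aeval.comp Real.continuous_cos).continuousOn))
  intro p
  induction p using Polynomial.induction_on with
  | C a =>
    have e : ∀ t : ℝ, k t * Real.sin t * (Polynomial.C a).eval (Real.cos t)
        = a * (k t * Real.sin ((1 : ℕ) * t) * Real.cos t ^ 0) := by
      intro t; simp; ring
    rw [intervalIntegral.integral_congr (fun t _ => e t),
      intervalIntegral.integral_const_mul, hQ 0 1, mul_zero]
  | add p q hp hq =>
    have e : ∀ t : ℝ, k t * Real.sin t * (p + q).eval (Real.cos t)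
        = k t * Real.sin t * p.eval (Real.cos t) + k t * Real.sin t * q.eval (Real.cos t) := by
      intro t; simp [Polynomial.eval_add]; ring
    rw [intervalIntegral.integral_congr (fun t _ => e t),
      intervalIntegral.integral_add (hint p) (hint q), hp, hq, add_zero]
  | monomial n a _ =>
    have e : ∀ t : ℝ, k t * Real.sin t * (Polynomial.C a * Polynomial.X ^ (n + 1)).eval (Real.cos t)
        = a * (k t * Real.sin ((1 : ℕ) * t) * Real.cos t ^ (n + 1)) := by
      intro t; simp; ring
    rw [intervalIntegral.integral_congr (fun t _ => e t),
      intervalIntegral.integral_const_mul, hQ (n + 1) 1, mul_zero]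

omit hreg in
/-- substitution s = cos t -/
lemma subst_cos {G : ℝ → ℝ} (hG : Continuous G) :
    ∫ t in (0:ℝ)..Real.pi, G (Real.cos t) * Real.sin t = ∫ s in (-1:ℝ)..1, G s := by
  have h := intervalIntegral.integral_comp_smul_deriv (f := Real.cos)
    (f' := fun t => -Real.sin t) (g := G) (a := 0) (b := Real.pi)
    (fun t _ => Real.hasDerivAt_cos t) (Real.continuous_sin.neg.continuousOn) hG
  rw [Real.cos_zero, Real.cos_pi] at h
  calc ∫ t in (0:ℝ)..Real.pi, G (Real.cos t) * Real.sin t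
      = - ∫ x in (0:ℝ)..Real.pi, (fun t => -Real.sin t) x • (G ∘ Real.cos) x := by
        rw [← intervalIntegral.integral_neg]
        apply intervalIntegral.integral_congr
        intro t _
        simp only [smul_eq_mul, Function.comp, neg_mul, neg_neg]
        ring
    _ = - ∫ x in (1:ℝ)..(-1:ℝ), G x := by rw [h]
    _ = ∫ s in (-1:ℝ)..1, G s := by rw [intervalIntegral.integral_symm]; ring





omit hreg in
/-- completeness of the sine system -/
lemma sine_complete {k : ℝ → ℝ} (hk : ContinuousOn k (Icc 0 Real.pi))
    (hall : ∀ m : ℕ, ∫ t in (0:ℝ)..Real.pi, k t * Real.sin (m * t) = 0) :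
    ∀ t ∈ Ioo (0:ℝ) Real.pi, k t = 0 := by
  set q : ℝ → ℝ := fun s => k (Real.arccos s) with hq
  have hqc : Continuous q := by
    apply continuousOn_univ.mp
    exact hk.comp Real.continuous_arccos.continuousOn
      (fun s _ => ⟨Real.arccos_nonneg s, Real.arccos_le_pi s⟩)
  have horth : ∀ p : Polynomial ℝ, ∫ s in (-1:ℝ)..1, q s * p.eval s = 0 := by
    intro p
    have hG : Continuous (fun s => q s * p.eval s) := hqc.mul p.continuous_aeval
    have h1 := subst_cos (G := fun s => q s * p.eval s) hG
    rw [← h1]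
    have h2 : ∀ t ∈ uIcc (0:ℝ) Real.pi,
        (fun t => (fun s => q s * p.eval s) (Real.cos t) * Real.sin t) t
          = (fun t => k t * Real.sin t * p.eval (Real.cos t)) t := by
      intro t ht
      rw [uIcc_of_le Real.pi_pos.le] at ht
      have hqk : q (Real.cos t) = k t := by
        rw [hq]; simp only []; rw [Real.arccos_cos ht.1 ht.2]
      simp only []
      rw [hqk]; ring
    rw [intervalIntegral.integral_congr h2]
    exact sine_poly hk hall p
  obtain ⟨M, hM⟩ := isCompact_Icc.exists_bound_of_continuousOn
    (hqc.continuousOn (s := Icc (-1:ℝ) 1))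
  have hqint : ∀ a b : ℝ, IntervalIntegrable (fun s => q s * q s) volume a b :=
    fun a b => (hqc.mul hqc).intervalIntegrable a b
  have hsmall : ∀ ε > (0:ℝ), ∫ s in (-1:ℝ)..1, q s * q s ≤ (|M| + 1) * ε * 2 := by
    intro ε hε
    obtain ⟨p, hp⟩ := exists_polynomial_near_of_continuousOn (-1) 1 q hqc.continuousOn ε hε
    have hint1 : IntervalIntegrable (fun s => q s * (q s - p.eval s)) volume (-1) 1 :=
      (hqc.mul (hqc.sub p.continuous_aeval)).intervalIntegrable _ _
    have hint2 : IntervalIntegrable (fun s => q s * p.eval s) volume (-1) 1 :=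
      (hqc.mul p.continuous_aeval).intervalIntegrable _ _
    have hsplit : ∫ s in (-1:ℝ)..1, q s * q s
        = (∫ s in (-1:ℝ)..1, q s * (q s - p.eval s)) + ∫ s in (-1:ℝ)..1, q s * p.eval s := by
      rw [← intervalIntegral.integral_add hint1 hint2]
      apply intervalIntegral.integral_congr
      intro s _
      simp only []
      ring
    rw [hsplit, horth p, add_zero]
    have hb := intervalIntegral.norm_integral_le_of_norm_le_const (C := (|M| + 1) * ε)
      (f := fun s => q s * (q s - p.eval s)) (a := (-1:ℝ)) (b := 1) ?_
    · rw [Real.norm_eq_abs] at hb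
      have : |(1:ℝ) - (-1)| = 2 := by norm_num
      rw [this] at hb
      calc ∫ s in (-1:ℝ)..1, q s * (q s - p.eval s)
          ≤ |∫ s in (-1:ℝ)..1, q s * (q s - p.eval s)| := le_abs_self _
        _ ≤ (|M| + 1) * ε * 2 := hb
    · intro s hs
      rw [uIoc_of_le (by norm_num : (-1:ℝ) ≤ 1)] at hs
      have hsIcc : s ∈ Icc (-1:ℝ) 1 := Ioc_subset_Icc_self hs
      have h1 : |q s| ≤ |M| + 1 := by
        have := hM s hsIcc
        rw [Real.norm_eq_abs] at this
        calc |q s| ≤ M := this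
          _ ≤ |M| := le_abs_self M
          _ ≤ |M| + 1 := by linarith
      have h2 : |q s - p.eval s| ≤ ε := by
        rw [abs_sub_comm]
        exact (hp s hsIcc).le
      rw [Real.norm_eq_abs, abs_mul]
      exact mul_le_mul h1 h2 (abs_nonneg _) (by positivity)
  intro t ht
  by_contra hne
  set s0 := Real.cos t with hs0
  have hcos1 : Real.cos t < 1 := by
    have := Real.strictAntiOn_cos (left_mem_Icc.2 Real.pi_pos.le)
      (Ioo_subset_Icc_self ht) ht.1
    simpa using this
  have hcosm1 : -1 < Real.cos t := by
    have := Real.strictAntiOn_cos (Ioo_subset_Icc_self ht)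
      (right_mem_Icc.2 Real.pi_pos.le) ht.2
    simpa using this
  have hq0 : q s0 = k t := by
    rw [hq]; simp only []; rw [hs0, Real.arccos_cos ht.1.le ht.2.le]
  set c := |k t| / 2 with hc
  have hcpos : 0 < c := by
    rw [hc]
    have : 0 < |k t| := abs_pos.2 hne
    linarith
  obtain ⟨δ1, hδ1pos, hδ1⟩ := Metric.continuousAt_iff.1 (hqc.continuousAt (x := s0)) c hcpos
  set δ : ℝ := min (δ1 / 2) (min ((s0 + 1) / 2) ((1 - s0) / 2)) with hδ
  have hδpos : 0 < δ := by
    apply lt_min (by linarith)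
    apply lt_min <;> [linarith; linarith]
  have hδa : -1 ≤ s0 - δ := by
    have h1 : δ ≤ (s0 + 1) / 2 := le_trans (min_le_right _ _) (min_le_left _ _)
    linarith
  have hδb : s0 + δ ≤ 1 := by
    have h1 : δ ≤ (1 - s0) / 2 := le_trans (min_le_right _ _) (min_le_right _ _)
    linarith
  have hlow : ∀ s ∈ Icc (s0 - δ) (s0 + δ), c * c ≤ q s * q s := by
    intro s hs
    have hdist : dist s s0 < δ1 := by
      rw [Real.dist_eq, abs_sub_lt_iff]
      have h1 : δ ≤ δ1 / 2 := min_le_left _ _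
      exact ⟨by linarith [hs.2], by linarith [hs.1]⟩
    have := hδ1 hdist
    rw [Real.dist_eq] at this
    have hqs : c ≤ |q s| := by
      have h2 : |q s0| = 2 * c := by rw [hq0, hc]; ring
      have h3 := abs_sub_abs_le_abs_sub (q s0) (q s)
      rw [abs_sub_comm (q s) (q s0)] at this
      linarith
    calc c * c ≤ |q s| * |q s| := mul_le_mul hqs hqs hcpos.le (abs_nonneg _)
      _ = q s * q s := abs_mul_abs_self _
  have hmid : c * c * (2 * δ) ≤ ∫ s in (s0 - δ)..(s0 + δ), q s * q s := by
    have h1 := intervalIntegral.integral_mono_on (by linarith : s0 - δ ≤ s0 + δ)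
      (_root_.intervalIntegrable_const (c := c * c)) (hqint _ _) hlow
    have h2 : ∫ _ in (s0 - δ)..(s0 + δ), (c * c : ℝ) = (2 * δ) * (c * c) := by
      rw [intervalIntegral.integral_const]
      simp only [smul_eq_mul]
      ring
    rw [h2] at h1
    linarith
  have hkey : 0 < ∫ s in (-1:ℝ)..1, q s * q s := by
    have hsplit1 : (∫ s in (-1:ℝ)..(s0 - δ), q s * q s)
        + (∫ s in (s0 - δ)..(s0 + δ), q s * q s) = ∫ s in (-1:ℝ)..(s0 + δ), q s * q s :=
      intervalIntegral.integral_add_adjacent_intervals (hqint _ _) (hqint _ _)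
    have hsplit2 : (∫ s in (-1:ℝ)..(s0 + δ), q s * q s)
        + (∫ s in (s0 + δ)..1, q s * q s) = ∫ s in (-1:ℝ)..1, q s * q s :=
      intervalIntegral.integral_add_adjacent_intervals (hqint _ _) (hqint _ _)
    have hnn1 : 0 ≤ ∫ s in (-1:ℝ)..(s0 - δ), q s * q s :=
      intervalIntegral.integral_nonneg hδa (fun s _ => mul_self_nonneg _)
    have hnn2 : 0 ≤ ∫ s in (s0 + δ)..1, q s * q s :=
      intervalIntegral.integral_nonneg hδb (fun s _ => mul_self_nonneg _)
    nlinarith [hmid, mul_pos (mul_pos hcpos hcpos) (by linarith : (0:ℝ) < 2 * δ)]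
  set I := ∫ s in (-1:ℝ)..1, q s * q s with hI
  have hε : (0:ℝ) < I / (4 * (|M| + 1)) := by
    apply div_pos hkey
    positivity
  have := hsmall _ hε
  have hMpos : (0:ℝ) < |M| + 1 := by positivity
  have hcontr : (|M| + 1) * (I / (4 * (|M| + 1))) * 2 = I / 2 := by
    field_simp
    ring
  rw [hcontr] at this
  linarith



omit hreg in
lemma cos_integral (k : ℕ) (hk : 1 ≤ k) :
    ∫ t in (0:ℝ)..Real.pi, Real.cos ((k:ℝ) * t) = 0 := by
  have hk0 : (k:ℝ) ≠ 0 := by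
    have : (0:ℝ) < (k:ℝ) := by exact_mod_cast hk
    linarith
  rw [intervalIntegral.integral_comp_mul_left (fun s => Real.cos s) hk0]
  simp [integral_cos, Real.sin_nat_mul_pi]

omit hreg in
lemma sin_mul_sin_orth {m : ℕ} (hm : 2 ≤ m) :
    ∫ t in (0:ℝ)..Real.pi, Real.sin t * Real.sin ((m:ℝ) * t) = 0 := by
  have h1m : (1:ℕ) ≤ m := le_trans one_le_two hm
  have hcast : ((m - 1 : ℕ) : ℝ) = (m : ℝ) - 1 := by
    push_cast [Nat.cast_sub h1m]; ring
  have e : ∀ t : ℝ, Real.sin t * Real.sin ((m:ℝ) * t)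
      = 1/2 * (Real.cos (((m - 1 : ℕ) : ℝ) * t) - Real.cos (((m + 1 : ℕ) : ℝ) * t)) := by
    intro t
    rw [hcast]
    push_cast
    rw [show ((m:ℝ) - 1) * t = (m:ℝ) * t - t by ring,
      show ((m:ℝ) + 1) * t = (m:ℝ) * t + t by ring, Real.cos_sub, Real.cos_add]
    ring
  have hIa : IntervalIntegrable (fun t => Real.cos (((m - 1 : ℕ) : ℝ) * t)) volume 0 Real.pi :=
    (Real.continuous_cos.comp (continuous_const.mul continuous_id)).intervalIntegrable _ _
  have hIb : IntervalIntegrable (fun t => Real.cos (((m + 1 : ℕ) : ℝ) * t)) volume 0 Real.pi :=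
    (Real.continuous_cos.comp (continuous_const.mul continuous_id)).intervalIntegrable _ _
  rw [intervalIntegral.integral_congr (fun t _ => e t), intervalIntegral.integral_const_mul,
    intervalIntegral.integral_sub hIa hIb,
    cos_integral (m - 1) (by omega), cos_integral (m + 1) (by omega)]
  ring

omit hreg in
lemma sin_sq_integral :
    ∫ t in (0:ℝ)..Real.pi, Real.sin t * Real.sin (((1:ℕ):ℝ) * t) = Real.pi / 2 := by
  have e : ∀ t : ℝ, Real.sin t * Real.sin (((1:ℕ):ℝ) * t)
      = 1/2 - 1/2 * Real.cos (((2:ℕ):ℝ) * t) := by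
    intro t
    push_cast
    rw [one_mul, show (2:ℝ) * t = t + t by ring, Real.cos_add]
    linear_combination (1/2) * (Real.sin_sq_add_cos_sq t)
  have hIa : IntervalIntegrable (fun _ : ℝ => (1/2 : ℝ)) volume 0 Real.pi :=
    intervalIntegrable_const
  have hIb : IntervalIntegrable (fun t => 1/2 * Real.cos (((2:ℕ):ℝ) * t)) volume 0 Real.pi :=
    (continuous_const.mul
      (Real.continuous_cos.comp (continuous_const.mul continuous_id))).intervalIntegrable _ _
  rw [intervalIntegral.integral_congr (fun t _ => e t), intervalIntegral.integral_sub hIa hIb,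
    intervalIntegral.integral_const_mul, cos_integral 2 (by norm_num)]
  simp
  ring

end
end JacobiAux

/-- Any solution of the Jacobi equation `u_{xx} + u_{tt} + u = 0` on the strip
`ℝ × [0,π]`, twice continuously differentiable up to the boundary, vanishing at
`t = 0, π`, and of at most polynomial growth, is of the form `(a + b x) sin t`. -/
theorem tempered_jacobi_fields_span (u : ℝ → ℝ → ℝ)
    (hreg : ContDiffOn ℝ 2 (fun p : ℝ × ℝ => u p.1 p.2)
      (Set.univ ×ˢ Set.Icc 0 Real.pi))
    (hpde : ∀ x : ℝ, ∀ t ∈ Set.Ioo (0 : ℝ) Real.pi,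
      deriv (fun a => deriv (fun b => u b t) a) x
        + deriv (fun a => deriv (fun b => u x b) a) t
        + u x t = 0)
    (hb0 : ∀ x : ℝ, u x 0 = 0) (hbpi : ∀ x : ℝ, u x Real.pi = 0)
    (hgrowth : ∃ C > (0 : ℝ), ∃ N : ℕ, ∀ x : ℝ, ∀ t ∈ Set.Icc (0 : ℝ) Real.pi,
      |u x t| ≤ C * (1 + |x|) ^ N) :
    ∃ a b : ℝ, ∀ x : ℝ, ∀ t ∈ Set.Icc (0 : ℝ) Real.pi,
      u x t = (a + b * x) * Real.sin t := by
  classical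
  obtain ⟨C, hC, N, hgr⟩ := hgrowth
  have hreg' : ContDiffOn ℝ 2 (JacobiAux.fu u) JacobiAux.St := hreg
  have hCpi : 0 < C * Real.pi := mul_pos hC Real.pi_pos
  -- all higher Fourier coefficients vanish
  have hvanish : ∀ n : ℕ, 2 ≤ n → ∀ x, JacobiAux.fm u n x = 0 := by
    intro n hn
    have h2 : (2:ℝ) ≤ (n:ℝ) := by exact_mod_cast hn
    exact jacobi_ode_vanish (lam := (n:ℝ)^2 - 1) (by nlinarith)
      (fun x => JacobiAux.hdiff1 hreg' n x)
      (fun x => JacobiAux.hdiff2 hreg' hpde hb0 hbpi n x)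
      hCpi (fun x => JacobiAux.fmbound hreg' hC hgr n x)
  -- the first coefficient is affine
  set a0 := JacobiAux.fm u 1 0 with ha0
  set b0 := JacobiAux.gm u 1 0 with hb0'
  have hgm1const : ∀ x, JacobiAux.gm u 1 x = b0 := by
    have hder : ∀ y, HasDerivAt (JacobiAux.gm u 1) 0 y := by
      intro y
      have h := JacobiAux.hdiff2 hreg' hpde hb0 hbpi 1 y
      have h0 : (((1:ℕ):ℝ)^2 - 1) * JacobiAux.fm u 1 y = 0 := by norm_num
      rwa [h0] at h
    intro x
    exact is_const_of_deriv_eq_zero (fun y => (hder y).differentiableAt)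
      (fun y => (hder y).deriv) x 0
  have hfm1 : ∀ x, JacobiAux.fm u 1 x = a0 + b0 * x := by
    intro x
    have hder : ∀ y, HasDerivAt (fun z => JacobiAux.fm u 1 z - b0 * z) 0 y := by
      intro y
      have h := (JacobiAux.hdiff1 hreg' 1 y).sub ((hasDerivAt_id y).const_mul b0)
      have e : JacobiAux.gm u 1 y - b0 * 1 = 0 := by rw [hgm1const y]; ring
      rwa [e] at h
    have hconst := is_const_of_deriv_eq_zero (fun y => (hder y).differentiableAt)
      (fun y => (hder y).deriv) x 0
    simp only [mul_zero, sub_zero] at hconst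
    rw [ha0]
    linarith [hconst]
  refine ⟨2 / Real.pi * a0, 2 / Real.pi * b0, ?_⟩
  intro x t ht
  set k : ℝ → ℝ := fun s => u x s - 2 / Real.pi * JacobiAux.fm u 1 x * Real.sin s with hkdef
  have hkcont : ContinuousOn k (Set.Icc 0 Real.pi) :=
    (JacobiAux.contSliceU hreg' x).sub
      ((continuous_const.mul Real.continuous_sin).continuousOn)
  have hkorth : ∀ m : ℕ, ∫ s in (0:ℝ)..Real.pi, k s * Real.sin ((m:ℝ) * s) = 0 := by
    intro m
    have hint1 : IntervalIntegrable (fun s => u x s * Real.sin ((m:ℝ) * s)) volume 0 Real.pi :=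
      JacobiAux.intervalIntegrable_of_contOn
        ((JacobiAux.contSliceU hreg' x).mul (JacobiAux.contsin m).continuousOn)
    have hint2 : IntervalIntegrable
        (fun s => 2 / Real.pi * JacobiAux.fm u 1 x * (Real.sin s * Real.sin ((m:ℝ) * s)))
        volume 0 Real.pi :=
      (continuous_const.mul (Real.continuous_sin.mul (JacobiAux.contsin m))).intervalIntegrable _ _
    have hsplit : ∫ s in (0:ℝ)..Real.pi, k s * Real.sin ((m:ℝ) * s)
        = (∫ s in (0:ℝ)..Real.pi, u x s * Real.sin ((m:ℝ) * s))
          - ∫ s in (0:ℝ)..Real.pi,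
              2 / Real.pi * JacobiAux.fm u 1 x * (Real.sin s * Real.sin ((m:ℝ) * s)) := by
      rw [← intervalIntegral.integral_sub hint1 hint2]
      apply intervalIntegral.integral_congr
      intro s _
      simp only [hkdef]
      ring
    rw [hsplit, intervalIntegral.integral_const_mul]
    have hfmdef : (∫ s in (0:ℝ)..Real.pi, u x s * Real.sin ((m:ℝ) * s)) = JacobiAux.fm u m x := rfl
    rw [hfmdef]
    match m with
    | 0 => simp [JacobiAux.fm]
    | 1 =>
      rw [JacobiAux.sin_sq_integral]
      have hpine : Real.pi ≠ 0 := Real.pi_ne_zero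
      field_simp
      ring
    | (m' + 2) =>
      rw [hvanish (m' + 2) (by omega) x, JacobiAux.sin_mul_sin_orth (by omega)]
      ring
  have hk0 := JacobiAux.sine_complete hkcont hkorth
  rcases eq_or_lt_of_le ht.1 with h0 | h0
  · rw [← h0]
    simp [hb0 x]
  rcases eq_or_lt_of_le ht.2 with hp | hp
  · rw [hp]
    simp [hbpi x]
  · have hz := hk0 t ⟨h0, hp⟩
    have hz2 : u x t = 2 / Real.pi * JacobiAux.fm u 1 x * Real.sin t := by
      have hz' : u x t - 2 / Real.pi * JacobiAux.fm u 1 x * Real.sin t = 0 := by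
        simpa [hkdef] using hz
      linarith
    rw [hz2, hfm1 x]
    ring
end

section
/- Let w : ℝ × [0,π] → ℝ be twice continuously differentiable with ∂²w/∂x² + ∂²w/∂t² + w = 0 on the strip. Assume the functions x ↦ w(x,0) and x ↦ w(x,π) are integrable on ℝ, and that there exist continuous functions w_x^± : [0,π] → ℝ such that (∂w/∂x)(x,t) → w_x^+(t) uniformly in t as x → +∞ and (∂w/∂x)(x,t) → w_x^−(t) uniformly in t as x → −∞. Then ∫_{−∞}^{∞} ( w(x,π) + w(x,0) ) dx + ∫₀^{π} sin t · ( w_x^+(t) − w_x^−(t) ) dt = 0. -/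
open MeasureTheory Filter Topology

/-- The moment condition for well-behaved Jacobi fields on the parabolic catenoid:
if `w` is `C²` on the strip `ℝ × [0,π]`, satisfies `w_{xx} + w_{tt} + w = 0`, its
boundary values are integrable, and `∂w/∂x` converges uniformly in `t` to continuous
limits `w_x^±` as `x → ±∞`, then
`∫_ℝ (w(x,π) + w(x,0)) dx + ∫₀^π sin t (w_x^+(t) - w_x^-(t)) dt = 0`. -/
theorem moment_condition (w : ℝ → ℝ → ℝ)
    (hreg : ContDiffOn ℝ 2 (fun p : ℝ × ℝ => w p.1 p.2)
      (Set.univ ×ˢ Set.Icc 0 Real.pi))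
    (hpde : ∀ x : ℝ, ∀ t ∈ Set.Ioo (0 : ℝ) Real.pi,
      deriv (fun a => deriv (fun b => w b t) a) x
        + deriv (fun a => deriv (fun b => w x b) a) t
        + w x t = 0)
    (hint0 : Integrable (fun x : ℝ => w x 0))
    (hintpi : Integrable (fun x : ℝ => w x Real.pi))
    (wxp wxm : ℝ → ℝ)
    (hwxp : ContinuousOn wxp (Set.Icc 0 Real.pi))
    (hwxm : ContinuousOn wxm (Set.Icc 0 Real.pi))
    (hlimp : TendstoUniformlyOn (fun x t => deriv (fun a => w a t) x) wxp
      atTop (Set.Icc 0 Real.pi))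
    (hlimm : TendstoUniformlyOn (fun x t => deriv (fun a => w a t) x) wxm
      atBot (Set.Icc 0 Real.pi)) :
    (∫ x : ℝ, (w x Real.pi + w x 0))
      + (∫ t in (0 : ℝ)..Real.pi, Real.sin t * (wxp t - wxm t)) = 0 := by
  have pi_pos := Real.pi_pos
  set S : Set (ℝ × ℝ) := Set.univ ×ˢ Set.Icc 0 Real.pi with hSdef
  have hSu : UniqueDiffOn ℝ S := uniqueDiffOn_univ.prod (uniqueDiffOn_Icc pi_pos)
  set W : ℝ × ℝ → ℝ := fun p => w p.1 p.2 with hWdef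
  set f1 : ℝ × ℝ → (ℝ × ℝ →L[ℝ] ℝ) := fderivWithin ℝ W S with hf1def
  set f2 := fderivWithin ℝ f1 S with hf2def
  have hf1 : ContDiffOn ℝ 1 f1 S := hreg.fderivWithin hSu (by norm_num)
  have hf1c : ContinuousOn f1 S := hf1.continuousOn
  have hf2c : ContinuousOn f2 S := hf1.continuousOn_fderivWithin hSu le_rfl
  have hWc : ContinuousOn W S := hreg.continuousOn
  have hmem : ∀ (x t : ℝ), t ∈ Set.Icc 0 Real.pi → (x, t) ∈ S := by
    intro x t ht; exact ⟨Set.mem_univ x, ht⟩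
  have hdW : ∀ p ∈ S, HasFDerivWithinAt W (f1 p) S p := fun p hp =>
    ((hreg.differentiableOn (by norm_num)) p hp).hasFDerivWithinAt
  have hdf1 : ∀ p ∈ S, HasFDerivWithinAt f1 (f2 p) S p := fun p hp =>
    ((hf1.differentiableOn one_ne_zero) p hp).hasFDerivWithinAt
  -- x-slice derivatives
  have hwx : ∀ t ∈ Set.Icc (0:ℝ) Real.pi, ∀ x : ℝ,
      HasDerivAt (fun a => w a t) (f1 (x, t) (1, 0)) x := by
    intro t ht x
    have hline : HasDerivAt (fun a : ℝ => (a, t)) ((1:ℝ), (0:ℝ)) x :=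
      (hasDerivAt_id x).prodMk (hasDerivAt_const x t)
    have := (hdW (x, t) (hmem x t ht)).comp_hasDerivWithinAt x
      (hline.hasDerivWithinAt (s := Set.univ)) (fun a _ => hmem a t ht)
    rw [hasDerivWithinAt_univ] at this
    exact this
  have hderiv_eq : ∀ t ∈ Set.Icc (0:ℝ) Real.pi, ∀ x : ℝ,
      deriv (fun a => w a t) x = f1 (x, t) (1, 0) := fun t ht x => (hwx t ht x).deriv
  have hwxx : ∀ t ∈ Set.Icc (0:ℝ) Real.pi, ∀ x : ℝ,
      HasDerivAt (fun a => f1 (a, t) (1, 0)) (f2 (x, t) (1, 0) (1, 0)) x := by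
    intro t ht x
    have hline : HasDerivAt (fun a : ℝ => (a, t)) ((1:ℝ), (0:ℝ)) x :=
      (hasDerivAt_id x).prodMk (hasDerivAt_const x t)
    have h1 : HasDerivAt (fun a : ℝ => f1 (a, t)) (f2 (x, t) (1, 0)) x := by
      have := (hdf1 (x, t) (hmem x t ht)).comp_hasDerivWithinAt x
        (hline.hasDerivWithinAt (s := Set.univ)) (fun a _ => hmem a t ht)
      rw [hasDerivWithinAt_univ] at this
      exact this
    have := h1.clm_apply (hasDerivAt_const x ((1:ℝ), (0:ℝ)))
    simpa using this
  -- t-slice derivatives at interior points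
  have hSnhds : ∀ (x : ℝ), ∀ t ∈ Set.Ioo (0:ℝ) Real.pi, S ∈ 𝓝 (x, t) := by
    intro x t ht
    exact prod_mem_nhds Filter.univ_mem (Icc_mem_nhds ht.1 ht.2)
  have hwt : ∀ (x : ℝ), ∀ t ∈ Set.Ioo (0:ℝ) Real.pi,
      HasDerivAt (fun b => w x b) (f1 (x, t) (0, 1)) t := by
    intro x t ht
    have hF : HasFDerivAt W (f1 (x, t)) (x, t) :=
      (hdW (x, t) (hmem x t (Set.Ioo_subset_Icc_self ht))).hasFDerivAt (hSnhds x t ht)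
    have hline : HasDerivAt (fun b : ℝ => (x, b)) ((0:ℝ), (1:ℝ)) t :=
      (hasDerivAt_const t x).prodMk (hasDerivAt_id t)
    exact hF.comp_hasDerivAt t hline
  have hwtt : ∀ (x : ℝ), ∀ t ∈ Set.Ioo (0:ℝ) Real.pi,
      HasDerivAt (fun b => f1 (x, b) (0, 1)) (f2 (x, t) (0, 1) (0, 1)) t := by
    intro x t ht
    have hF : HasFDerivAt f1 (f2 (x, t)) (x, t) :=
      (hdf1 (x, t) (hmem x t (Set.Ioo_subset_Icc_self ht))).hasFDerivAt (hSnhds x t ht)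
    have hline : HasDerivAt (fun b : ℝ => (x, b)) ((0:ℝ), (1:ℝ)) t :=
      (hasDerivAt_const t x).prodMk (hasDerivAt_id t)
    have h1 : HasDerivAt (fun b : ℝ => f1 (x, b)) (f2 (x, t) (0, 1)) t :=
      hF.comp_hasDerivAt t hline
    have := h1.clm_apply (hasDerivAt_const t ((0:ℝ), (1:ℝ)))
    simpa using this
  -- PDE in terms of f2
  have hpde' : ∀ (x : ℝ), ∀ t ∈ Set.Ioo (0:ℝ) Real.pi,
      f2 (x, t) (1, 0) (1, 0) + f2 (x, t) (0, 1) (0, 1) + w x t = 0 := by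
    intro x t ht
    have ht' := Set.Ioo_subset_Icc_self ht
    have e1 : deriv (fun a => deriv (fun b => w b t) a) x = f2 (x, t) (1, 0) (1, 0) := by
      have hfe : (fun a => deriv (fun b => w b t) a) = fun a => f1 (a, t) (1, 0) :=
        funext fun a => hderiv_eq t ht' a
      rw [hfe]
      exact (hwxx t ht' x).deriv
    have e2 : deriv (fun a => deriv (fun b => w x b) a) t = f2 (x, t) (0, 1) (0, 1) := by
      have hev : (fun a => deriv (fun b => w x b) a) =ᶠ[𝓝 t] fun a => f1 (x, a) (0, 1) := by
        filter_upwards [Ioo_mem_nhds ht.1 ht.2] with a ha using (hwt x a ha).deriv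
      rw [hev.deriv_eq]
      exact (hwtt x t ht).deriv
    have := hpde x t ht
    rw [e1, e2] at this
    exact this
  -- Part (A): for each x, ∫ t in 0..π, sin t * wxx = -(w x π + w x 0)
  have hA : ∀ x : ℝ, (∫ t in (0:ℝ)..Real.pi, Real.sin t * f2 (x, t) (1, 0) (1, 0))
      = -(w x Real.pi + w x 0) := by
    intro x
    set g : ℝ → ℝ := fun t => Real.sin t * f1 (x, t) (0, 1) - Real.cos t * w x t with hgdef
    have hlinecont : Continuous (fun t : ℝ => ((x, t) : ℝ × ℝ)) := by fun_prop
    have hmapsto : Set.MapsTo (fun t : ℝ => ((x, t) : ℝ × ℝ)) (Set.Icc 0 Real.pi) S :=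
      fun t ht => hmem x t ht
    have hcont_f1 : ContinuousOn (fun t : ℝ => f1 (x, t) ((0:ℝ), (1:ℝ))) (Set.Icc 0 Real.pi) :=
      (hf1c.comp hlinecont.continuousOn hmapsto).clm_apply continuousOn_const
    have hcont_w : ContinuousOn (fun t : ℝ => w x t) (Set.Icc 0 Real.pi) :=
      hWc.comp hlinecont.continuousOn hmapsto
    have hgcont : ContinuousOn g (Set.Icc 0 Real.pi) :=
      ((Real.continuous_sin.continuousOn).mul hcont_f1).sub
        ((Real.continuous_cos.continuousOn).mul hcont_w)
    have hgderiv : ∀ t ∈ Set.Ioo (0:ℝ) Real.pi,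
        HasDerivWithinAt g (-(Real.sin t * f2 (x, t) (1, 0) (1, 0))) (Set.Ioi t) t := by
      intro t ht
      have h1 : HasDerivAt (fun t => Real.sin t * f1 (x, t) (0, 1))
          (Real.cos t * f1 (x, t) (0, 1) + Real.sin t * f2 (x, t) (0, 1) (0, 1)) t :=
        (Real.hasDerivAt_sin t).mul (hwtt x t ht)
      have h2 : HasDerivAt (fun t => Real.cos t * w x t)
          (-Real.sin t * w x t + Real.cos t * f1 (x, t) (0, 1)) t :=
        (Real.hasDerivAt_cos t).mul (hwt x t ht)
      have h3 := h1.sub h2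
      have heq : Real.cos t * f1 (x, t) (0, 1) + Real.sin t * f2 (x, t) (0, 1) (0, 1)
          - (-Real.sin t * w x t + Real.cos t * f1 (x, t) (0, 1))
          = -(Real.sin t * f2 (x, t) (1, 0) (1, 0)) := by
        have hQ : f2 (x, t) (0, 1) (0, 1) = -(f2 (x, t) (1, 0) (1, 0)) - w x t := by
          have := hpde' x t ht; linarith
        rw [hQ]; ring
      rw [heq] at h3
      exact h3.hasDerivWithinAt
    have hint : IntervalIntegrable (fun t => -(Real.sin t * f2 (x, t) (1, 0) (1, 0)))
        volume 0 Real.pi := by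
      apply ContinuousOn.intervalIntegrable
      rw [Set.uIcc_of_le pi_pos.le]
      have hcont_f2 : ContinuousOn (fun t : ℝ => f2 (x, t) ((1:ℝ), (0:ℝ)) ((1:ℝ), (0:ℝ)))
          (Set.Icc 0 Real.pi) :=
        ((hf2c.comp hlinecont.continuousOn hmapsto).clm_apply continuousOn_const).clm_apply
          continuousOn_const
      exact ((Real.continuous_sin.continuousOn).mul hcont_f2).neg
    have key := intervalIntegral.integral_eq_sub_of_hasDeriv_right_of_le pi_pos.le
      hgcont hgderiv hint
    have hg0 : g 0 = -(w x 0) := by simp [hgdef]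
    have hgpi : g Real.pi = w x Real.pi := by simp [hgdef]
    rw [hg0, hgpi] at key
    have : (∫ t in (0:ℝ)..Real.pi, -(Real.sin t * f2 (x, t) (1, 0) (1, 0)))
        = -∫ t in (0:ℝ)..Real.pi, Real.sin t * f2 (x, t) (1, 0) (1, 0) :=
      intervalIntegral.integral_neg
    rw [this] at key
    linarith [key]
  -- Part (B): for each t ∈ Icc and r, ∫ x in -r..r, wxx = f1(r,t)(1,0) - f1(-r,t)(1,0)
  have hcontx_f2 : ∀ t ∈ Set.Icc (0:ℝ) Real.pi,
      Continuous (fun x : ℝ => f2 (x, t) ((1:ℝ), (0:ℝ)) ((1:ℝ), (0:ℝ))) := by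
    intro t ht
    have hlinecont : Continuous (fun x : ℝ => ((x, t) : ℝ × ℝ)) := by fun_prop
    have hmapsto : Set.MapsTo (fun x : ℝ => ((x, t) : ℝ × ℝ)) Set.univ S :=
      fun x _ => hmem x t ht
    have : ContinuousOn (fun x : ℝ => f2 (x, t) ((1:ℝ), (0:ℝ)) ((1:ℝ), (0:ℝ))) Set.univ :=
      ((hf2c.comp hlinecont.continuousOn hmapsto).clm_apply continuousOn_const).clm_apply
        continuousOn_const
    rwa [continuousOn_univ] at this
  have hB : ∀ t ∈ Set.Icc (0:ℝ) Real.pi, ∀ r : ℝ,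
      (∫ x in (-r)..r, f2 (x, t) (1, 0) (1, 0))
        = f1 (r, t) (1, 0) - f1 (-r, t) (1, 0) := by
    intro t ht r
    exact intervalIntegral.integral_eq_sub_of_hasDerivAt
      (fun x _ => hwxx t ht x) ((hcontx_f2 t ht).intervalIntegrable _ _)
  -- Fubini step: the key identity for r ≥ 0
  have hkey : ∀ r : ℝ, 0 ≤ r →
      (∫ x in (-r)..r, (w x Real.pi + w x 0))
        = -∫ t in (0:ℝ)..Real.pi,
            Real.sin t * (f1 (r, t) (1, 0) - f1 (-r, t) (1, 0)) := by
    intro r hr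
    have hrr : (-r : ℝ) ≤ r := by linarith
    have hΦc : ContinuousOn (fun p : ℝ × ℝ => Real.sin p.2 * f2 p (1, 0) (1, 0)) S :=
      ((Real.continuous_sin.comp continuous_snd).continuousOn).mul
        ((hf2c.clm_apply continuousOn_const).clm_apply continuousOn_const)
    have hKsub : (Set.Icc (-r) r ×ˢ Set.Icc (0:ℝ) Real.pi) ⊆ S := by
      intro p hp; exact ⟨Set.mem_univ _, hp.2⟩
    have hintK : IntegrableOn (fun p : ℝ × ℝ => Real.sin p.2 * f2 p (1, 0) (1, 0))
        (Set.Icc (-r) r ×ˢ Set.Icc (0:ℝ) Real.pi) volume :=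
      (hΦc.mono hKsub).integrableOn_compact (isCompact_Icc.prod isCompact_Icc)
    have hswap :
        (∫ x in Set.Ioc (-r) r, ∫ t in Set.Ioc (0:ℝ) Real.pi,
            Real.sin t * f2 (x, t) (1, 0) (1, 0))
          = ∫ t in Set.Ioc (0:ℝ) Real.pi, ∫ x in Set.Ioc (-r) r,
              Real.sin t * f2 (x, t) (1, 0) (1, 0) := by
      apply integral_integral_swap
      rw [Measure.prod_restrict]
      have hsub : (Set.Ioc (-r) r ×ˢ Set.Ioc (0:ℝ) Real.pi)
          ⊆ (Set.Icc (-r) r ×ˢ Set.Icc (0:ℝ) Real.pi) :=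
        Set.prod_mono Set.Ioc_subset_Icc_self Set.Ioc_subset_Icc_self
      exact hintK.mono_set hsub
    have h1 : (∫ x in (-r)..r, ∫ t in (0:ℝ)..Real.pi, Real.sin t * f2 (x, t) (1, 0) (1, 0))
        = ∫ t in (0:ℝ)..Real.pi, ∫ x in (-r)..r, Real.sin t * f2 (x, t) (1, 0) (1, 0) := by
      rw [intervalIntegral.integral_of_le hrr, intervalIntegral.integral_of_le pi_pos.le]
      simp_rw [intervalIntegral.integral_of_le hrr, intervalIntegral.integral_of_le pi_pos.le]
      exact hswap
    have h2 : (∫ t in (0:ℝ)..Real.pi, ∫ x in (-r)..r, Real.sin t * f2 (x, t) (1, 0) (1, 0))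
        = ∫ t in (0:ℝ)..Real.pi, Real.sin t * (f1 (r, t) (1, 0) - f1 (-r, t) (1, 0)) := by
      apply intervalIntegral.integral_congr
      intro t ht
      rw [Set.uIcc_of_le pi_pos.le] at ht
      dsimp only
      rw [intervalIntegral.integral_const_mul, hB t ht r]
    have h0 : (∫ x in (-r)..r, (w x Real.pi + w x 0))
        = ∫ x in (-r)..r, -(∫ t in (0:ℝ)..Real.pi, Real.sin t * f2 (x, t) (1, 0) (1, 0)) := by
      apply intervalIntegral.integral_congr
      intro x _
      dsimp only
      rw [hA x, neg_neg]
    rw [h0, intervalIntegral.integral_neg, h1, h2]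
  -- Limits
  have hcontt_f1 : ∀ r : ℝ,
      ContinuousOn (fun t : ℝ => f1 (r, t) ((1:ℝ), (0:ℝ))) (Set.Icc 0 Real.pi) := by
    intro r
    have hlinecont : Continuous (fun t : ℝ => ((r, t) : ℝ × ℝ)) := by fun_prop
    exact (hf1c.comp hlinecont.continuousOn (fun t ht => hmem r t ht)).clm_apply
      continuousOn_const
  set A := ∫ x : ℝ, (w x Real.pi + w x 0) with hAdef
  set B := ∫ t in (0:ℝ)..Real.pi, Real.sin t * (wxp t - wxm t) with hBdef
  have hL1 : Tendsto (fun r : ℝ => ∫ x in (-r)..r, (w x Real.pi + w x 0)) atTop (𝓝 A) :=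
    intervalIntegral_tendsto_integral (hintpi.add hint0) tendsto_neg_atTop_atBot tendsto_id
  have hL2 : Tendsto (fun r : ℝ => ∫ t in (0:ℝ)..Real.pi,
      Real.sin t * (f1 (r, t) (1, 0) - f1 (-r, t) (1, 0))) atTop (𝓝 B) := by
    apply intervalIntegral.tendsto_integral_filter_of_dominated_convergence
      (bound := fun t => |wxp t| + |wxm t| + 2)
    · refine Eventually.of_forall (fun r => ?_)
      rw [Set.uIoc_of_le pi_pos.le]
      have hc : ContinuousOn
          (fun t => Real.sin t * (f1 (r, t) (1, 0) - f1 (-r, t) (1, 0)))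
          (Set.Icc 0 Real.pi) :=
        (Real.continuous_sin.continuousOn).mul ((hcontt_f1 r).sub (hcontt_f1 (-r)))
      exact (hc.mono Set.Ioc_subset_Icc_self).aestronglyMeasurable measurableSet_Ioc
    · have hp1 := Metric.tendstoUniformlyOn_iff.mp hlimp 1 one_pos
      have hm1 := tendsto_neg_atTop_atBot.eventually (Metric.tendstoUniformlyOn_iff.mp hlimm 1 one_pos)
      filter_upwards [hp1, hm1] with r h1 h2
      refine Eventually.of_forall (fun t ht => ?_)
      rw [Set.uIoc_of_le pi_pos.le] at ht
      have htI := Set.Ioc_subset_Icc_self ht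
      have h1' := h1 t htI
      have h2' := h2 t htI
      rw [Real.dist_eq, hderiv_eq t htI r] at h1'
      rw [Real.dist_eq, hderiv_eq t htI (-r)] at h2'
      set a := f1 (r, t) ((1:ℝ), (0:ℝ))
      set b := f1 (-r, t) ((1:ℝ), (0:ℝ))
      have ha : |a| ≤ |wxp t| + 1 := by
        calc |a| = |wxp t + (a - wxp t)| := by ring_nf
          _ ≤ |wxp t| + |a - wxp t| := abs_add_le _ _
          _ ≤ |wxp t| + 1 := by
              rw [abs_sub_comm] at h1'; linarith
      have hb : |b| ≤ |wxm t| + 1 := by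
        calc |b| = |wxm t + (b - wxm t)| := by ring_nf
          _ ≤ |wxm t| + |b - wxm t| := abs_add_le _ _
          _ ≤ |wxm t| + 1 := by
              rw [abs_sub_comm] at h2'; linarith
      have hsin : |Real.sin t| ≤ 1 := abs_le.mpr ⟨Real.neg_one_le_sin t, Real.sin_le_one t⟩
      calc ‖Real.sin t * (a - b)‖ = |Real.sin t| * |a - b| := by
            rw [Real.norm_eq_abs, abs_mul]
        _ ≤ 1 * |a - b| := mul_le_mul_of_nonneg_right hsin (abs_nonneg _)
        _ = |a - b| := one_mul _
        _ ≤ |a| + |b| := by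
            have := abs_add_le a (-b); simpa [sub_eq_add_neg] using this
        _ ≤ (|wxp t| + 1) + (|wxm t| + 1) := add_le_add ha hb
        _ = |wxp t| + |wxm t| + 2 := by ring
    · apply ContinuousOn.intervalIntegrable
      rw [Set.uIcc_of_le pi_pos.le]
      exact (hwxp.abs.add hwxm.abs).add continuousOn_const
    · refine Eventually.of_forall (fun t ht => ?_)
      rw [Set.uIoc_of_le pi_pos.le] at ht
      have htI := Set.Ioc_subset_Icc_self ht
      have hp := hlimp.tendsto_at htI
      have hm := (hlimm.tendsto_at htI).comp tendsto_neg_atTop_atBot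
      have := Filter.Tendsto.const_mul (Real.sin t) (hp.sub hm)
      simp only [Function.comp] at this
      simp only [hderiv_eq t htI] at this
      exact this
  have heventually : (fun r : ℝ => ∫ x in (-r)..r, (w x Real.pi + w x 0))
      =ᶠ[atTop] (fun r : ℝ => -∫ t in (0:ℝ)..Real.pi,
        Real.sin t * (f1 (r, t) (1, 0) - f1 (-r, t) (1, 0))) := by
    filter_upwards [eventually_ge_atTop (0:ℝ)] with r hr using hkey r hr
  have hL1' : Tendsto (fun r : ℝ => -∫ t in (0:ℝ)..Real.pi,
      Real.sin t * (f1 (r, t) (1, 0) - f1 (-r, t) (1, 0))) atTop (𝓝 A) :=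
    hL1.congr' heventually
  have : A = -B := tendsto_nhds_unique hL1' hL2.neg
  linarith
end
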